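/- arXiv:1304.7384 — 6 statements merged into one kernel-verified Lean document; each statement's English description precedes it below -/
import Mathlib

section
/- Let X be a real Banach-Lie algebra whose norm satisfies ‖[u,v]‖ ≤ ‖u‖·‖v‖. Let α_n be the Maclaurin coefficients of the holomorphic function w ↦ w/(1 − e^w) on {|w| < 2π} (so α_n = −B_n/n!, B_n the Bernoulli numbers). Then for every z ∈ X with ‖z‖ < 2π, the series ∑_{n≥0} α_n (ad z)^n converges in the Banach algebra of continuous linear endomorphisms of X, and the continuous linear operator (1 − exp(ad z))/(ad z) := −∑_{n≥0} (ad z)^n/(n+1)! is invertible, with two-sided inverse ∑_{n≥0} α_n (ad z)^n. In particular, the open ball of radius 2π centered at 0 is contained in the set A = {z ∈ X : (1 − exp(ad z))/(ad z) is invertible}. -/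
open Real

attribute [local instance 10] LieRing.toAddCommGroup

lemma bernoulli_even_bound (k : ℕ) (hk : k ≠ 0) :
    |(bernoulli (2 * k) : ℝ)| / ((2 * k).factorial : ℝ) ≤ 2 * (π ^ 2 / 6) / (2 * π) ^ (2 * k) := by
  have h := hasSum_zeta_nat (k := k) hk
  set S : ℝ := (-1 : ℝ) ^ (k + 1) * (2 : ℝ) ^ (2 * k - 1) * π ^ (2 * k) *
      (bernoulli (2 * k) : ℝ) / ((2 * k).factorial : ℝ) with hS
  have hle : S ≤ π ^ 2 / 6 := by
    refine hasSum_le (fun n => ?_) h hasSum_zeta_two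
    rcases Nat.eq_zero_or_pos n with hn | hn
    · subst hn
      norm_num [zero_pow (by omega : 2 * k ≠ 0)]
    · have h1 : (1 : ℝ) ≤ (n : ℝ) := by exact_mod_cast hn
      have hp : (n : ℝ) ^ 2 ≤ (n : ℝ) ^ (2 * k) :=
        pow_le_pow_right₀ h1 (by omega)
      exact one_div_le_one_div_of_le (by positivity) hp
  have hnn : 0 ≤ S := h.nonneg fun n => by positivity
  have hD : (0 : ℝ) < (2 : ℝ) ^ (2 * k - 1) * π ^ (2 * k) := by positivity
  have habs : |(bernoulli (2 * k) : ℝ)| / ((2 * k).factorial : ℝ) =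
      S / ((2 : ℝ) ^ (2 * k - 1) * π ^ (2 * k)) := by
    rw [← abs_of_nonneg hnn, hS, abs_div, abs_mul, abs_mul, abs_mul]
    rw [abs_pow, abs_neg, abs_one, one_pow, one_mul, abs_of_nonneg (by positivity : (0:ℝ) ≤ (2:ℝ)^(2*k-1)),
      abs_of_nonneg (by positivity : (0:ℝ) ≤ π ^ (2*k)),
      abs_of_nonneg (by positivity : (0:ℝ) ≤ ((2*k).factorial : ℝ))]
    field_simp
  have h2D : (2 * π) ^ (2 * k) = 2 * ((2 : ℝ) ^ (2 * k - 1) * π ^ (2 * k)) := by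
    rw [mul_pow]
    have : (2 : ℝ) ^ (2 * k) = 2 * (2 : ℝ) ^ (2 * k - 1) := by
      rw [← pow_succ']
      congr 1
      omega
    rw [this]; ring
  rw [habs, h2D]
  rw [div_le_div_iff₀ hD (by positivity)]
  nlinarith [hD, hle, hnn]

set_option maxHeartbeats 1000000 in
set_option synthInstance.maxHeartbeats 400000 in
/-- Let `X` be a real Banach-Lie algebra whose norm satisfies
`‖⁅u,v⁆‖ ≤ ‖u‖·‖v‖`, and let `adL z : X →L[ℝ] X` be the continuous linear map
`c ↦ ⁅z, c⁆`.  Let `αₙ = -Bₙ/n!` be the Maclaurin coefficients of `w ↦ w/(1 - eʷ)`.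
Then for every `z` with `‖z‖ < 2π` the series `∑ αₙ (ad z)ⁿ` converges in the Banach
algebra of continuous linear endomorphisms of `X`, and the operator
`(1 - exp(ad z))/(ad z) = -∑ (ad z)ⁿ/(n+1)!` is invertible with two-sided inverse
`∑ αₙ (ad z)ⁿ`.  In particular the open ball of radius `2π` is contained in the set
`A = {z : (1 - exp(ad z))/(ad z) is invertible}`. -/
theorem ball_two_pi_subset_invertibility_domain
    {X : Type*} [NormedAddCommGroup X] [NormedSpace ℝ X] [CompleteSpace X]
    [LieRing X] [LieAlgebra ℝ X]
    (hsub : ∀ u v : X, ‖⁅u, v⁆‖ ≤ ‖u‖ * ‖v‖)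
    (adL : X → X →L[ℝ] X) (hadL : ∀ z c : X, adL z c = ⁅z, c⁆)
    (α : ℕ → ℝ) (hα : ∀ n : ℕ, α n = -((bernoulli n : ℝ) / (n.factorial : ℝ)))
    (z : X) (hz : ‖z‖ < 2 * π) :
    Summable (fun n : ℕ => α n • (adL z) ^ n) ∧
    Summable (fun n : ℕ => (((n + 1).factorial : ℝ))⁻¹ • (adL z) ^ n) ∧
    (∑' n : ℕ, α n • (adL z) ^ n) *
        (-(∑' n : ℕ, (((n + 1).factorial : ℝ))⁻¹ • (adL z) ^ n)) = 1 ∧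
    (-(∑' n : ℕ, (((n + 1).factorial : ℝ))⁻¹ • (adL z) ^ n)) *
        (∑' n : ℕ, α n • (adL z) ^ n) = 1 ∧
    IsUnit (-(∑' n : ℕ, (((n + 1).factorial : ℝ))⁻¹ • (adL z) ^ n)) := by
  set a : X →L[ℝ] X := adL z with ha
  have ha_norm : ‖a‖ ≤ ‖z‖ :=
    ContinuousLinearMap.opNorm_le_bound _ (norm_nonneg z) fun c => by
      rw [hadL]; exact hsub z c
  set r : ℝ := ‖a‖ with hrdef
  have h2π : (0 : ℝ) < 2 * π := by positivity
  have hr : r < 2 * π := lt_of_le_of_lt ha_norm hz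
  have hr0 : (0 : ℝ) ≤ r := norm_nonneg a
  have hpow : ∀ n : ℕ, ‖a ^ n‖ ≤ r ^ n := by
    intro n
    cases n with
    | zero => simp only [pow_zero]; exact ContinuousLinearMap.norm_id_le (𝕜 := ℝ) (E := X)
    | succ m => exact norm_pow_le' a (Nat.succ_pos m)
  -- geometric ratio
  set q : ℝ := r / (2 * π) with hq
  have hq0 : 0 ≤ q := by positivity
  have hq1 : q < 1 := (div_lt_one h2π).mpr hr
  -- f and g
  set f : ℕ → (X →L[ℝ] X) := fun n => α n • a ^ n with hf
  set g : ℕ → (X →L[ℝ] X) := fun n => (((n + 1).factorial : ℝ))⁻¹ • a ^ n with hg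
  -- bound for f
  have hαabs : ∀ n, |α n| = |(bernoulli n : ℝ)| / (n.factorial : ℝ) := by
    intro n
    rw [hα, abs_neg, abs_div, abs_of_nonneg (by positivity : (0:ℝ) ≤ (n.factorial : ℝ))]
  have hfb : ∀ n, ‖f n‖ ≤ 4 * q ^ n := by
    intro n
    have h1 : ‖f n‖ ≤ |α n| * r ^ n := by
      simp only [hf]
      calc ‖α n • a ^ n‖ = |α n| * ‖a ^ n‖ := by rw [norm_smul (α n) (a ^ n), Real.norm_eq_abs]
        _ ≤ |α n| * r ^ n := mul_le_mul_of_nonneg_left (hpow n) (abs_nonneg _)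
    refine h1.trans ?_
    rw [hαabs]
    have hqpow : ∀ m : ℕ, q ^ m = r ^ m / (2 * π) ^ m := fun m => div_pow r (2 * π) m
    rcases n with _ | _ | m
    · norm_num
    · rw [bernoulli_one, hqpow]
      have heq : 4 * (r ^ 1 / (2 * π) ^ 1) = 4 * r / (2 * π) := by ring
      rw [heq, le_div_iff₀ h2π]
      have hπ4 : π ≤ 4 := Real.pi_le_four
      have habs : |((-1/2 : ℚ) : ℝ)| = 1/2 := by norm_num
      rw [habs]
      have h1f : ((Nat.factorial 1 : ℕ) : ℝ) = 1 := by norm_num [Nat.factorial]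
      rw [h1f]
      nlinarith [Real.pi_pos, hr0]
    ·
      rcases Nat.even_or_odd (m + 2) with he | ho
      · obtain ⟨k, hk⟩ := he
        have hk' : m + 2 = 2 * k := by omega
        have hk0 : k ≠ 0 := by omega
        rw [hk']
        have hb := bernoulli_even_bound k hk0
        have : |(bernoulli (2*k) : ℝ)| / ((2*k).factorial : ℝ) * r ^ (2*k) ≤
            (2 * (π ^ 2 / 6) / (2 * π) ^ (2*k)) * r ^ (2*k) :=
          mul_le_mul_of_nonneg_right hb (by positivity)
        refine this.trans ?_
        rw [hqpow]
        have hπ4 : π ≤ 3.15 := le_of_lt Real.pi_lt_d2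
        have hπ0 : 0 < π := Real.pi_pos
        have h6 : 2 * (π ^ 2 / 6) ≤ 4 := by nlinarith
        calc 2 * (π ^ 2 / 6) / (2 * π) ^ (2*k) * r ^ (2*k)
            = 2 * (π ^ 2 / 6) * (r ^ (2*k) / (2 * π) ^ (2*k)) := by ring
          _ ≤ 4 * (r ^ (2*k) / (2 * π) ^ (2*k)) := by
              exact mul_le_mul_of_nonneg_right h6 (by positivity)
      · have hb0 : bernoulli (m + 2) = 0 := by
          rw [bernoulli_eq_bernoulli'_of_ne_one (by omega)]
          exact bernoulli'_eq_zero_of_odd ho (by omega)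
        rw [hb0]
        simp only [Rat.cast_zero, abs_zero, zero_div, zero_mul]
        positivity
  -- summability of f in norm
  have hgeo : Summable (fun n : ℕ => 4 * q ^ n) :=
    (summable_geometric_of_lt_one hq0 hq1).mul_left 4
  have hf_norm : Summable fun n => ‖f n‖ :=
    Summable.of_nonneg_of_le (fun n => norm_nonneg _) hfb hgeo
  have hf_sum : Summable f := hf_norm.of_norm
  -- bound for g
  have hgb : ∀ n, ‖g n‖ ≤ r ^ n / (n.factorial : ℝ) := by
    intro n
    simp only [hg]
    calc ‖(((n + 1).factorial : ℝ))⁻¹ • a ^ n‖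
        = (((n + 1).factorial : ℝ))⁻¹ * ‖a ^ n‖ := by
          rw [norm_smul ((((n + 1).factorial : ℝ))⁻¹) (a ^ n), Real.norm_eq_abs,
            abs_of_nonneg (by positivity : (0:ℝ) ≤ (((n + 1).factorial : ℝ))⁻¹)]
      _ ≤ ((n.factorial : ℝ))⁻¹ * r ^ n := by
          have h1 : (((n).factorial : ℝ)) ≤ (((n+1).factorial : ℝ)) := by
            exact_mod_cast Nat.factorial_le (Nat.le_succ n)
          have h2 : (((n + 1).factorial : ℝ))⁻¹ ≤ ((n.factorial : ℝ))⁻¹ :=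
            inv_anti₀ (by positivity) h1
          exact mul_le_mul h2 (hpow n) (norm_nonneg _) (by positivity)
      _ = r ^ n / (n.factorial : ℝ) := by rw [div_eq_inv_mul]
  have hg_norm : Summable fun n => ‖g n‖ :=
    Summable.of_nonneg_of_le (fun n => norm_nonneg _)
      hgb (Real.summable_pow_div_factorial r)
  have hg_sum : Summable g := hg_norm.of_norm
  -- the scalar coefficient identity
  have hc : ∀ n : ℕ, (∑ kl ∈ Finset.HasAntidiagonal.antidiagonal n,
      α kl.1 * (((kl.2 + 1).factorial : ℝ))⁻¹) = if n = 0 then -1 else 0 := by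
    intro n
    rw [Finset.Nat.sum_antidiagonal_eq_sum_range_succ_mk]
    have hterm : ∀ k ∈ Finset.range (n + 1),
        α k * (((n - k + 1).factorial : ℝ))⁻¹ =
          -((((n + 1).choose k : ℕ) : ℝ) * (bernoulli k : ℝ)) * (((n + 1).factorial : ℝ))⁻¹ := by
      intro k hk
      have hk' : k ≤ n := Nat.lt_succ_iff.mp (Finset.mem_range.mp hk)
      have hfact : (((n + 1).factorial : ℕ) : ℝ) =
          (((n + 1).choose k : ℕ) : ℝ) * ((k.factorial : ℕ) : ℝ) *
            (((n - k + 1).factorial : ℕ) : ℝ) := by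
        have h0 : (n + 1).choose k * k.factorial * (n + 1 - k).factorial =
            (n + 1).factorial := Nat.choose_mul_factorial_mul_factorial (by omega)
        have h1 : n + 1 - k = n - k + 1 := by omega
        rw [h1] at h0
        exact_mod_cast h0.symm
      rw [hα]
      have hkf : ((k.factorial : ℕ) : ℝ) ≠ 0 := by positivity
      have hnf : (((n + 1).factorial : ℕ) : ℝ) ≠ 0 := by positivity
      have hmf : (((n - k + 1).factorial : ℕ) : ℝ) ≠ 0 := by positivity
      field_simp
      linear_combination (-(bernoulli k : ℝ)) * hfact
    rw [Finset.sum_congr rfl hterm, ← Finset.sum_mul, Finset.sum_neg_distrib]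
    have hsb : (∑ k ∈ Finset.range (n + 1),
        (((n + 1).choose k : ℕ) : ℝ) * (bernoulli k : ℝ)) =
        if n = 0 then 1 else 0 := by
      have h2 := congrArg (fun x : ℚ => (x : ℝ)) (sum_bernoulli (n + 1))
      push_cast [apply_ite (fun x : ℚ => (x : ℝ))] at h2
      simpa using h2
    rw [hsb]
    rcases Nat.eq_zero_or_pos n with hn | hn
    · subst hn; norm_num
    · rw [if_neg (by omega : ¬ n = 0), if_neg (by omega : ¬ n = 0)]
      norm_num
  -- the Cauchy products
  have hprod1 : (∑' n, f n) * (∑' n, g n) = -1 := by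
    rw [tsum_mul_tsum_eq_tsum_sum_antidiagonal_of_summable_norm hf_norm hg_norm]
    have hinner : ∀ n : ℕ, (∑ kl ∈ Finset.HasAntidiagonal.antidiagonal n, f kl.1 * g kl.2) =
        (if n = 0 then (-1 : ℝ) else 0) • a ^ n := by
      intro n
      rw [← hc n, Finset.sum_smul]
      refine Finset.sum_congr rfl fun kl hkl => ?_
      have hkl' : kl.1 + kl.2 = n := Finset.HasAntidiagonal.mem_antidiagonal.mp hkl
      simp only [hf, hg]
      haveI : IsScalarTower ℝ (X →L[ℝ] X) (X →L[ℝ] X) := ⟨fun x y w => ContinuousLinearMap.ext fun v => rfl⟩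
      rw [smul_mul_smul_comm, ← pow_add, hkl']
    rw [tsum_congr hinner, tsum_eq_single 0 (fun n hn => by
      rw [if_neg hn, zero_smul])]
    simp
  have hprod2 : (∑' n, g n) * (∑' n, f n) = -1 := by
    rw [tsum_mul_tsum_eq_tsum_sum_antidiagonal_of_summable_norm hg_norm hf_norm]
    have hinner : ∀ n : ℕ, (∑ kl ∈ Finset.HasAntidiagonal.antidiagonal n, g kl.1 * f kl.2) =
        (if n = 0 then (-1 : ℝ) else 0) • a ^ n := by
      intro n
      rw [← hc n]
      have hswap := Finset.Nat.sum_antidiagonal_swap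
        (f := fun p : ℕ × ℕ => α p.2 * (((p.1 + 1).factorial : ℝ))⁻¹) (n := n)
      simp only [Prod.fst_swap, Prod.snd_swap] at hswap
      rw [hswap, Finset.sum_smul]
      refine Finset.sum_congr rfl fun kl hkl => ?_
      have hkl' : kl.1 + kl.2 = n := Finset.HasAntidiagonal.mem_antidiagonal.mp hkl
      simp only [hf, hg]
      haveI : IsScalarTower ℝ (X →L[ℝ] X) (X →L[ℝ] X) := ⟨fun x y w => ContinuousLinearMap.ext fun v => rfl⟩
      rw [smul_mul_smul_comm, ← pow_add, hkl', mul_comm]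
    rw [tsum_congr hinner, tsum_eq_single 0 (fun n hn => by
      rw [if_neg hn, zero_smul])]
    simp
  refine ⟨hf_sum, hg_sum, ?_, ?_, ?_⟩
  · rw [mul_neg, hprod1, neg_neg]
  · rw [neg_mul, hprod2, neg_neg]
  · exact ⟨⟨-(∑' n, g n), ∑' n, f n,
      by rw [neg_mul, hprod2, neg_neg], by rw [mul_neg, hprod1, neg_neg]⟩, rfl⟩
end

section
/- Let E be a real Banach space, T ∈ (0,∞], a < 0 < b, Ω := {(t,y) ∈ ℝ×E : |t| < T, ‖y‖ < b}, Ω̃ := (−T,T)×(a,b). Let f : Ω → E satisfy hypothesis (LC), and let g : Ω̃ → ℝ be continuous, locally Lipschitz in its second variable, non-decreasing in z on [0,b) for each fixed t ∈ [0,T), and satisfy the strict majorization ‖f(t,y)‖ < g(|t|,‖y‖) for every (t,y) ∈ Ω. Suppose 0 < c ≤ T, φ : [0,c) → E is differentiable with φ(0) = 0, ‖φ(t)‖ < b and φ'(t) = f(t,φ(t)), and ψ : [0,c) → ℝ is differentiable with ψ(0) = 0, ψ(t) ∈ (a,b) and ψ'(t) = g(t,ψ(t)). Then ‖φ(t)‖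 < ψ(t) for every t ∈ (0,c). -/
open Set Filter Topology

private lemma slope_compare_aux {E : Type*} [NormedAddCommGroup E] [NormedSpace ℝ E]
    {c : ℝ} {φ : ℝ → E} {ψ : ℝ → ℝ} {t₁ d : ℝ} {v : E}
    (ht₁0 : 0 ≤ t₁) (ht₁c : t₁ < c)
    (hψ : HasDerivWithinAt ψ d (Ico 0 c) t₁)
    (hφ : HasDerivWithinAt φ v (Ico 0 c) t₁)
    (hvd : ‖v‖ < d) :
    (∀ᶠ t in 𝓝[Ioo t₁ c] t₁, ‖φ t‖ - ‖φ t₁‖ < ψ t - ψ t₁) ∧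
    (∀ᶠ t in 𝓝[Ioo 0 t₁] t₁, ψ t - ψ t₁ < ‖φ t‖ - ‖φ t₁‖) := by
  have hsψ := hasDerivWithinAt_iff_tendsto_slope.1 hψ
  have hsφ := hasDerivWithinAt_iff_tendsto_slope.1 hφ
  have hn : Tendsto (fun t => ‖slope φ t₁ t‖) (𝓝[Ico 0 c \ {t₁}] t₁) (𝓝 ‖v‖) :=
    (continuous_norm.tendsto v).comp hsφ
  have hA : ∀ᶠ t in 𝓝[Ico 0 c \ {t₁}] t₁, ‖slope φ t₁ t‖ < slope ψ t₁ t :=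
    hn.eventually_lt hsψ hvd
  constructor
  · have hsub : Ioo t₁ c ⊆ Ico 0 c \ {t₁} := fun s hs =>
      ⟨⟨ht₁0.trans hs.1.le, hs.2⟩, ne_of_gt hs.1⟩
    filter_upwards [hA.filter_mono (nhdsWithin_mono t₁ hsub),
      eventually_mem_nhdsWithin] with t hlt ht
    have hst : (0:ℝ) < t - t₁ := sub_pos.2 ht.1
    have e1 : ψ t - ψ t₁ = (t - t₁) * slope ψ t₁ t := by
      rw [slope_def_field]; field_simp
    have e2 : ‖φ t - φ t₁‖ = (t - t₁) * ‖slope φ t₁ t‖ := by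
      rw [slope_def_module, norm_smul, Real.norm_eq_abs, abs_inv,
        abs_of_pos hst]
      field_simp
    have h2 : ‖φ t - φ t₁‖ < ψ t - ψ t₁ := by
      rw [e1, e2]; exact mul_lt_mul_of_pos_left hlt hst
    have := norm_sub_norm_le (φ t) (φ t₁)
    linarith
  · have hsub : Ioo 0 t₁ ⊆ Ico 0 c \ {t₁} := fun s hs =>
      ⟨⟨hs.1.le, hs.2.trans ht₁c⟩, ne_of_lt hs.2⟩
    filter_upwards [hA.filter_mono (nhdsWithin_mono t₁ hsub),
      eventually_mem_nhdsWithin] with t hlt ht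
    have hst : (0:ℝ) < t₁ - t := sub_pos.2 ht.2
    have hne : t - t₁ ≠ 0 := by linarith
    have e1 : ψ t₁ - ψ t = (t₁ - t) * slope ψ t₁ t := by
      rw [slope_def_field]; field_simp; ring
    have e2 : ‖φ t - φ t₁‖ = (t₁ - t) * ‖slope φ t₁ t‖ := by
      rw [slope_def_module, norm_smul, Real.norm_eq_abs, abs_inv,
        abs_of_neg (by linarith : t - t₁ < 0)]
      field_simp; ring
    have h2 : ‖φ t - φ t₁‖ < ψ t₁ - ψ t := by
      rw [e1, e2]; exact mul_lt_mul_of_pos_left hlt hst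
    have h3 := norm_sub_norm_le (φ t₁) (φ t)
    have h4 : ‖φ t₁ - φ t‖ = ‖φ t - φ t₁‖ := norm_sub_rev _ _
    linarith

/-- strict comparison lemma: if `f` satisfies (LC), `g` is continuous,
locally Lipschitz in `z`, non-decreasing in `z` on `[0,b)`, and *strictly* majorizes
`f` (i.e. `‖f(t,y)‖ < g(|t|,‖y‖)` on `Ω`), and if `φ`, `ψ` solve `φ' = f(t,φ)`,
`φ(0) = 0` and `ψ' = g(t,ψ)`, `ψ(0) = 0` on `[0,c)`, then `‖φ(t)‖ < ψ(t)` on `(0,c)`. -/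
theorem strict_norm_comparison_of_strict_majorization
    {E : Type*} [NormedAddCommGroup E] [NormedSpace ℝ E] [CompleteSpace E]
    (T : EReal) (hT : 0 < T) (a b : ℝ) (ha : a < 0) (hb : 0 < b)
    (f : ℝ → E → E) (g : ℝ → ℝ → ℝ)
    -- hypothesis (LC) for f :
    (hf_cont : ContinuousOn (fun p : ℝ × E => f p.1 p.2)
      {p : ℝ × E | ((|p.1| : ℝ) : EReal) < T ∧ ‖p.2‖ < b})
    (hf_lip : ∀ K : Set (ℝ × E), IsCompact K →
      K ⊆ {p : ℝ × E | ((|p.1| : ℝ) : EReal) < T ∧ ‖p.2‖ < b} →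
      ∃ C : ℝ, ∀ p ∈ K, ∀ q ∈ K, p.1 = q.1 →
        ‖f p.1 p.2 - f q.1 q.2‖ ≤ C * ‖p.2 - q.2‖)
    -- hypothesis (SMJ) for g w.r.t. f :
    (hg_cont : ContinuousOn (fun p : ℝ × ℝ => g p.1 p.2)
      {p : ℝ × ℝ | ((|p.1| : ℝ) : EReal) < T ∧ p.2 ∈ Ioo a b})
    (hg_lip : ∀ K : Set (ℝ × ℝ), IsCompact K →
      K ⊆ {p : ℝ × ℝ | ((|p.1| : ℝ) : EReal) < T ∧ p.2 ∈ Ioo a b} →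
      ∃ C : ℝ, ∀ p ∈ K, ∀ q ∈ K, p.1 = q.1 →
        |g p.1 p.2 - g q.1 q.2| ≤ C * |p.2 - q.2|)
    (hg_mono : ∀ t : ℝ, 0 ≤ t → ((t : ℝ) : EReal) < T →
      ∀ z z' : ℝ, 0 ≤ z → z ≤ z' → z' < b → g t z ≤ g t z')
    (hmaj : ∀ t : ℝ, ∀ y : E, ((|t| : ℝ) : EReal) < T → ‖y‖ < b →
      ‖f t y‖ < g |t| ‖y‖)
    -- the two solutions on [0, c) :
    (c : ℝ) (hc0 : 0 < c) (hcT : (c : EReal) ≤ T)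
    (φ : ℝ → E) (hφ0 : φ 0 = 0)
    (hφmem : ∀ t ∈ Ico (0 : ℝ) c, ‖φ t‖ < b)
    (hφdiff : ∀ t ∈ Ico (0 : ℝ) c,
      HasDerivWithinAt φ (f t (φ t)) (Ico (0 : ℝ) c) t)
    (ψ : ℝ → ℝ) (hψ0 : ψ 0 = 0)
    (hψmem : ∀ t ∈ Ico (0 : ℝ) c, ψ t ∈ Ioo a b)
    (hψdiff : ∀ t ∈ Ico (0 : ℝ) c,
      HasDerivWithinAt ψ (g t (ψ t)) (Ico (0 : ℝ) c) t) :
    ∀ t ∈ Ioo (0 : ℝ) c, ‖φ t‖ < ψ t := by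
  -- translate EReal bounds to a convenient form
  have habs : ∀ t : ℝ, 0 ≤ t → t < c → ((|t| : ℝ) : EReal) < T := by
    intro t ht0 htc
    rw [abs_of_nonneg ht0]
    exact lt_of_lt_of_le (EReal.coe_lt_coe_iff.2 htc) hcT
  -- continuity of h t = ψ t - ‖φ t‖ on [0,c)
  set h : ℝ → ℝ := fun t => ψ t - ‖φ t‖ with hh
  have hcont : ∀ t ∈ Ico (0:ℝ) c, ContinuousWithinAt h (Ico 0 c) t := fun t ht =>
    ((hψdiff t ht).continuousWithinAt).sub ((hφdiff t ht).continuousWithinAt.norm)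
  -- strict inequality near 0
  have h0mem : (0:ℝ) ∈ Ico (0:ℝ) c := ⟨le_refl _, hc0⟩
  have hvd0 : ‖f 0 (φ 0)‖ < g 0 (ψ 0) := by
    have := hmaj 0 (0:E) (by simpa using habs 0 le_rfl hc0) (by simpa using hb)
    simpa [hφ0, hψ0] using this
  have hstep0 := (slope_compare_aux le_rfl hc0 (hψdiff 0 h0mem) (hφdiff 0 h0mem) hvd0).1
  have hnear0 : ∀ᶠ t in 𝓝[Ioo (0:ℝ) c] (0:ℝ), 0 < h t := by
    filter_upwards [hstep0] with t htt
    simp only [hh, hφ0, hψ0, norm_zero, sub_zero] at htt ⊢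
    linarith
  rw [eventually_nhdsWithin_iff, Metric.eventually_nhds_iff] at hnear0
  obtain ⟨ε, hε, hεP⟩ := hnear0
  -- by contradiction
  intro t₂ ht₂
  by_contra hle
  push_neg at hle
  have ht₂c : t₂ < c := ht₂.2
  have ht₂0 : 0 < t₂ := ht₂.1
  set m : ℝ := min (ε/2) t₂ with hm
  have hm0 : 0 < m := lt_min (by linarith) ht₂0
  set S : Set ℝ := {t ∈ Icc m t₂ | h t ≤ 0} with hS
  have hScomp : IsCompact S := by
    have hIsub : Icc m t₂ ⊆ Ico (0:ℝ) c := fun s hs =>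
      ⟨hm0.le.trans hs.1, lt_of_le_of_lt hs.2 ht₂c⟩
    have hclosed : IsClosed S := by
      have : S = Icc m t₂ ∩ h ⁻¹' Iic 0 := by
        ext s; simp [hS, Set.mem_sep_iff, Set.mem_inter_iff, Set.mem_preimage]
      rw [this]
      exact (ContinuousOn.preimage_isClosed_of_isClosed
        (fun s hs => (hcont s (hIsub hs)).mono hIsub) isClosed_Icc isClosed_Iic)
    exact isCompact_Icc.of_isClosed_subset hclosed (fun s hs => hs.1)
  have hSne : S.Nonempty := ⟨t₂, ⟨⟨min_le_right _ _, le_refl _⟩, by simp [hh]; linarith⟩⟩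
  have ht₀mem := hScomp.sInf_mem hSne
  set t₀ := sInf S with ht₀
  have ht₀Icc : t₀ ∈ Icc m t₂ := ht₀mem.1
  have ht₀le : h t₀ ≤ 0 := ht₀mem.2
  have ht₀0 : 0 < t₀ := lt_of_lt_of_le hm0 ht₀Icc.1
  have ht₀c : t₀ < c := lt_of_le_of_lt ht₀Icc.2 ht₂c
  have ht₀Ico : t₀ ∈ Ico (0:ℝ) c := ⟨ht₀0.le, ht₀c⟩
  -- strict positivity of h on (0, t₀)
  have hpos : ∀ s ∈ Ioo (0:ℝ) t₀, 0 < h s := by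
    intro s hs
    rcases lt_or_ge s m with hsm | hms
    · have hsε : dist s 0 < ε := by
        rw [Real.dist_eq, sub_zero, abs_of_pos hs.1]
        calc s < m := hsm
          _ ≤ ε/2 := min_le_left _ _
          _ < ε := by linarith
      exact hεP hsε ⟨hs.1, lt_trans (hs.2.trans_le ht₀Icc.2) ht₂c⟩
    · by_contra hcon
      push_neg at hcon
      have : s ∈ S := ⟨⟨hms, hs.2.le.trans ht₀Icc.2⟩, hcon⟩
      exact absurd (csInf_le hScomp.bddBelow this) (not_le.2 hs.2)
  -- NeBot of 𝓝[Ioo 0 t₀] t₀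
  have hclos : t₀ ∈ closure (Ioo (0:ℝ) t₀) := by
    rw [closure_Ioo ht₀0.ne]
    exact ⟨ht₀0.le, le_refl _⟩
  haveI hNB : (𝓝[Ioo (0:ℝ) t₀] t₀).NeBot := mem_closure_iff_nhdsWithin_neBot.1 hclos
  -- h t₀ ≥ 0 from left limit
  have hsub : Ioo (0:ℝ) t₀ ⊆ Ico 0 c := fun s hs => ⟨hs.1.le, hs.2.trans ht₀c⟩
  have htend : Tendsto h (𝓝[Ioo (0:ℝ) t₀] t₀) (𝓝 (h t₀)) :=
    (hcont t₀ ht₀Ico).mono_left (nhdsWithin_mono t₀ hsub)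
  have ht₀ge : 0 ≤ h t₀ :=
    ge_of_tendsto htend (eventually_mem_nhdsWithin.mono fun s hs => (hpos s hs).le)
  have heq : ψ t₀ = ‖φ t₀‖ := by
    simp only [hh] at ht₀le ht₀ge; linarith
  -- apply the key lemma at t₀ (left part) to get a contradiction
  have hvd : ‖f t₀ (φ t₀)‖ < g t₀ (ψ t₀) := by
    have := hmaj t₀ (φ t₀) (habs t₀ ht₀0.le ht₀c) (hφmem t₀ ht₀Ico)
    rwa [abs_of_nonneg ht₀0.le, ← heq] at this
  have hstep := (slope_compare_aux ht₀0.le ht₀c (hψdiff t₀ ht₀Ico) (hφdiff t₀ ht₀Ico) hvd).2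
  have hneg : ∀ᶠ t in 𝓝[Ioo (0:ℝ) t₀] t₀, h t < 0 := by
    filter_upwards [hstep] with t htt
    simp only [hh]
    have : ψ t₀ - ‖φ t₀‖ = 0 := by rw [heq]; ring
    linarith
  obtain ⟨s, hs1, hs2⟩ := (hneg.and eventually_mem_nhdsWithin).exists
  exact absurd (hpos s hs2) (not_lt.2 hs1.le)
end

section
/- Let E be a real Banach space, T ∈ (0,∞], a < 0 < b, Ω := {(t,y) ∈ ℝ×E : |t| < T, ‖y‖ < b}, Ω̃ := (−T,T)×(a,b). Let f : Ω → E satisfy hypothesis (LC) and let g : Ω̃ → ℝ satisfy hypothesis (MJ) with respect to f. Suppose 0 < c ≤ T, φ : [0,c) → E is differentiable with φ(0) = 0, ‖φ(t)‖ < b and φ'(t) = f(t,φ(t)), and ψ : [0,c) → ℝ is differentiable with ψ(0) = 0, ψ(t) ∈ (a,b) and ψ'(t) = g(t,ψ(t)). Then ‖φ(t)‖ ≤ ψ(t) for every t ∈ [0,c); in particular ψ(t) ≥ 0 on [0,c). -/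
open Set

/-- non-strict comparison lemma: if `f` satisfies (LC) and `g` satisfies
hypothesis (MJ) w.r.t. `f`, and if `φ`, `ψ` solve `φ' = f(t,φ)`, `φ(0) = 0` and
`ψ' = g(t,ψ)`, `ψ(0) = 0` on `[0,c)`, then `‖φ(t)‖ ≤ ψ(t)` on `[0,c)`;
in particular `ψ(t) ≥ 0` on `[0,c)`. -/
theorem norm_comparison_of_majorization
    {E : Type*} [NormedAddCommGroup E] [NormedSpace ℝ E] [CompleteSpace E]
    (T : EReal) (hT : 0 < T) (a b : ℝ) (ha : a < 0) (hb : 0 < b)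
    (f : ℝ → E → E) (g : ℝ → ℝ → ℝ)
    -- hypothesis (LC) for f :
    (hf_cont : ContinuousOn (fun p : ℝ × E => f p.1 p.2)
      {p : ℝ × E | ((|p.1| : ℝ) : EReal) < T ∧ ‖p.2‖ < b})
    (hf_lip : ∀ K : Set (ℝ × E), IsCompact K →
      K ⊆ {p : ℝ × E | ((|p.1| : ℝ) : EReal) < T ∧ ‖p.2‖ < b} →
      ∃ C : ℝ, ∀ p ∈ K, ∀ q ∈ K, p.1 = q.1 →
        ‖f p.1 p.2 - f q.1 q.2‖ ≤ C * ‖p.2 - q.2‖)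
    -- hypothesis (SMJ) for g w.r.t. f :
    (hg_cont : ContinuousOn (fun p : ℝ × ℝ => g p.1 p.2)
      {p : ℝ × ℝ | ((|p.1| : ℝ) : EReal) < T ∧ p.2 ∈ Ioo a b})
    (hg_lip : ∀ K : Set (ℝ × ℝ), IsCompact K →
      K ⊆ {p : ℝ × ℝ | ((|p.1| : ℝ) : EReal) < T ∧ p.2 ∈ Ioo a b} →
      ∃ C : ℝ, ∀ p ∈ K, ∀ q ∈ K, p.1 = q.1 →
        |g p.1 p.2 - g q.1 q.2| ≤ C * |p.2 - q.2|)
    (hg_mono : ∀ t : ℝ, 0 ≤ t → ((t : ℝ) : EReal) < T →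
      ∀ z z' : ℝ, 0 ≤ z → z ≤ z' → z' < b → g t z ≤ g t z')
    (hmaj : ∀ t : ℝ, ∀ y : E, ((|t| : ℝ) : EReal) < T → ‖y‖ < b →
      ‖f t y‖ ≤ g |t| ‖y‖)
    -- the two solutions on [0, c) :
    (c : ℝ) (hc0 : 0 < c) (hcT : (c : EReal) ≤ T)
    (φ : ℝ → E) (hφ0 : φ 0 = 0)
    (hφmem : ∀ t ∈ Ico (0 : ℝ) c, ‖φ t‖ < b)
    (hφdiff : ∀ t ∈ Ico (0 : ℝ) c,
      HasDerivWithinAt φ (f t (φ t)) (Ico (0 : ℝ) c) t)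
    (ψ : ℝ → ℝ) (hψ0 : ψ 0 = 0)
    (hψmem : ∀ t ∈ Ico (0 : ℝ) c, ψ t ∈ Ioo a b)
    (hψdiff : ∀ t ∈ Ico (0 : ℝ) c,
      HasDerivWithinAt ψ (g t (ψ t)) (Ico (0 : ℝ) c) t) :
    ∀ t ∈ Ico (0 : ℝ) c, ‖φ t‖ ≤ ψ t ∧ 0 ≤ ψ t := by
  intro t ht
  obtain ⟨ht0, htc⟩ := ht
  -- membership of `[0, t]` in `[0, c)`
  have hsub : Icc (0 : ℝ) t ⊆ Ico (0 : ℝ) c := fun x hx =>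
    ⟨hx.1, lt_of_le_of_lt hx.2 htc⟩
  -- continuity of φ and ψ on [0, t]
  have hφc : ContinuousOn φ (Icc (0 : ℝ) t) := fun x hx =>
    ((hφdiff x (hsub hx)).continuousWithinAt).mono hsub
  have hψc : ContinuousOn ψ (Icc (0 : ℝ) t) := fun x hx =>
    ((hψdiff x (hsub hx)).continuousWithinAt).mono hsub
  -- upgrade derivatives to `Ici x`
  have hmem : ∀ x ∈ Ico (0 : ℝ) c, Ico (0 : ℝ) c ∈ nhdsWithin x (Ici x) := by
    intro x hx
    have h1 : Iio c ∈ nhdsWithin x (Ici x) :=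
      mem_nhdsWithin_of_mem_nhds (Iio_mem_nhds hx.2)
    have h2 : Ici (0 : ℝ) ∈ nhdsWithin x (Ici x) :=
      Filter.mem_of_superset self_mem_nhdsWithin (Ici_subset_Ici.2 hx.1)
    have h3 : Ici (0 : ℝ) ∩ Iio c ∈ nhdsWithin x (Ici x) := Filter.inter_mem h2 h1
    rwa [Ici_inter_Iio] at h3
  have hφd : ∀ x ∈ Ico (0 : ℝ) t, HasDerivWithinAt φ (f x (φ x)) (Ici x) x := by
    intro x hx
    have hx' : x ∈ Ico (0 : ℝ) c := ⟨hx.1, lt_of_lt_of_le hx.2 (le_of_lt htc)⟩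
    exact (hφdiff x hx').mono_of_mem_nhdsWithin (hmem x hx')
  have hψd : ∀ x ∈ Ico (0 : ℝ) t, HasDerivWithinAt ψ (g x (ψ x)) (Ici x) x := by
    intro x hx
    have hx' : x ∈ Ico (0 : ℝ) c := ⟨hx.1, lt_of_lt_of_le hx.2 (le_of_lt htc)⟩
    exact (hψdiff x hx').mono_of_mem_nhdsWithin (hmem x hx')
  -- the compact set where we need a Lipschitz constant for g
  set K : Set (ℝ × ℝ) :=
    (fun x => (x, ψ x)) '' Icc (0 : ℝ) t ∪ (fun x => (x, ‖φ x‖)) '' Icc (0 : ℝ) t with hK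
  have hKc : IsCompact K := by
    apply IsCompact.union
    · exact isCompact_Icc.image_of_continuousOn
        ((continuousOn_id).prodMk hψc)
    · exact isCompact_Icc.image_of_continuousOn
        ((continuousOn_id).prodMk hφc.norm)
  have hxT : ∀ x ∈ Icc (0 : ℝ) t, ((|x| : ℝ) : EReal) < T := by
    intro x hx
    rw [abs_of_nonneg hx.1]
    calc ((x : ℝ) : EReal) < ((c : ℝ) : EReal) := by
          exact_mod_cast lt_of_le_of_lt hx.2 htc
      _ ≤ T := hcT
  have hKsub : K ⊆ {p : ℝ × ℝ | ((|p.1| : ℝ) : EReal) < T ∧ p.2 ∈ Ioo a b} := by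
    rintro p (⟨x, hx, rfl⟩ | ⟨x, hx, rfl⟩)
    · exact ⟨hxT x hx, hψmem x (hsub hx)⟩
    · refine ⟨hxT x hx, lt_of_lt_of_le ha (norm_nonneg _), hφmem x (hsub hx)⟩
  obtain ⟨C, hC⟩ := hg_lip K hKc hKsub
  set L : ℝ := |C| + 1 with hL
  have hCL : C < L := lt_of_le_of_lt (le_abs_self C) (by simp [hL])
  -- the key ε-perturbed estimate
  have key : ∀ ε : ℝ, 0 < ε → ‖φ t‖ ≤ ψ t + ε * Real.exp (L * t) := by
    intro ε hε
    have hB' : ∀ x, HasDerivAt (fun x => ε * Real.exp (L * x))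
        (ε * (L * Real.exp (L * x))) x := by
      intro x
      have h1 : HasDerivAt (fun x : ℝ => L * x) L x := by
        simpa using (hasDerivAt_id x).const_mul L
      have h2 : HasDerivAt (fun x : ℝ => Real.exp (L * x))
          (Real.exp (L * x) * L) x := h1.exp
      simpa [mul_comm] using h2.const_mul ε
    have main : ∀ ⦃x⦄, x ∈ Icc (0 : ℝ) t →
        ‖φ x‖ ≤ ψ x + ε * Real.exp (L * x) := by
      refine image_norm_le_of_norm_deriv_right_lt_deriv_boundary'
        (f' := fun x => f x (φ x)) hφc hφd
        (B := fun x => ψ x + ε * Real.exp (L * x))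
        (B' := fun x => g x (ψ x) + ε * (L * Real.exp (L * x))) ?_ ?_ ?_ ?_
      · -- initial condition
        show ‖φ 0‖ ≤ ψ 0 + ε * Real.exp (L * 0)
        rw [hφ0, hψ0]
        simp only [norm_zero, zero_add, mul_zero, Real.exp_zero, mul_one]
        positivity
      · exact hψc.add
          ((continuous_const.mul
            (Real.continuous_exp.comp (continuous_const.mul continuous_id))).continuousOn)
      · intro x hx
        exact (hψd x hx).add ((hB' x).hasDerivWithinAt)
      · -- the strict bound at equality points
        intro x hx heq
        have hx' : x ∈ Icc (0 : ℝ) t := ⟨hx.1, le_of_lt hx.2⟩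
        have hxIco : x ∈ Ico (0 : ℝ) c := hsub hx'
        have hφb : ‖φ x‖ < b := hφmem x hxIco
        have hT' : ((|x| : ℝ) : EReal) < T := hxT x hx'
        have h1 : ‖f x (φ x)‖ ≤ g x ‖φ x‖ := by
          have := hmaj x (φ x) hT' hφb
          rwa [abs_of_nonneg hx.1] at this
        have hp : ((x, ‖φ x‖) : ℝ × ℝ) ∈ K := Or.inr ⟨x, hx', rfl⟩
        have hq : ((x, ψ x) : ℝ × ℝ) ∈ K := Or.inl ⟨x, hx', rfl⟩
        have h2 : |g x ‖φ x‖ - g x (ψ x)| ≤ C * |‖φ x‖ - ψ x| :=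
          hC _ hp _ hq rfl
        have heq' : ‖φ x‖ = ψ x + ε * Real.exp (L * x) := heq
        have hdiff : ‖φ x‖ - ψ x = ε * Real.exp (L * x) := by linarith
        have hpos : 0 < ε * Real.exp (L * x) := mul_pos hε (Real.exp_pos _)
        have h3 : g x ‖φ x‖ - g x (ψ x) ≤ C * (ε * Real.exp (L * x)) := by
          calc g x ‖φ x‖ - g x (ψ x) ≤ |g x ‖φ x‖ - g x (ψ x)| := le_abs_self _
            _ ≤ C * |‖φ x‖ - ψ x| := h2
            _ = C * (ε * Real.exp (L * x)) := by
                rw [hdiff, abs_of_pos hpos]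
        have h4 : C * (ε * Real.exp (L * x)) < L * (ε * Real.exp (L * x)) :=
          mul_lt_mul_of_pos_right hCL hpos
        calc ‖f x (φ x)‖ ≤ g x ‖φ x‖ := h1
          _ ≤ g x (ψ x) + C * (ε * Real.exp (L * x)) := by linarith
          _ < g x (ψ x) + ε * (L * Real.exp (L * x)) := by
              have : C * (ε * Real.exp (L * x)) < ε * (L * Real.exp (L * x)) := by
                rw [show ε * (L * Real.exp (L * x)) = L * (ε * Real.exp (L * x)) by ring]
                exact h4
              linarith
    exact main (right_mem_Icc.2 ht0)
  -- let ε → 0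
  have hfin : ‖φ t‖ ≤ ψ t := by
    by_contra h
    push_neg at h
    set δ := ‖φ t‖ - ψ t with hδ
    have hδpos : 0 < δ := sub_pos.2 h
    have hexp : 0 < Real.exp (L * t) := Real.exp_pos _
    have hε : 0 < δ / (2 * Real.exp (L * t)) := by positivity
    have hkey := key _ hε
    have h2 : δ / (2 * Real.exp (L * t)) * Real.exp (L * t) = δ / 2 := by
      field_simp
    rw [h2] at hkey
    linarith
  exact ⟨hfin, le_trans (norm_nonneg _) hfin⟩
end

section
/- Let E be a real Banach space, T ∈ (0,∞], a < 0 < b, Ω := {(t,y) ∈ ℝ×E : |t| < T, ‖y‖ < b}, Ω̃ := (−T,T)×(a,b). Let f : Ω → E satisfy hypothesis (LC) and let g : Ω̃ → ℝ satisfy hypothesis (MJ) with respect to f. Let 0 < β̃ ≤ T and suppose ψ : [0,β̃) → ℝ is differentiable with ψ(0) = 0, ψ(t) ∈ [0,b) and ψ'(t) = g(t,ψ(t)) for all t ∈ [0,β̃). Then there exists a differentiable function φ : [0,β̃) → E with φ(0) = 0, ‖φ(t)‖ < b, φ'(t) = f(t,φ(t)) and ‖φ(t)‖ ≤ ψ(t)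 for every t ∈ [0,β̃). (Equivalently: the right-maximal solution of y' = f(t,y), y(0) = 0 is defined at least on [0,β̃), and is dominated in norm by ψ there.) -/
open Set Metric Filter Topology

set_option linter.unusedSectionVars false
set_option linter.unusedVariables false

section LifetimeComparisonAux

variable {E : Type*} [NormedAddCommGroup E] [NormedSpace ℝ E] [CompleteSpace E]
  {T : EReal} {a b : ℝ} {f : ℝ → E → E} {g : ℝ → ℝ → ℝ} {β' : ℝ} {ψ : ℝ → ℝ}

/-- A solution of `y' = f t y`, `y 0 = 0` on `[0,c]` dominated by `ψ`. -/
def SolOn (f : ℝ → E → E) (ψ : ℝ → ℝ) (c : ℝ) (φ : ℝ → E) : Prop :=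
  φ 0 = 0 ∧ ∀ t ∈ Icc (0:ℝ) c, HasDerivWithinAt φ (f t (φ t)) (Icc (0:ℝ) c) t ∧ ‖φ t‖ ≤ ψ t

noncomputable def selSol (f : ℝ → E → E) (ψ : ℝ → ℝ) (c : ℝ) : ℝ → E :=
  haveI : Nonempty (ℝ → E) := ⟨fun _ => 0⟩
  Classical.epsilon (fun φ => SolOn f ψ c φ)

lemma selSol_spec {c : ℝ} (h : ∃ φ, SolOn f ψ c φ) : SolOn f ψ c (selSol f ψ c) :=
  haveI : Nonempty (ℝ → E) := ⟨fun _ => 0⟩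
  Classical.epsilon_spec h

/-- Lipschitz on every compact subset of an open set implies local (cylindrical)
Lipschitz continuity in the second variable near every point. -/
lemma aux_locLip {E : Type*} [NormedAddCommGroup E] {Ω : Set (ℝ × E)} (hΩ : IsOpen Ω)
    (f : ℝ → E → E)
    (hf_lip : ∀ K : Set (ℝ × E), IsCompact K → K ⊆ Ω →
      ∃ C : ℝ, ∀ p ∈ K, ∀ q ∈ K, p.1 = q.1 →
        ‖f p.1 p.2 - f q.1 q.2‖ ≤ C * ‖p.2 - q.2‖)
    {t₀ : ℝ} {y₀ : E} (hp : (t₀, y₀) ∈ Ω) :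
    ∃ ε > (0:ℝ), (∀ t y, |t - t₀| ≤ ε → y ∈ closedBall y₀ ε → (t, y) ∈ Ω) ∧
      ∃ L : NNReal, ∀ t, |t - t₀| ≤ ε → LipschitzOnWith L (f t) (closedBall y₀ ε) := by
  obtain ⟨r, hr0, hr⟩ := Metric.isOpen_iff.1 hΩ _ hp
  have hcyl : ∀ ε : ℝ, ε ≤ r / 2 → ∀ t y, |t - t₀| ≤ ε → y ∈ closedBall y₀ ε → (t, y) ∈ Ω := by
    intro ε hε t y ht hy
    apply hr
    rw [mem_ball, Prod.dist_eq]
    have h1 : dist t t₀ ≤ ε := by rwa [Real.dist_eq]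
    have h2 : dist y y₀ ≤ ε := by rwa [mem_closedBall] at hy
    have : max (dist t t₀) (dist y y₀) ≤ ε := max_le h1 h2
    calc max (dist t t₀) (dist y y₀) ≤ ε := this
      _ ≤ r / 2 := hε
      _ < r := by linarith
  -- find a good n by contradiction
  have key : ∃ n : ℕ, ∀ t, |t - t₀| ≤ r / 2 / (n + 1) →
      LipschitzOnWith (n : NNReal) (f t) (closedBall y₀ (r / 2 / (n + 1))) := by
    by_contra hcon
    push_neg at hcon
    have hsel : ∀ n : ℕ, ∃ t y y', |t - t₀| ≤ r / 2 / (n + 1) ∧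
        y ∈ closedBall y₀ (r / 2 / (n + 1)) ∧ y' ∈ closedBall y₀ (r / 2 / (n + 1)) ∧
        (n : ℝ) * dist y y' < dist (f t y) (f t y') := by
      intro n
      obtain ⟨t, ht, hnl⟩ := hcon n
      rw [lipschitzOnWith_iff_dist_le_mul] at hnl
      push_neg at hnl
      obtain ⟨y, hy, y', hy', hd⟩ := hnl
      exact ⟨t, y, y', ht, hy, hy', by exact_mod_cast hd⟩
    choose t y y' ht hy hy' hd using hsel
    have hεn : Filter.Tendsto (fun n : ℕ => r / 2 / (n + 1)) Filter.atTop (nhds 0) := by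
      have := tendsto_one_div_add_atTop_nhds_zero_nat.const_mul (r / 2)
      simpa [div_eq_mul_inv, mul_comm, mul_assoc, mul_left_comm] using this
    have htt : Filter.Tendsto (fun n : ℕ => ((t n, y n) : ℝ × E)) Filter.atTop
        (nhds (t₀, y₀)) := by
      rw [Prod.tendsto_iff]
      constructor
      · rw [tendsto_iff_dist_tendsto_zero]
        refine squeeze_zero (fun n => dist_nonneg) (fun n => ?_) hεn
        rw [Real.dist_eq]; exact ht n
      · rw [tendsto_iff_dist_tendsto_zero]
        refine squeeze_zero (fun n => dist_nonneg) (fun n => ?_) hεn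
        exact hy n
    have htt' : Filter.Tendsto (fun n : ℕ => ((t n, y' n) : ℝ × E)) Filter.atTop
        (nhds (t₀, y₀)) := by
      rw [Prod.tendsto_iff]
      constructor
      · rw [tendsto_iff_dist_tendsto_zero]
        refine squeeze_zero (fun n => dist_nonneg) (fun n => ?_) hεn
        rw [Real.dist_eq]; exact ht n
      · rw [tendsto_iff_dist_tendsto_zero]
        refine squeeze_zero (fun n => dist_nonneg) (fun n => ?_) hεn
        exact hy' n
    have hKc : IsCompact ((insert ((t₀, y₀) : ℝ × E) (range fun n => (t n, y n))) ∪
        (insert ((t₀, y₀) : ℝ × E) (range fun n => (t n, y' n)))) :=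
      (htt.isCompact_insert_range).union (htt'.isCompact_insert_range)
    have hεle : ∀ n : ℕ, r / 2 / (n + 1) ≤ r / 2 := by
      intro n
      apply div_le_self (by linarith) (by exact_mod_cast Nat.succ_le_succ (Nat.zero_le n))
    have hKΩ : ((insert ((t₀, y₀) : ℝ × E) (range fun n => (t n, y n))) ∪
        (insert ((t₀, y₀) : ℝ × E) (range fun n => (t n, y' n)))) ⊆ Ω := by
      rintro p (hp' | hp') <;> rcases hp' with rfl | ⟨n, rfl⟩
      · exact hp
      · exact hcyl _ (hεle n) _ _ (ht n) (hy n)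
      · exact hp
      · exact hcyl _ (hεle n) _ _ (ht n) (hy' n)
    obtain ⟨C, hC⟩ := hf_lip _ hKc hKΩ
    set n := ⌈max C 0⌉₊ + 1 with hn
    have hCn : C < (n : ℝ) := by
      calc C ≤ max C 0 := le_max_left _ _
        _ ≤ ⌈max C 0⌉₊ := Nat.le_ceil _
        _ < n := by exact_mod_cast Nat.lt_succ_self _
    have h1 := hC (t n, y n) (Or.inl (mem_insert_iff.2 (Or.inr ⟨n, rfl⟩)))
      (t n, y' n) (Or.inr (mem_insert_iff.2 (Or.inr ⟨n, rfl⟩))) rfl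
    simp only at h1
    have h2 := hd n
    rw [dist_eq_norm, dist_eq_norm] at h2
    by_cases hzero : y n = y' n
    · rw [hzero] at h2; simp at h2
    · have hpos : (0:ℝ) < ‖y n - y' n‖ := by
        rw [norm_pos_iff, sub_ne_zero]; exact hzero
      nlinarith
  obtain ⟨N, hN⟩ := key
  refine ⟨r / 2 / (N + 1), by positivity, ?_, ⟨(N : NNReal), hN⟩⟩
  intro t yy ht hyy
  exact hcyl _ (by
    apply div_le_self (by linarith) (by exact_mod_cast Nat.succ_le_succ (Nat.zero_le N))) _ _ ht hyy

lemma aux_open : IsOpen {p : ℝ × E | ((|p.1| : ℝ) : EReal) < T ∧ ‖p.2‖ < b} := by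
  have h1 : IsOpen {x : ℝ | ((x : ℝ) : EReal) < T} := by
    have h : {x : ℝ | ((x : ℝ) : EReal) < T} = ((↑) : ℝ → EReal) ⁻¹' (Iio T) := rfl
    rw [h]
    exact isOpen_Iio.preimage continuous_coe_real_ereal
  have h2 : IsOpen {p : ℝ × E | ((|p.1| : ℝ) : EReal) < T} :=
    h1.preimage (continuous_abs.comp continuous_fst)
  exact h2.inter (isOpen_lt (continuous_norm.comp continuous_snd) continuous_const)

lemma aux_comp (ha : a < 0) (hβ'T : (β' : EReal) ≤ T)
    (hg_lip : ∀ K : Set (ℝ × ℝ), IsCompact K →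
      K ⊆ {p : ℝ × ℝ | ((|p.1| : ℝ) : EReal) < T ∧ p.2 ∈ Ioo a b} →
      ∃ C : ℝ, ∀ p ∈ K, ∀ q ∈ K, p.1 = q.1 →
        |g p.1 p.2 - g q.1 q.2| ≤ C * |p.2 - q.2|)
    (hmaj : ∀ t : ℝ, ∀ y : E, ((|t| : ℝ) : EReal) < T → ‖y‖ < b →
      ‖f t y‖ ≤ g |t| ‖y‖)
    (hψmem : ∀ t ∈ Ico (0 : ℝ) β', ψ t ∈ Ico (0 : ℝ) b)
    (hψdiff : ∀ t ∈ Ico (0 : ℝ) β',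
      HasDerivWithinAt ψ (g t (ψ t)) (Ico (0 : ℝ) β') t)
    {σ c : ℝ} (hσ0 : 0 ≤ σ) (hσc : σ ≤ c) (hcβ : c < β') {φ : ℝ → E}
    (hφc : ContinuousOn φ (Icc σ c))
    (hφd : ∀ t ∈ Ico σ c, HasDerivWithinAt φ (f t (φ t)) (Ici t) t)
    (hφb : ∀ t ∈ Icc σ c, ‖φ t‖ < b) (hφσ : ‖φ σ‖ ≤ ψ σ) :
    ∀ t ∈ Icc σ c, ‖φ t‖ ≤ ψ t := by
  have hsub : Icc (0:ℝ) c ⊆ Ico 0 β' := fun x hx => ⟨hx.1, lt_of_le_of_lt hx.2 hcβ⟩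
  have hsub' : Icc σ c ⊆ Icc (0:ℝ) c := fun x hx => ⟨le_trans hσ0 hx.1, hx.2⟩
  have hψc : ContinuousOn ψ (Icc 0 c) := fun x hx =>
    ((hψdiff x (hsub hx)).continuousWithinAt).mono hsub
  have h0β : (0:ℝ) < β' := lt_of_le_of_lt (le_trans hσ0 hσc) hcβ
  have h0b : (0:ℝ) < b := lt_of_le_of_lt (hψmem 0 ⟨le_refl 0, h0β⟩).1
    (hψmem 0 ⟨le_refl 0, h0β⟩).2
  obtain ⟨tψ, htψ, hψmax⟩ := isCompact_Icc.exists_isMaxOn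
    (nonempty_Icc.2 (le_trans hσ0 hσc)) hψc
  set Mψ := ψ tψ with hMψdef
  have hMψb : Mψ < b := (hψmem tψ (hsub htψ)).2
  have hMψ0 : 0 ≤ Mψ := (hψmem tψ (hsub htψ)).1
  have hψle : ∀ x ∈ Icc (0:ℝ) c, ψ x ≤ Mψ := fun x hx => hψmax hx
  set ρ : ℝ := (Mψ + b) / 2 with hρdef
  have hρb : ρ < b := by rw [hρdef]; linarith
  have hMρ : Mψ < ρ := by rw [hρdef]; linarith
  have hρ0 : 0 ≤ ρ := by rw [hρdef]; linarith
  have hcT : ∀ x : ℝ, 0 ≤ x → x ≤ c → ((|x| : ℝ) : EReal) < T := by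
    intro x h0 hxc
    have hx : |x| < β' := by rw [abs_of_nonneg h0]; linarith
    exact lt_of_lt_of_le (EReal.coe_lt_coe_iff.2 hx) hβ'T
  obtain ⟨C, hC⟩ := hg_lip (Icc 0 c ×ˢ Icc 0 ρ) (isCompact_Icc.prod isCompact_Icc)
    (by rintro ⟨x, z⟩ ⟨hx, hz⟩
        exact ⟨hcT x hx.1 hx.2, ⟨lt_of_lt_of_le ha hz.1, lt_of_le_of_lt hz.2 hρb⟩⟩)
  set K : ℝ := max C 0 + 1 with hKdef
  have hCK : C < K := by rw [hKdef]; have := le_max_left C 0; linarith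
  have hK0 : 0 < K := by rw [hKdef]; have := le_max_right C 0; linarith
  have hCK' : C ≤ K - 1 := by rw [hKdef]; have := le_max_left C 0; linarith
  have main : ∀ ε : ℝ, 0 < ε → ε * Real.exp (K * c) ≤ ρ - Mψ →
      ∀ t ∈ Icc σ c, ‖φ t‖ ≤ ψ t + ε * Real.exp (K * (t - σ)) := by
    intro ε hε hεle
    have hB' : ∀ x ∈ Ico σ c, HasDerivWithinAt (fun t => ψ t + ε * Real.exp (K * (t - σ)))
        (g x (ψ x) + ε * (Real.exp (K * (x - σ)) * K)) (Ici x) x := by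
      intro x hx
      have hx' : x ∈ Ico (0:ℝ) β' := ⟨le_trans hσ0 hx.1, lt_trans hx.2 hcβ⟩
      have hψx : HasDerivWithinAt ψ (g x (ψ x)) (Ici x) x := by
        refine (hψdiff x hx').mono_of_mem_nhdsWithin ?_
        refine mem_nhdsWithin.2 ⟨Iio β', isOpen_Iio, hx'.2, ?_⟩
        rintro z ⟨hz1, hz2⟩
        exact ⟨le_trans hx'.1 hz2, hz1⟩
      have h1 : HasDerivAt (fun t : ℝ => K * (t - σ)) K x := by
        simpa using ((hasDerivAt_id x).sub_const σ).const_mul K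
      have h2 := h1.exp
      have hexp : HasDerivAt (fun t : ℝ => ε * Real.exp (K * (t - σ)))
          (ε * (Real.exp (K * (x - σ)) * K)) x := by
        simpa [mul_comm, mul_assoc, mul_left_comm] using h2.const_mul ε
      exact hψx.add hexp.hasDerivWithinAt
    intro t ht
    have hBc : ContinuousOn (fun t => ψ t + ε * Real.exp (K * (t - σ))) (Icc σ c) := by
      refine (hψc.mono hsub').add (Continuous.continuousOn ?_)
      exact continuous_const.mul (Real.continuous_exp.comp
        (continuous_const.mul (continuous_id.sub continuous_const)))
    refine image_norm_le_of_norm_deriv_right_lt_deriv_boundary' hφc hφd ?_ hBc hB' ?_ ht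
    · have h1 : Real.exp (K * (σ - σ)) = 1 := by simp
      rw [h1]; linarith
    · intro x hx hcontact
      have hx0 : 0 ≤ x := le_trans hσ0 hx.1
      have hxc : x ≤ c := le_of_lt hx.2
      have hφxb : ‖φ x‖ < b := hφb x ⟨hx.1, hxc⟩
      have h1 : ‖f x (φ x)‖ ≤ g |x| ‖φ x‖ := hmaj x (φ x) (hcT x hx0 hxc) hφxb
      rw [abs_of_nonneg hx0] at h1
      set e := Real.exp (K * (x - σ)) with hedef
      have he0 : 0 < e := Real.exp_pos _
      have heK : e ≤ Real.exp (K * c) := by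
        apply Real.exp_le_exp.2
        have hxσ : x - σ ≤ c := by linarith
        nlinarith
      have hεe : ε * e ≤ ρ - Mψ := le_trans (by nlinarith) hεle
      have hψxm : ψ x ∈ Icc (0:ℝ) ρ :=
        ⟨(hψmem x ⟨hx0, lt_of_le_of_lt hxc hcβ⟩).1,
         le_trans (hψle x ⟨hx0, hxc⟩) (le_of_lt hMρ)⟩
      have hψεm : ψ x + ε * e ∈ Icc (0:ℝ) ρ := by
        constructor
        · nlinarith [hψxm.1]
        · have := hψle x ⟨hx0, hxc⟩; linarith
      have h2 := hC (x, ψ x + ε * e) ⟨⟨hx0, hxc⟩, hψεm⟩ (x, ψ x) ⟨⟨hx0, hxc⟩, hψxm⟩ rfl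
      simp only at h2
      have habs : |ψ x + ε * e - ψ x| = ε * e := by
        rw [add_sub_cancel_left, abs_of_pos (by positivity)]
      rw [habs] at h2
      rw [hcontact] at h1
      have h3 : g x (ψ x + ε * e) - g x (ψ x) ≤ C * (ε * e) :=
        le_trans (le_abs_self _) h2
      have hkey : C * (ε * e) < K * (ε * e) := mul_lt_mul_of_pos_right hCK (mul_pos hε he0)
      have hre : ε * (e * K) = K * (ε * e) := by ring
      calc ‖f x (φ x)‖ ≤ g x (ψ x + ε * e) := h1
        _ ≤ g x (ψ x) + C * (ε * e) := by linarith
        _ < g x (ψ x) + ε * (e * K) := by linarith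
  intro t ht
  by_contra hlt
  push_neg at hlt
  set Ec := Real.exp (K * c) with hEcdef
  have hEc : 0 < Ec := Real.exp_pos _
  set ε := min ((ρ - Mψ) / Ec) ((‖φ t‖ - ψ t) / (2 * Ec)) with hεdef
  have hε0 : 0 < ε := lt_min (div_pos (by linarith) hEc) (div_pos (by linarith) (by linarith))
  have h1 : ε * Ec ≤ ρ - Mψ := by
    have h := min_le_left ((ρ - Mψ) / Ec) ((‖φ t‖ - ψ t) / (2 * Ec))
    calc ε * Ec ≤ ((ρ - Mψ) / Ec) * Ec := mul_le_mul_of_nonneg_right h hEc.le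
      _ = ρ - Mψ := div_mul_cancel₀ _ (ne_of_gt hEc)
  have h2 := main ε hε0 h1 t ht
  have hexpt : Real.exp (K * (t - σ)) ≤ Ec := by
    apply Real.exp_le_exp.2
    have : t - σ ≤ c := by
      have := ht.2; have := ht.1; linarith
    nlinarith
  have h3 : ε * Real.exp (K * (t - σ)) ≤ ε * Ec := by nlinarith
  have h4 : ε * Ec ≤ (‖φ t‖ - ψ t) / 2 := by
    have h := min_le_right ((ρ - Mψ) / Ec) ((‖φ t‖ - ψ t) / (2 * Ec))
    have heq : ((‖φ t‖ - ψ t) / (2 * Ec)) * Ec = (‖φ t‖ - ψ t) / 2 := by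
      rw [div_mul_eq_mul_div, mul_comm (2:ℝ) Ec, ← div_div,
        mul_div_assoc, div_self (ne_of_gt hEc), mul_one]
    calc ε * Ec ≤ ((‖φ t‖ - ψ t) / (2 * Ec)) * Ec := mul_le_mul_of_nonneg_right h hEc.le
      _ = (‖φ t‖ - ψ t) / 2 := heq
  linarith

lemma aux_uniq (hb : 0 < b) (hβ'T : (β' : EReal) ≤ T)
    (hf_lip : ∀ K : Set (ℝ × E), IsCompact K →
      K ⊆ {p : ℝ × E | ((|p.1| : ℝ) : EReal) < T ∧ ‖p.2‖ < b} →
      ∃ C : ℝ, ∀ p ∈ K, ∀ q ∈ K, p.1 = q.1 →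
        ‖f p.1 p.2 - f q.1 q.2‖ ≤ C * ‖p.2 - q.2‖)
    (hψmem : ∀ t ∈ Ico (0 : ℝ) β', ψ t ∈ Ico (0 : ℝ) b)
    {c : ℝ} (hc : c ∈ Ico (0:ℝ) β') {φ₁ φ₂ : ℝ → E}
    (h₁ : SolOn f ψ c φ₁) (h₂ : SolOn f ψ c φ₂) :
    EqOn φ₁ φ₂ (Icc 0 c) := by
  obtain ⟨hc0, hcβ⟩ := hc
  set A := {t | t ∈ Icc (0:ℝ) c ∧ EqOn φ₁ φ₂ (Icc 0 t)} with hA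
  have h0A : (0:ℝ) ∈ A := by
    refine ⟨⟨le_refl 0, hc0⟩, ?_⟩
    intro s hs
    have hs0 : s = 0 := le_antisymm hs.2 hs.1
    rw [hs0, h₁.1, h₂.1]
  have hbdd : BddAbove A := ⟨c, fun x hx => hx.1.2⟩
  set τ := sSup A with hτdef
  have hτmem : τ ∈ Icc (0:ℝ) c := ⟨le_csSup hbdd h0A, csSup_le ⟨0, h0A⟩ (fun x hx => hx.1.2)⟩
  have hlt : ∀ s, 0 ≤ s → s < τ → φ₁ s = φ₂ s := by
    intro s hs0 hsτ
    obtain ⟨x, hxA, hsx⟩ := exists_lt_of_lt_csSup ⟨0, h0A⟩ hsτ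
    exact hxA.2 ⟨hs0, le_of_lt hsx⟩
  have hτeq : φ₁ τ = φ₂ τ := by
    rcases eq_or_lt_of_le hτmem.1 with h | h
    · rw [← h, h₁.1, h₂.1]
    · have hne : (𝓝[Ico (0:ℝ) τ] τ).NeBot := by
        rw [← mem_closure_iff_nhdsWithin_neBot, closure_Ico (ne_of_lt h)]
        exact ⟨le_of_lt h, le_refl τ⟩
      have hmono : 𝓝[Ico (0:ℝ) τ] τ ≤ 𝓝[Icc (0:ℝ) c] τ :=
        nhdsWithin_mono τ (fun x hx => ⟨hx.1, le_trans (le_of_lt hx.2) hτmem.2⟩)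
      have hc₁ : Filter.Tendsto φ₁ (𝓝[Ico (0:ℝ) τ] τ) (𝓝 (φ₁ τ)) :=
        ((h₁.2 τ hτmem).1.continuousWithinAt).mono_left hmono
      have hc₂ : Filter.Tendsto φ₂ (𝓝[Ico (0:ℝ) τ] τ) (𝓝 (φ₂ τ)) :=
        ((h₂.2 τ hτmem).1.continuousWithinAt).mono_left hmono
      have hc₁' : Filter.Tendsto φ₁ (𝓝[Ico (0:ℝ) τ] τ) (𝓝 (φ₂ τ)) := by
        refine hc₂.congr' ?_
        filter_upwards [self_mem_nhdsWithin] with x hx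
        exact (hlt x hx.1 hx.2).symm
      exact tendsto_nhds_unique hc₁ hc₁'
  have hτEq : EqOn φ₁ φ₂ (Icc 0 τ) := by
    intro s hs
    rcases eq_or_lt_of_le hs.2 with h | h
    · rw [h]; exact hτeq
    · exact hlt s hs.1 h
  rcases eq_or_lt_of_le hτmem.2 with hτc | hτc
  · rw [hτc] at hτEq; exact hτEq
  · exfalso
    have hτβ : τ < β' := lt_trans hτc hcβ
    have hyb : ‖φ₁ τ‖ < b :=
      lt_of_le_of_lt (h₁.2 τ hτmem).2 (hψmem τ ⟨hτmem.1, hτβ⟩).2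
    have hτT : ((|τ| : ℝ) : EReal) < T := by
      have : |τ| < β' := by rw [abs_of_nonneg hτmem.1]; exact hτβ
      exact lt_of_lt_of_le (EReal.coe_lt_coe_iff.2 this) hβ'T
    obtain ⟨ε, hε0, hcyl, L, hL⟩ := aux_locLip aux_open f hf_lip (⟨hτT, hyb⟩ :
      ((τ, φ₁ τ) : ℝ × E) ∈ {p : ℝ × E | ((|p.1| : ℝ) : EReal) < T ∧ ‖p.2‖ < b})
    have hcont₁ : ContinuousWithinAt φ₁ (Icc 0 c) τ := (h₁.2 τ hτmem).1.continuousWithinAt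
    have hcont₂ : ContinuousWithinAt φ₂ (Icc 0 c) τ := (h₂.2 τ hτmem).1.continuousWithinAt
    have hev : ∀ᶠ s in 𝓝[Icc (0:ℝ) c] τ,
        φ₁ s ∈ closedBall (φ₁ τ) ε ∧ φ₂ s ∈ closedBall (φ₁ τ) ε := by
      have e1 : ∀ᶠ s in 𝓝[Icc (0:ℝ) c] τ, φ₁ s ∈ ball (φ₁ τ) ε :=
        hcont₁ (ball_mem_nhds _ hε0)
      have e2 : ∀ᶠ s in 𝓝[Icc (0:ℝ) c] τ, φ₂ s ∈ ball (φ₂ τ) ε :=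
        hcont₂ (ball_mem_nhds _ hε0)
      filter_upwards [e1, e2] with s hs1 hs2
      refine ⟨ball_subset_closedBall hs1, ball_subset_closedBall ?_⟩
      rwa [hτeq]
    obtain ⟨u, huo, hτu, husub⟩ := mem_nhdsWithin.1 hev
    obtain ⟨δ₀, hδ₀, hballu⟩ := Metric.isOpen_iff.1 huo τ hτu
    set δ := min (min (δ₀/2) ε) (c - τ) with hδdef
    have hδ0 : 0 < δ := lt_min (lt_min (by linarith) hε0) (by linarith)
    have hδε : δ ≤ ε := le_trans (min_le_left _ _) (min_le_right _ _)
    have hδc : τ + δ ≤ c := by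
      have := min_le_right (min (δ₀/2) ε) (c - τ); linarith
    have hsubset : ∀ s ∈ Icc τ (τ + δ),
        φ₁ s ∈ closedBall (φ₁ τ) ε ∧ φ₂ s ∈ closedBall (φ₁ τ) ε := by
      intro s hs
      apply husub
      constructor
      · apply hballu
        rw [mem_ball, Real.dist_eq, abs_sub_lt_iff]
        have h1 := min_le_left (min (δ₀/2) ε) (c - τ)
        have h2 := min_le_left (δ₀/2) ε
        constructor <;> [skip; skip] <;> nlinarith [hs.1, hs.2]
      · exact ⟨le_trans hτmem.1 hs.1, le_trans hs.2 hδc⟩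
    set sb : ℝ → Set E := fun t =>
      if t ∈ Icc τ (τ + δ) then closedBall (φ₁ τ) ε else (∅ : Set E) with hsbdef
    have hlip : ∀ t, LipschitzOnWith L (f t) (sb t) := by
      intro t
      by_cases h : t ∈ Icc τ (τ + δ)
      · simp only [hsbdef, if_pos h]
        apply hL
        rw [abs_sub_le_iff]
        constructor <;> nlinarith [h.1, h.2]
      · simp only [hsbdef, if_neg h]
        exact lipschitzOnWith_empty _ _
    have hIci : ∀ t ∈ Ico τ (τ + δ), Icc (0:ℝ) c ∈ nhdsWithin t (Ici t) := by
      intro t ht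
      refine mem_nhdsWithin.2 ⟨Iio c, isOpen_Iio, lt_of_lt_of_le ht.2 hδc, ?_⟩
      rintro z ⟨hz1, hz2⟩
      exact ⟨le_trans (le_trans hτmem.1 ht.1) hz2, le_of_lt hz1⟩
    have hicc : Icc τ (τ + δ) ⊆ Icc (0:ℝ) c :=
      fun z hz => ⟨le_trans hτmem.1 hz.1, le_trans hz.2 hδc⟩
    have hico : ∀ t ∈ Ico τ (τ + δ), t ∈ Icc (0:ℝ) c :=
      fun t ht => hicc ⟨ht.1, le_of_lt ht.2⟩
    have hEq2 : EqOn φ₁ φ₂ (Icc τ (τ + δ)) := by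
      refine ODE_solution_unique_of_mem_Icc_right (fun t _ => hlip t)
        (fun z hz => ((h₁.2 z (hicc hz)).1.continuousWithinAt).mono hicc)
        (fun t ht => ((h₁.2 t (hico t ht)).1).mono_of_mem_nhdsWithin (hIci t ht))
        (fun t ht => by
          simp only [hsbdef, if_pos (mem_Icc.2 ⟨ht.1, le_of_lt ht.2⟩)]
          exact (hsubset t ⟨ht.1, le_of_lt ht.2⟩).1)
        (fun z hz => ((h₂.2 z (hicc hz)).1.continuousWithinAt).mono hicc)
        (fun t ht => ((h₂.2 t (hico t ht)).1).mono_of_mem_nhdsWithin (hIci t ht))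
        (fun t ht => by
          simp only [hsbdef, if_pos (mem_Icc.2 ⟨ht.1, le_of_lt ht.2⟩)]
          exact (hsubset t ⟨ht.1, le_of_lt ht.2⟩).2)
        hτeq
    have hAτδ : τ + δ ∈ A := by
      refine ⟨⟨by linarith [hτmem.1], hδc⟩, ?_⟩
      intro s hs
      rcases le_or_gt s τ with h | h
      · exact hτEq ⟨hs.1, h⟩
      · exact hEq2 ⟨le_of_lt h, hs.2⟩
    have : τ + δ ≤ τ := le_csSup hbdd hAτδ
    linarith

lemma aux_restrict {c c' : ℝ} (h0 : 0 ≤ c') (hcc : c' ≤ c) {φ : ℝ → E}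
    (h : SolOn f ψ c φ) : SolOn f ψ c' φ :=
  ⟨h.1, fun t ht =>
    ⟨((h.2 t ⟨ht.1, le_trans ht.2 hcc⟩).1).mono (Icc_subset_Icc_right hcc),
     (h.2 t ⟨ht.1, le_trans ht.2 hcc⟩).2⟩⟩

lemma aux_agree (hb : 0 < b) (hβ'T : (β' : EReal) ≤ T)
    (hf_lip : ∀ K : Set (ℝ × E), IsCompact K →
      K ⊆ {p : ℝ × E | ((|p.1| : ℝ) : EReal) < T ∧ ‖p.2‖ < b} →
      ∃ C : ℝ, ∀ p ∈ K, ∀ q ∈ K, p.1 = q.1 →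
        ‖f p.1 p.2 - f q.1 q.2‖ ≤ C * ‖p.2 - q.2‖)
    (hψmem : ∀ t ∈ Ico (0 : ℝ) β', ψ t ∈ Ico (0 : ℝ) b)
    {c₁ c₂ : ℝ} (h1 : c₁ ∈ Ico (0:ℝ) β') (h2 : c₂ ∈ Ico (0:ℝ) β')
    {φ₁ φ₂ : ℝ → E} (s1 : SolOn f ψ c₁ φ₁) (s2 : SolOn f ψ c₂ φ₂)
    {t : ℝ} (h0 : 0 ≤ t) (ht1 : t ≤ c₁) (ht2 : t ≤ c₂) : φ₁ t = φ₂ t := by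
  rcases le_total c₁ c₂ with h | h
  · exact aux_uniq hb hβ'T hf_lip hψmem h1 s1 (aux_restrict h1.1 h s2) ⟨h0, ht1⟩
  · exact (aux_uniq hb hβ'T hf_lip hψmem h2 s2 (aux_restrict h2.1 h s1) ⟨h0, ht2⟩).symm

/-- Canonical choice of a dominated solution on `[0,c]` (if one exists). -/
lemma aux_trivial_deriv {x : ℝ} {s : Set ℝ} (h : x ∉ closure s) (φ : ℝ → E) (d : E) :
    HasDerivWithinAt φ d s x :=
  hasDerivWithinAt_iff_hasFDerivWithinAt.2 (HasFDerivWithinAt.of_notMem_closure h)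

lemma aux_extend (ha : a < 0) (hb : 0 < b)
    (hf_cont : ContinuousOn (fun p : ℝ × E => f p.1 p.2)
      {p : ℝ × E | ((|p.1| : ℝ) : EReal) < T ∧ ‖p.2‖ < b})
    (hf_lip : ∀ K : Set (ℝ × E), IsCompact K →
      K ⊆ {p : ℝ × E | ((|p.1| : ℝ) : EReal) < T ∧ ‖p.2‖ < b} →
      ∃ C : ℝ, ∀ p ∈ K, ∀ q ∈ K, p.1 = q.1 →
        ‖f p.1 p.2 - f q.1 q.2‖ ≤ C * ‖p.2 - q.2‖)
    (hg_lip : ∀ K : Set (ℝ × ℝ), IsCompact K →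
      K ⊆ {p : ℝ × ℝ | ((|p.1| : ℝ) : EReal) < T ∧ p.2 ∈ Ioo a b} →
      ∃ C : ℝ, ∀ p ∈ K, ∀ q ∈ K, p.1 = q.1 →
        |g p.1 p.2 - g q.1 q.2| ≤ C * |p.2 - q.2|)
    (hmaj : ∀ t : ℝ, ∀ y : E, ((|t| : ℝ) : EReal) < T → ‖y‖ < b →
      ‖f t y‖ ≤ g |t| ‖y‖)
    (hβ'T : (β' : EReal) ≤ T)
    (hψmem : ∀ t ∈ Ico (0 : ℝ) β', ψ t ∈ Ico (0 : ℝ) b)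
    (hψdiff : ∀ t ∈ Ico (0 : ℝ) β',
      HasDerivWithinAt ψ (g t (ψ t)) (Ico (0 : ℝ) β') t)
    {c : ℝ} (hc : c ∈ Ico (0:ℝ) β') {φ : ℝ → E} (hφ : SolOn f ψ c φ) :
    ∃ c', c < c' ∧ c' ∈ Ico (0:ℝ) β' ∧ ∃ φ', SolOn f ψ c' φ' := by
  obtain ⟨hc0, hcβ⟩ := hc
  have hyψ : ‖φ c‖ ≤ ψ c := (hφ.2 c ⟨hc0, le_refl c⟩).2
  have hyb : ‖φ c‖ < b := lt_of_le_of_lt hyψ (hψmem c ⟨hc0, hcβ⟩).2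
  have hcT : ((|c| : ℝ) : EReal) < T := by
    have h1 : |c| < β' := by rw [abs_of_nonneg hc0]; exact hcβ
    exact lt_of_lt_of_le (EReal.coe_lt_coe_iff.2 h1) hβ'T
  obtain ⟨ε, hε0, hcyl, L, hL⟩ := aux_locLip aux_open f hf_lip (⟨hcT, hyb⟩ :
    ((c, φ c) : ℝ × E) ∈ {p : ℝ × E | ((|p.1| : ℝ) : EReal) < T ∧ ‖p.2‖ < b})
  -- continuity of t ↦ f t x on the time interval, for x in the ball
  have hcont' : ∀ x ∈ closedBall (φ c) ε,
      ContinuousOn (fun t => f t x) (Icc (c - ε) (c + ε)) := by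
    intro x hx
    have hmt : MapsTo (fun t => ((t, x) : ℝ × E)) (Icc (c - ε) (c + ε))
        {p : ℝ × E | ((|p.1| : ℝ) : EReal) < T ∧ ‖p.2‖ < b} := by
      intro t ht
      exact hcyl t x (abs_sub_le_iff.2 ⟨by linarith [ht.2], by linarith [ht.1]⟩) hx
    exact hf_cont.comp ((continuous_id.prodMk continuous_const).continuousOn) hmt
  -- bound on ‖f t (φ c)‖
  obtain ⟨tM, htM, hMmax⟩ := isCompact_Icc.exists_isMaxOn
    (nonempty_Icc.2 (by linarith)) ((hcont' (φ c) (mem_closedBall_self hε0.le)).norm)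
  set M := ‖f tM (φ c)‖ with hMdef
  have hM0 : 0 ≤ M := norm_nonneg _
  set Cb : ℝ := M + (L : ℝ) * ε with hCbdef
  have hL0 : (0:ℝ) ≤ (L : ℝ) := L.2
  have hCb0 : 0 ≤ Cb := by rw [hCbdef]; positivity
  set δ : ℝ := min (min ε ((β' - c)/2)) (ε / (2 * (Cb + 1))) with hδdef
  have hδ0 : 0 < δ := by
    apply lt_min (lt_min hε0 (by linarith))
    positivity
  have hδε : δ ≤ ε := le_trans (min_le_left _ _) (min_le_left _ _)
  have hδβ : c + δ < β' := by
    have h1 : δ ≤ (β' - c)/2 :=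
      le_trans (min_le_left (min ε ((β' - c)/2)) (ε / (2 * (Cb + 1))))
        (min_le_right ε ((β' - c)/2))
    linarith
  have hCbδ : Cb * δ ≤ ε / 2 := by
    have h1 : δ ≤ ε / (2 * (Cb + 1)) := min_le_right _ _
    have h2 : Cb * δ ≤ Cb * (ε / (2 * (Cb + 1))) := mul_le_mul_of_nonneg_left h1 hCb0
    have h3 : Cb * (ε / (2 * (Cb + 1))) ≤ ε / 2 := by
      rw [mul_div_assoc', div_le_div_iff₀ (by positivity) (by norm_num)]
      nlinarith
    linarith
  clear_value M Cb δ
  -- the bound Cb on the cylinder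
  have hnorm_le : ∀ t, t ∈ Icc c (c + δ) → ∀ x ∈ closedBall (φ c) ε, ‖f t x‖ ≤ Cb := by
    intro t ht x hx
    have htε : |t - c| ≤ ε := abs_sub_le_iff.2 ⟨by linarith [ht.2], by linarith [ht.1]⟩
    have h1 : dist (f t x) (f t (φ c)) ≤ (L : ℝ) * dist x (φ c) :=
      (hL t htε).dist_le_mul x hx (φ c) (mem_closedBall_self hε0.le)
    have h2 : dist x (φ c) ≤ ε := mem_closedBall.1 hx
    have h3 : ‖f t (φ c)‖ ≤ M := by
      rw [hMdef]; exact hMmax ⟨by linarith [ht.1], by linarith [ht.2]⟩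
    have h4 : ‖f t x‖ - ‖f t (φ c)‖ ≤ dist (f t x) (f t (φ c)) := by
      rw [dist_eq_norm]; exact norm_sub_norm_le _ _
    have h5 : (L : ℝ) * dist x (φ c) ≤ (L : ℝ) * ε := mul_le_mul_of_nonneg_left h2 hL0
    rw [hCbdef]; linarith
  -- Picard-Lindelöf
  have hPL : IsPicardLindelof f (tmin := c) (tmax := c + δ) ⟨c, ⟨le_refl c, by linarith⟩⟩
      (φ c) ⟨ε, hε0.le⟩ 0 ⟨Cb, hCb0⟩ L :=
    { lipschitzOnWith := fun t ht => hL t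
        (abs_sub_le_iff.2 ⟨by linarith [ht.2], by linarith [ht.1]⟩)
      continuousOn := fun x hx => (hcont' x hx).mono
        (fun z hz => ⟨by linarith [hz.1], by linarith [hz.2]⟩)
      norm_le := hnorm_le
      mul_max_le := by
        show Cb * max ((c + δ) - c) (c - c) ≤ ε - 0
        rw [sub_zero]
        have h1 : max ((c + δ) - c) (c - c) = δ := by
          rw [show (c + δ) - c = δ by ring, sub_self, max_eq_left hδ0.le]
        rw [h1]; linarith [hCbδ, hε0] }
  obtain ⟨θ, hθc, hθd⟩ := hPL.exists_eq_forall_mem_Icc_hasDerivWithinAt₀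
  replace hθc : θ c = φ c := hθc
  -- θ stays in the closed ball
  have hθs : ∀ t ∈ Icc c (c + δ), dist (θ t) (φ c) ≤ ε / 2 := by
    set B := {t | t ∈ Icc c (c + δ) ∧ ∀ s ∈ Icc c t, dist (θ s) (φ c) ≤ ε} with hBdef
    have hcB : c ∈ B := by
      refine ⟨⟨le_refl c, by linarith⟩, ?_⟩
      intro s hs
      have hsc : s = c := le_antisymm hs.2 hs.1
      rw [hsc, hθc]; simpa using hε0.le
    have hbddB : BddAbove B := ⟨c + δ, fun x hx => hx.1.2⟩
    set τ := sSup B with hτdef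
    have hτmem : τ ∈ Icc c (c + δ) :=
      ⟨le_csSup hbddB hcB, csSup_le ⟨c, hcB⟩ (fun x hx => hx.1.2)⟩
    have hip : ∀ s, c ≤ s → s < τ → dist (θ s) (φ c) ≤ ε := by
      intro s h1 h2
      obtain ⟨x, hxB, hsx⟩ := exists_lt_of_lt_csSup ⟨c, hcB⟩ h2
      exact hxB.2 s ⟨h1, le_of_lt hsx⟩
    have hiccτ : Icc c τ ⊆ Icc c (c + δ) := Icc_subset_Icc_right hτmem.2
    have hbd : ∀ s ∈ Ico c τ, ‖f s (θ s)‖ ≤ Cb := by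
      intro s hs
      exact hnorm_le s ⟨hs.1, le_trans (le_of_lt hs.2) hτmem.2⟩ (θ s)
        (mem_closedBall.2 (hip s hs.1 hs.2))
    have hMVT := norm_image_sub_le_of_norm_deriv_le_segment'
      (f' := fun s => f s (θ s)) (fun x hx => (hθd x (hiccτ hx)).mono hiccτ) hbd
    have hτhalf : ∀ s ∈ Icc c τ, dist (θ s) (φ c) ≤ ε / 2 := by
      intro s hs
      have h1 := hMVT s hs
      rw [hθc] at h1
      have h2 : Cb * (s - c) ≤ Cb * δ := by
        apply mul_le_mul_of_nonneg_left _ hCb0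
        have := hs.2; have := hτmem.2; linarith
      rw [dist_eq_norm]; linarith [hCbδ]
    rcases eq_or_lt_of_le hτmem.2 with heq | hlt2
    · intro t ht; exact hτhalf t ⟨ht.1, by rw [heq]; exact ht.2⟩
    · exfalso
      have hcontτ : ContinuousWithinAt θ (Icc c (c + δ)) τ :=
        (hθd τ hτmem).continuousWithinAt
      have hev : ∀ᶠ s in 𝓝[Icc c (c + δ)] τ, dist (θ s) (θ τ) < ε / 2 :=
        hcontτ (ball_mem_nhds _ (by linarith))
      obtain ⟨u, huo, hτu, husub⟩ := mem_nhdsWithin.1 hev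
      obtain ⟨r, hr0, hru⟩ := Metric.isOpen_iff.1 huo τ hτu
      set τ' := min (τ + r/2) (c + δ) with hτ'def
      have hττ' : τ < τ' := lt_min (by linarith) hlt2
      have hτ'mem : τ' ∈ Icc c (c + δ) :=
        ⟨le_trans hτmem.1 hττ'.le, min_le_right _ _⟩
      have hθτ : dist (θ τ) (φ c) ≤ ε / 2 := hτhalf τ ⟨hτmem.1, le_refl τ⟩
      have hτ'B : τ' ∈ B := by
        refine ⟨hτ'mem, ?_⟩
        intro s hs
        rcases le_or_gt s τ with h | h
        · exact le_trans (hτhalf s ⟨hs.1, h⟩) (by linarith)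
        · have hsu : s ∈ u := by
            apply hru
            rw [mem_ball, Real.dist_eq, abs_sub_lt_iff]
            have h1 : s ≤ τ' := hs.2
            have h2 : τ' ≤ τ + r/2 := min_le_left _ _
            constructor <;> linarith
          have h3 := husub ⟨hsu, ⟨hs.1, le_trans hs.2 hτ'mem.2⟩⟩
          calc dist (θ s) (φ c) ≤ dist (θ s) (θ τ) + dist (θ τ) (φ c) := dist_triangle _ _ _
            _ ≤ ε / 2 + ε / 2 := add_le_add (le_of_lt h3) hθτ
            _ = ε := by ring
      linarith [le_csSup hbddB hτ'B]
  have hθball : ∀ t ∈ Icc c (c + δ), θ t ∈ closedBall (φ c) ε :=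
    fun t ht => mem_closedBall.2 (le_trans (hθs t ht) (by linarith))
  have hθb : ∀ t ∈ Icc c (c + δ), ‖θ t‖ < b := by
    intro t ht
    exact (hcyl t (θ t) (abs_sub_le_iff.2 ⟨by linarith [ht.2], by linarith [ht.1]⟩)
      (hθball t ht)).2
  -- glue
  set φn : ℝ → E := fun t => if t ≤ c then φ t else θ t with hφndef
  have hφnφ : EqOn φn φ (Icc 0 c) := fun t ht => if_pos ht.2
  have hφnθ : EqOn φn θ (Icc c (c + δ)) := by
    intro t ht
    by_cases h : t ≤ c
    · have htc : t = c := le_antisymm h ht.1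
      simp only [hφndef, if_pos h]
      rw [htc, hθc]
    · simp only [hφndef, if_neg h]
  have hφn0 : φn 0 = 0 := by rw [hφnφ ⟨le_refl 0, hc0⟩]; exact hφ.1
  have hφnc : φn c = φ c := hφnφ ⟨hc0, le_refl c⟩
  -- bound on [c, c+δ] via comparison
  have hφncont : ContinuousOn φn (Icc c (c + δ)) :=
    ContinuousOn.congr (fun z hz => (hθd z hz).continuousWithinAt) hφnθ
  have hφnd' : ∀ t ∈ Ico c (c + δ), HasDerivWithinAt φn (f t (φn t)) (Ici t) t := by
    intro t ht
    have htm : t ∈ Icc c (c + δ) := ⟨ht.1, le_of_lt ht.2⟩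
    have h1 : HasDerivWithinAt θ (f t (θ t)) (Icc c (c + δ)) t := hθd t htm
    have h2 : HasDerivWithinAt φn (f t (θ t)) (Icc c (c + δ)) t :=
      h1.congr (fun z hz => hφnθ hz) (hφnθ htm)
    rw [← hφnθ htm] at h2
    exact h2.mono_of_mem_nhdsWithin (Icc_mem_nhdsGE_of_mem ⟨ht.1, ht.2⟩)
  have hφnb : ∀ t ∈ Icc c (c + δ), ‖φn t‖ < b := by
    intro t ht; rw [hφnθ ht]; exact hθb t ht
  have hcompb : ∀ t ∈ Icc c (c + δ), ‖φn t‖ ≤ ψ t := by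
    refine aux_comp ha hβ'T hg_lip hmaj hψmem hψdiff hc0 (by linarith) hδβ
      hφncont hφnd' hφnb ?_
    rw [hφnc]; exact hyψ
  -- SolOn
  refine ⟨c + δ, by linarith, ⟨by linarith, hδβ⟩, φn, hφn0, ?_⟩
  intro t ht
  have hunion : Icc (0:ℝ) c ∪ Icc c (c + δ) = Icc 0 (c + δ) :=
    Icc_union_Icc_eq_Icc hc0 (by linarith)
  constructor
  · -- derivative
    have hpart1 : HasDerivWithinAt φn (f t (φn t)) (Icc 0 c) t := by
      by_cases h : t ∈ Icc (0:ℝ) c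
      · have h1 := (hφ.2 t h).1
        have h2 : HasDerivWithinAt φn (f t (φ t)) (Icc 0 c) t :=
          h1.congr (fun z hz => hφnφ hz) (hφnφ h)
        rwa [← hφnφ h] at h2
      · apply aux_trivial_deriv
        rwa [closure_Icc]
    have hpart2 : HasDerivWithinAt φn (f t (φn t)) (Icc c (c + δ)) t := by
      by_cases h : t ∈ Icc c (c + δ)
      · have h1 := hθd t h
        have h2 : HasDerivWithinAt φn (f t (θ t)) (Icc c (c + δ)) t :=
          h1.congr (fun z hz => hφnθ hz) (hφnθ h)
        rwa [← hφnθ h] at h2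
      · apply aux_trivial_deriv
        rwa [closure_Icc]
    have := hpart1.union hpart2
    rwa [hunion] at this
  · -- bound
    rcases le_or_gt t c with h | h
    · rw [hφnφ ⟨ht.1, h⟩]; exact (hφ.2 t ⟨ht.1, h⟩).2
    · exact hcompb t ⟨le_of_lt h, ht.2⟩

lemma aux_glue (ha : a < 0) (hb : 0 < b)
    (hf_cont : ContinuousOn (fun p : ℝ × E => f p.1 p.2)
      {p : ℝ × E | ((|p.1| : ℝ) : EReal) < T ∧ ‖p.2‖ < b})
    (hf_lip : ∀ K : Set (ℝ × E), IsCompact K →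
      K ⊆ {p : ℝ × E | ((|p.1| : ℝ) : EReal) < T ∧ ‖p.2‖ < b} →
      ∃ C : ℝ, ∀ p ∈ K, ∀ q ∈ K, p.1 = q.1 →
        ‖f p.1 p.2 - f q.1 q.2‖ ≤ C * ‖p.2 - q.2‖)
    (hg_cont : ContinuousOn (fun p : ℝ × ℝ => g p.1 p.2)
      {p : ℝ × ℝ | ((|p.1| : ℝ) : EReal) < T ∧ p.2 ∈ Ioo a b})
    (hmaj : ∀ t : ℝ, ∀ y : E, ((|t| : ℝ) : EReal) < T → ‖y‖ < b →
      ‖f t y‖ ≤ g |t| ‖y‖)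
    (hβ'T : (β' : EReal) ≤ T)
    (hψmem : ∀ t ∈ Ico (0 : ℝ) β', ψ t ∈ Ico (0 : ℝ) b)
    (hψdiff : ∀ t ∈ Ico (0 : ℝ) β',
      HasDerivWithinAt ψ (g t (ψ t)) (Ico (0 : ℝ) β') t)
    {ω : ℝ} (hω0 : 0 < ω) (hωβ : ω < β')
    (hall : ∀ c ∈ Ico (0:ℝ) ω, ∃ φ, SolOn f ψ c φ) :
    ∃ φ, SolOn f ψ ω φ := by
  classical
  have hsubβ : Ico (0:ℝ) ω ⊆ Ico (0:ℝ) β' := fun x hx => ⟨hx.1, lt_trans hx.2 hωβ⟩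
  set Φ : ℝ → E := fun t => selSol f ψ ((t + ω)/2) t with hΦdef
  -- basic facts about Φ
  have hΦeq : ∀ c ∈ Ico (0:ℝ) ω, ∀ t, 0 ≤ t → t ≤ c → Φ t = selSol f ψ c t := by
    intro c hcI t h0 htc
    have h1 : (t + ω)/2 ∈ Ico (0:ℝ) ω := ⟨by linarith, by linarith [hcI.2]⟩
    have h2 : c < ω := hcI.2
    exact aux_agree hb hβ'T hf_lip hψmem (hsubβ h1) (hsubβ hcI)
      (selSol_spec (hall _ h1)) (selSol_spec (hall c hcI)) h0 (by linarith [hcI.2]) htc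
  have hΦsol : ∀ c ∈ Ico (0:ℝ) ω, ∀ t ∈ Icc (0:ℝ) c,
      HasDerivWithinAt Φ (f t (Φ t)) (Icc (0:ℝ) c) t ∧ ‖Φ t‖ ≤ ψ t := by
    intro c hcI t ht
    have hsol := selSol_spec (hall c hcI)
    have heq : ∀ z ∈ Icc (0:ℝ) c, Φ z = selSol f ψ c z :=
      fun z hz => hΦeq c hcI z hz.1 hz.2
    have h1 := (hsol.2 t ht).1.congr heq (heq t ht)
    rw [← heq t ht] at h1
    exact ⟨h1, by rw [heq t ht]; exact (hsol.2 t ht).2⟩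
  have hΦ0 : Φ 0 = 0 := by
    have h1 : (0:ℝ) + ω = ω := zero_add ω
    have h2 : ((0:ℝ) + ω)/2 ∈ Ico (0:ℝ) ω := ⟨by linarith, by linarith⟩
    exact (selSol_spec (hall _ h2)).1
  -- maximum of ψ on [0, ω]
  have hsubω : Icc (0:ℝ) ω ⊆ Ico (0:ℝ) β' := fun x hx => ⟨hx.1, lt_of_le_of_lt hx.2 hωβ⟩
  have hψcont : ContinuousOn ψ (Icc 0 ω) := fun x hx =>
    ((hψdiff x (hsubω hx)).continuousWithinAt).mono hsubω
  obtain ⟨tψ, htψ, hψmax⟩ := isCompact_Icc.exists_isMaxOn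
    (nonempty_Icc.2 hω0.le) hψcont
  set Mψ := ψ tψ with hMψdef
  have hMψb : Mψ < b := (hψmem tψ (hsubω htψ)).2
  have hMψ0 : 0 ≤ Mψ := (hψmem tψ (hsubω htψ)).1
  -- maximum of |g| on the compact box
  have hcT : ∀ x : ℝ, 0 ≤ x → x ≤ ω → ((|x| : ℝ) : EReal) < T := by
    intro x h0 hxc
    have h1 : |x| < β' := by rw [abs_of_nonneg h0]; linarith
    exact lt_of_lt_of_le (EReal.coe_lt_coe_iff.2 h1) hβ'T
  have hboxsub : Icc (0:ℝ) ω ×ˢ Icc (0:ℝ) Mψ ⊆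
      {p : ℝ × ℝ | ((|p.1| : ℝ) : EReal) < T ∧ p.2 ∈ Ioo a b} := by
    rintro ⟨x, z⟩ ⟨hx, hz⟩
    exact ⟨hcT x hx.1 hx.2, ⟨lt_of_lt_of_le ha hz.1, lt_of_le_of_lt hz.2 hMψb⟩⟩
  obtain ⟨pM, hpM, hgmax⟩ := (isCompact_Icc.prod isCompact_Icc).exists_isMaxOn
    (⟨((0:ℝ), (0:ℝ)), ⟨⟨le_refl 0, hω0.le⟩, ⟨le_refl 0, hMψ0⟩⟩⟩)
    ((hg_cont.mono hboxsub).norm)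
  set Mg := ‖g pM.1 pM.2‖ with hMgdef
  have hMg0 : 0 ≤ Mg := norm_nonneg _
  -- derivative bound for Φ
  have hΦbd : ∀ x, 0 ≤ x → x < ω → ‖f x (Φ x)‖ ≤ Mg := by
    intro x h0 hxω
    have hcx : (x + ω)/2 ∈ Ico (0:ℝ) ω := ⟨by linarith, by linarith⟩
    have hsol := hΦsol _ hcx x ⟨h0, by linarith⟩
    have hψx : ‖Φ x‖ ≤ ψ x := hsol.2
    have hψxM : ψ x ≤ Mψ := hψmax ⟨h0, by linarith⟩
    have hΦb : ‖Φ x‖ < b := lt_of_le_of_lt hψx (lt_of_le_of_lt hψxM hMψb)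
    have h1 : ‖f x (Φ x)‖ ≤ g |x| ‖Φ x‖ := hmaj x (Φ x) (hcT x h0 (by linarith)) hΦb
    rw [abs_of_nonneg h0] at h1
    have h2 : ‖g x ‖Φ x‖‖ ≤ Mg :=
      hgmax (⟨⟨h0, by linarith⟩, ⟨norm_nonneg _, le_trans hψx hψxM⟩⟩ :
        ((x, ‖Φ x‖) : ℝ × ℝ) ∈ Icc (0:ℝ) ω ×ˢ Icc (0:ℝ) Mψ)
    calc ‖f x (Φ x)‖ ≤ g x ‖Φ x‖ := h1
      _ ≤ ‖g x ‖Φ x‖‖ := le_abs_self _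
      _ ≤ Mg := h2
  -- Lipschitz property of Φ on [0, ω)
  have hΦlip : ∀ s t : ℝ, 0 ≤ s → s < ω → 0 ≤ t → t < ω →
      ‖Φ s - Φ t‖ ≤ Mg * ‖s - t‖ := by
    intro s t hs0 hsω ht0 htω
    set c := max s t with hcdef
    have hc0 : 0 ≤ c := le_trans hs0 (le_max_left _ _)
    have hcω : c < ω := max_lt hsω htω
    have hder : ∀ x ∈ Icc (0:ℝ) c, HasDerivWithinAt Φ (f x (Φ x)) (Icc (0:ℝ) c) x :=
      fun x hx => (hΦsol c ⟨hc0, hcω⟩ x hx).1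
    have hbound : ∀ x ∈ Icc (0:ℝ) c, ‖f x (Φ x)‖ ≤ Mg :=
      fun x hx => hΦbd x hx.1 (lt_of_le_of_lt hx.2 hcω)
    exact (convex_Icc (0:ℝ) c).norm_image_sub_le_of_norm_hasDerivWithin_le hder hbound
      ⟨ht0, le_max_right _ _⟩ ⟨hs0, le_max_left _ _⟩
  -- the limit at ω
  have hlne : (𝓝[Ioo (0:ℝ) ω] ω).NeBot := by
    rw [← mem_closure_iff_nhdsWithin_neBot, closure_Ioo (ne_of_lt hω0)]
    exact ⟨hω0.le, le_refl ω⟩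
  have hcauchy : Cauchy (Filter.map Φ (𝓝[Ioo (0:ℝ) ω] ω)) := by
    rw [Metric.cauchy_iff]
    refine ⟨Filter.map_neBot, ?_⟩
    intro ε hε
    set r := ε / (2 * (Mg + 1)) with hrdef
    have hr0 : 0 < r := by positivity
    refine ⟨Φ '' (Ioo (max 0 (ω - r)) ω), Filter.image_mem_map ?_, ?_⟩
    · refine mem_nhdsWithin.2 ⟨Ioi (max 0 (ω - r)), isOpen_Ioi, ?_, ?_⟩
      · simp only [mem_Ioi, max_lt_iff]
        exact ⟨hω0, by linarith⟩
      · rintro z ⟨hz1, hz2⟩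
        exact ⟨hz1, hz2.2⟩
    · rintro _ ⟨x, hx, rfl⟩ _ ⟨z, hz, rfl⟩
      have hx' : x ∈ Ioo (0:ℝ) ω :=
        ⟨lt_of_le_of_lt (le_max_left 0 (ω - r)) hx.1, hx.2⟩
      have hz' : z ∈ Ioo (0:ℝ) ω :=
        ⟨lt_of_le_of_lt (le_max_left 0 (ω - r)) hz.1, hz.2⟩
      have h1 := hΦlip x z hx'.1.le hx'.2 hz'.1.le hz'.2
      have h2 : |x - z| < r := by
        rw [abs_sub_lt_iff]
        have h3 : ω - r < x := lt_of_le_of_lt (le_max_right 0 (ω - r)) hx.1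
        have h4 : ω - r < z := lt_of_le_of_lt (le_max_right 0 (ω - r)) hz.1
        constructor <;> linarith [hx.2, hz.2]
      have h5 : Mg * |x - z| ≤ Mg * r := by
        apply mul_le_mul_of_nonneg_left h2.le hMg0
      have h6 : Mg * r < ε := by
        rw [hrdef]
        rw [mul_div_assoc', div_lt_iff₀ (by positivity)]
        nlinarith
      rw [dist_eq_norm]
      calc ‖Φ x - Φ z‖ ≤ Mg * ‖x - z‖ := h1
        _ = Mg * |x - z| := by rw [Real.norm_eq_abs]
        _ ≤ Mg * r := h5
        _ < ε := h6
  obtain ⟨yω, hyω⟩ := CompleteSpace.complete hcauchy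
  have hyωt : Filter.Tendsto Φ (𝓝[Ioo (0:ℝ) ω] ω) (𝓝 yω) := hyω
  -- the glued candidate
  set Φh : ℝ → E := fun t => if t < ω then Φ t else yω with hΦhdef
  have hΦhΦ : ∀ t, t < ω → Φh t = Φ t := fun t ht => if_pos ht
  have hΦhω : Φh ω = yω := if_neg (lt_irrefl ω)
  have hΦht : Filter.Tendsto Φh (𝓝[Ioo (0:ℝ) ω] ω) (𝓝 yω) := by
    refine hyωt.congr' ?_
    filter_upwards [self_mem_nhdsWithin] with x hx
    exact (hΦhΦ x hx.2).symm
  -- bound at ω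
  have hψωc : Filter.Tendsto ψ (𝓝[Ioo (0:ℝ) ω] ω) (𝓝 (ψ ω)) := by
    have h1 := (hψdiff ω ⟨hω0.le, hωβ⟩).continuousWithinAt
    exact h1.mono_left (nhdsWithin_mono ω (fun x hx => ⟨hx.1.le, lt_trans hx.2 hωβ⟩))
  have hψω : ‖yω‖ ≤ ψ ω := by
    refine le_of_tendsto_of_tendsto hyωt.norm hψωc ?_
    filter_upwards [self_mem_nhdsWithin] with x hx
    exact (hΦsol ((x + ω)/2) ⟨by linarith [hx.1], by linarith [hx.2]⟩ x
      ⟨hx.1.le, by linarith [hx.2]⟩).2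
  -- two-sided derivative of Φh inside (0, ω)
  have hΦhd : ∀ x ∈ Ioo (0:ℝ) ω, HasDerivAt Φh (f x (Φh x)) x := by
    intro x hx
    have hcx : (x + ω)/2 ∈ Ico (0:ℝ) ω := ⟨by linarith [hx.1], by linarith [hx.2]⟩
    have hxmem : x ∈ Icc (0:ℝ) ((x + ω)/2) := ⟨hx.1.le, by linarith [hx.2]⟩
    have hd1 : HasDerivWithinAt Φ (f x (Φ x)) (Icc 0 ((x + ω)/2)) x :=
      (hΦsol _ hcx x hxmem).1
    have hd2 : HasDerivAt Φ (f x (Φ x)) x :=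
      hd1.hasDerivAt (Icc_mem_nhds hx.1 (by linarith [hx.2]))
    have hev : Φh =ᶠ[𝓝 x] Φ := by
      filter_upwards [Iio_mem_nhds hx.2] with z hz
      exact hΦhΦ z hz
    have hd3 : HasDerivAt Φh (f x (Φ x)) x := hd2.congr_of_eventuallyEq hev
    rwa [hΦhΦ x hx.2]
  -- the endpoint derivative
  have hωΩ : ((ω, yω) : ℝ × E) ∈ {p : ℝ × E | ((|p.1| : ℝ) : EReal) < T ∧ ‖p.2‖ < b} :=
    ⟨hcT ω hω0.le (le_refl ω), lt_of_le_of_lt hψω (hψmem ω ⟨hω0.le, hωβ⟩).2⟩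
  have hfcω : ContinuousAt (fun p : ℝ × E => f p.1 p.2) (ω, yω) :=
    hf_cont.continuousAt (aux_open.mem_nhds hωΩ)
  have hIoomem : Ioo (0:ℝ) ω ∈ 𝓝[<] ω := Ioo_mem_nhdsLT_of_mem ⟨hω0, le_refl ω⟩
  have hlle : 𝓝[Iio ω] ω ≤ 𝓝[Ioo (0:ℝ) ω] ω :=
    le_inf nhdsWithin_le_nhds (le_principal_iff.2 hIoomem)
  have htendp : Filter.Tendsto (fun x => ((x, Φh x) : ℝ × E)) (𝓝[Ioo (0:ℝ) ω] ω)
      (𝓝 (ω, yω)) := by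
    exact (tendsto_id'.2 nhdsWithin_le_nhds).prodMk_nhds hΦht
  have htend : Filter.Tendsto (fun x => f x (Φh x)) (𝓝[<] ω) (𝓝 (f ω yω)) :=
    ((hfcω.tendsto.comp htendp).mono_left hlle)
  have hωderiv : HasDerivWithinAt Φh (f ω yω) (Iic ω) ω := by
    refine hasDerivWithinAt_Iic_of_tendsto_deriv (s := Ioo (0:ℝ) ω) ?_ ?_ hIoomem ?_
    · exact fun x hx => (hΦhd x hx).differentiableAt.differentiableWithinAt
    · rw [ContinuousWithinAt, hΦhω]; exact hΦht
    · refine htend.congr' ?_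
      filter_upwards [hIoomem] with x hx
      exact ((hΦhd x hx).deriv).symm
  -- assemble
  refine ⟨Φh, by rw [hΦhΦ 0 hω0]; exact hΦ0, ?_⟩
  intro t ht
  rcases lt_or_eq_of_le ht.2 with h | h
  · constructor
    · have hct : (t + ω)/2 ∈ Ico (0:ℝ) ω := ⟨by linarith [ht.1], by linarith⟩
      have hd1 : HasDerivWithinAt Φ (f t (Φ t)) (Icc 0 ((t + ω)/2)) t :=
        (hΦsol _ hct t ⟨ht.1, by linarith⟩).1
      have hd2 : HasDerivWithinAt Φh (f t (Φ t)) (Icc 0 ((t + ω)/2)) t := by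
        refine hd1.congr (fun z hz => hΦhΦ z (by linarith [hz.2])) (hΦhΦ t h)
      rw [← hΦhΦ t h] at hd2
      refine hd2.mono_of_mem_nhdsWithin ?_
      refine mem_nhdsWithin.2 ⟨Iio ((t + ω)/2), isOpen_Iio, by simp only [mem_Iio]; linarith, ?_⟩
      rintro z ⟨hz1, hz2⟩
      exact ⟨hz2.1, le_of_lt hz1⟩
    · rw [hΦhΦ t h]
      exact (hΦsol ((t + ω)/2) ⟨by linarith [ht.1], by linarith⟩ t
        ⟨ht.1, by linarith⟩).2
  · subst h
    constructor
    · have h1 : HasDerivWithinAt Φh (f t yω) (Icc 0 t) t :=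
        hωderiv.mono Icc_subset_Iic_self
      rwa [← hΦhω] at h1
    · rw [hΦhω]; exact hψω

end LifetimeComparisonAux

/-- Mérigot's comparison theorem, right-sided version with zero initial
datum:  `f` satisfies hypothesis (LC) on `Ω = {(t,y) : |t| < T, ‖y‖ < b}` and `g`
satisfies hypothesis (MJ) w.r.t. `f` on `Ω̃ = (-T,T)×(a,b)`.  If `ψ` solves
`ψ' = g(t,ψ)`, `ψ(0) = 0` on `[0,β̃)` with values in `[0,b)`, then there is a
solution `φ` of `y' = f(t,y)`, `y(0) = 0` on the whole of `[0,β̃)`, with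
`‖φ(t)‖ ≤ ψ(t)` there. -/
theorem lifetime_comparison_right_sided_zero
    {E : Type*} [NormedAddCommGroup E] [NormedSpace ℝ E] [CompleteSpace E]
    (T : EReal) (hT : 0 < T) (a b : ℝ) (ha : a < 0) (hb : 0 < b)
    (f : ℝ → E → E) (g : ℝ → ℝ → ℝ)
    -- hypothesis (LC) for f :
    (hf_cont : ContinuousOn (fun p : ℝ × E => f p.1 p.2)
      {p : ℝ × E | ((|p.1| : ℝ) : EReal) < T ∧ ‖p.2‖ < b})
    (hf_lip : ∀ K : Set (ℝ × E), IsCompact K →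
      K ⊆ {p : ℝ × E | ((|p.1| : ℝ) : EReal) < T ∧ ‖p.2‖ < b} →
      ∃ C : ℝ, ∀ p ∈ K, ∀ q ∈ K, p.1 = q.1 →
        ‖f p.1 p.2 - f q.1 q.2‖ ≤ C * ‖p.2 - q.2‖)
    -- hypothesis (MJ) for g w.r.t. f :
    (hg_cont : ContinuousOn (fun p : ℝ × ℝ => g p.1 p.2)
      {p : ℝ × ℝ | ((|p.1| : ℝ) : EReal) < T ∧ p.2 ∈ Ioo a b})
    (hg_lip : ∀ K : Set (ℝ × ℝ), IsCompact K →
      K ⊆ {p : ℝ × ℝ | ((|p.1| : ℝ) : EReal) < T ∧ p.2 ∈ Ioo a b} →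
      ∃ C : ℝ, ∀ p ∈ K, ∀ q ∈ K, p.1 = q.1 →
        |g p.1 p.2 - g q.1 q.2| ≤ C * |p.2 - q.2|)
    (hg_mono : ∀ t : ℝ, 0 ≤ t → ((t : ℝ) : EReal) < T →
      ∀ z z' : ℝ, 0 ≤ z → z ≤ z' → z' < b → g t z ≤ g t z')
    (hmaj : ∀ t : ℝ, ∀ y : E, ((|t| : ℝ) : EReal) < T → ‖y‖ < b →
      ‖f t y‖ ≤ g |t| ‖y‖)
    -- the initial datum and the majorizing solution ψ on [0, β̃) :
    (β' : ℝ) (hβ'0 : 0 < β') (hβ'T : (β' : EReal) ≤ T)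
    (ψ : ℝ → ℝ) (hψ0 : ψ 0 = 0)
    (hψmem : ∀ t ∈ Ico (0 : ℝ) β', ψ t ∈ Ico (0 : ℝ) b)
    (hψdiff : ∀ t ∈ Ico (0 : ℝ) β',
      HasDerivWithinAt ψ (g t (ψ t)) (Ico (0 : ℝ) β') t) :
    ∃ φ : ℝ → E, φ 0 = 0 ∧
      ∀ t ∈ Ico (0 : ℝ) β', ‖φ t‖ < b ∧
        HasDerivWithinAt φ (f t (φ t)) (Ico (0 : ℝ) β') t ∧
        ‖φ t‖ ≤ ψ t := by
  classical
  have h0Sol : ∃ φ : ℝ → E, SolOn f ψ 0 φ := by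
    refine ⟨fun _ => (0:E), rfl, ?_⟩
    intro t ht
    have ht0 : t = 0 := le_antisymm ht.2 ht.1
    subst ht0
    constructor
    · rw [show Icc (0:ℝ) 0 = {0} from Icc_self 0, hasDerivWithinAt_iff_tendsto_slope]
      simp
    · rw [hψ0]; simp
  set S := {c : ℝ | c ∈ Ico (0:ℝ) β' ∧ ∃ φ, SolOn f ψ c φ} with hSdef
  have h0S : (0:ℝ) ∈ S := ⟨⟨le_refl 0, hβ'0⟩, h0Sol⟩
  have hbddS : BddAbove S := ⟨β', fun x hx => hx.1.2.le⟩
  have hω0 : 0 ≤ sSup S := le_csSup hbddS h0S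
  have hωβ : sSup S ≤ β' := csSup_le ⟨0, h0S⟩ (fun x hx => hx.1.2.le)
  have hdown : ∀ c, 0 ≤ c → c < sSup S → ∃ φ, SolOn f ψ c φ := by
    intro c h0 hc
    obtain ⟨x, hxS, hcx⟩ := exists_lt_of_lt_csSup ⟨0, h0S⟩ hc
    obtain ⟨φ, hφ⟩ := hxS.2
    exact ⟨φ, aux_restrict h0 hcx.le hφ⟩
  have hsup : sSup S = β' := by
    by_contra hne
    have hlt : sSup S < β' := lt_of_le_of_ne hωβ hne
    have hωSol : ∃ φ, SolOn f ψ (sSup S) φ := by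
      rcases eq_or_lt_of_le hω0 with h | h
      · rw [← h]; exact h0Sol
      · exact aux_glue ha hb hf_cont hf_lip hg_cont hmaj hβ'T hψmem hψdiff h hlt
          (fun c hc => hdown c hc.1 hc.2)
    obtain ⟨φω, hφω⟩ := hωSol
    obtain ⟨c', hc'1, hc'2, hc'3⟩ := aux_extend ha hb hf_cont hf_lip hg_lip hmaj
      hβ'T hψmem hψdiff ⟨hω0, hlt⟩ hφω
    have := le_csSup hbddS (⟨hc'2, hc'3⟩ : c' ∈ S)
    linarith
  have hall : ∀ c ∈ Ico (0:ℝ) β', ∃ φ, SolOn f ψ c φ := by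
    intro c hc
    exact hdown c hc.1 (by rw [hsup]; exact hc.2)
  refine ⟨fun t => selSol f ψ ((t + β')/2) t, ?_, ?_⟩
  · have h2 : ((0:ℝ) + β')/2 ∈ Ico (0:ℝ) β' := ⟨by linarith, by linarith⟩
    exact (selSol_spec (hall _ h2)).1
  · intro t ht
    have hct : (t + β')/2 ∈ Ico (0:ℝ) β' := ⟨by linarith [ht.1], by linarith [ht.2]⟩
    have htle : t ≤ (t + β')/2 := by linarith [ht.2]
    have htlt : t < (t + β')/2 := by linarith [ht.2]
    have hsol := selSol_spec (hall _ hct)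
    have hb1 : ‖selSol f ψ ((t + β')/2) t‖ ≤ ψ t := (hsol.2 t ⟨ht.1, htle⟩).2
    have hb2 : ψ t < b := (hψmem t ht).2
    have heva : ∀ z ∈ Icc (0:ℝ) ((t + β')/2),
        (fun s => selSol f ψ ((s + β')/2) s) z = selSol f ψ ((t + β')/2) z := by
      intro z hz
      have hcz : (z + β')/2 ∈ Ico (0:ℝ) β' :=
        ⟨by linarith [hz.1], by linarith [hz.2, hct.2]⟩
      exact aux_agree hb hβ'T hf_lip hψmem hcz hct (selSol_spec (hall _ hcz)) hsol
        hz.1 (by linarith [hz.2, hct.2]) hz.2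
    have hd1 : HasDerivWithinAt (selSol f ψ ((t + β')/2))
        (f t (selSol f ψ ((t + β')/2) t)) (Icc 0 ((t + β')/2)) t :=
      (hsol.2 t ⟨ht.1, htle⟩).1
    have hd2 : HasDerivWithinAt (fun s => selSol f ψ ((s + β')/2) s)
        (f t (selSol f ψ ((t + β')/2) t)) (Icc 0 ((t + β')/2)) t :=
      hd1.congr heva (heva t ⟨ht.1, htle⟩)
    have hd3 : HasDerivWithinAt (fun s => selSol f ψ ((s + β')/2) s)
        (f t (selSol f ψ ((t + β')/2) t)) (Ico 0 β') t := by
      refine hd2.mono_of_mem_nhdsWithin ?_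
      refine mem_nhdsWithin.2 ⟨Iio ((t + β')/2), isOpen_Iio, htlt, ?_⟩
      rintro z ⟨hz1, hz2⟩
      exact ⟨hz2.1, le_of_lt hz1⟩
    exact ⟨lt_of_le_of_lt hb1 hb2, hd3, hb1⟩
end

section
/- Let E be a real Banach space, T ∈ (0,∞], a < 0 < b, Ω := {(t,y) ∈ ℝ×E : |t| < T, ‖y‖ < b}, Ω̃ := (−T,T)×(a,b). Let f : Ω → E satisfy hypothesis (LC) and let g : Ω̃ → ℝ satisfy hypothesis (MJ) with respect to f. Fix x ∈ E with ‖x‖ < b, let 0 < β̃ ≤ T, and suppose ψ : [0,β̃) → ℝ is differentiable with ψ(0) = ‖x‖, ψ(t) ∈ [0,b) and ψ'(t) = g(t,ψ(t)) for all t ∈ [0,β̃). Then there exists a differentiable function φ : [0,β̃) → E with φ(0) = x, ‖φ(t)‖ < b, φ'(t) = f(t,φ(t)) and ‖φ(t)‖ ≤ ψ(t) for every t ∈ [0,β̃). -/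
open Set

section AuxiliaryLemmas
open Set Metric

open Set Metric

section helpers

variable {F G : Type*} [NormedAddCommGroup F] [NormedAddCommGroup G]

/-- Lipschitz-on-compacts plus openness gives a uniform local Lipschitz estimate. -/
lemma loclip_of_compactLip {U : Set (ℝ × F)} (hU : IsOpen U) {v : ℝ → F → G}
    (hlip : ∀ K : Set (ℝ × F), IsCompact K → K ⊆ U →
      ∃ C : ℝ, ∀ p ∈ K, ∀ q ∈ K, p.1 = q.1 → ‖v p.1 p.2 - v q.1 q.2‖ ≤ C * ‖p.2 - q.2‖)
    {t₀ : ℝ} {x₀ : F} (h₀ : (t₀, x₀) ∈ U) :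
    ∃ r > 0, ∃ C ≥ (0:ℝ), (closedBall t₀ r ×ˢ closedBall x₀ r ⊆ U) ∧
      ∀ t ∈ closedBall t₀ r, ∀ y ∈ closedBall x₀ r, ∀ y' ∈ closedBall x₀ r,
        ‖v t y - v t y'‖ ≤ C * ‖y - y'‖ := by
  obtain ⟨r₀, hr₀, hball⟩ := Metric.isOpen_iff.mp hU _ h₀
  have hsub : ∀ r : ℝ, r ≤ r₀ / 2 → closedBall t₀ r ×ˢ closedBall x₀ r ⊆ U := by
    intro r hr
    intro p hp
    apply hball
    rw [mem_ball]
    have : p ∈ closedBall t₀ (r₀/2) ×ˢ closedBall x₀ (r₀/2) :=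
      ⟨closedBall_subset_closedBall hr hp.1, closedBall_subset_closedBall hr hp.2⟩
    rw [closedBall_prod_same] at this
    calc dist p (t₀, x₀) ≤ r₀ / 2 := this
      _ < r₀ := by linarith
  by_contra hcon
  have H : ∀ n : ℕ, ∃ t ∈ closedBall t₀ (r₀/2/(n+1)), ∃ y ∈ closedBall x₀ (r₀/2/(n+1)),
      ∃ y' ∈ closedBall x₀ (r₀/2/(n+1)), (n:ℝ) * ‖y - y'‖ < ‖v t y - v t y'‖ := by
    intro n
    by_contra hn
    push_neg at hn
    have hrn : (0:ℝ) < r₀/2/(n+1) := by positivity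
    have hrn' : r₀/2/(n+1) ≤ r₀/2 := by
      apply div_le_self (by linarith)
      push_cast; linarith [Nat.cast_nonneg (α := ℝ) n]
    exact hcon ⟨r₀/2/(n+1), hrn, n, n.cast_nonneg, hsub _ hrn',
      fun t ht y hy y' hy' => hn t ht y hy y' hy'⟩
  choose t ht y hy y' hy' hlt using H
  have hrlim : Filter.Tendsto (fun n : ℕ => r₀/2/(n+1)) Filter.atTop (nhds 0) := by
    have := tendsto_one_div_add_atTop_nhds_zero_nat (𝕜 := ℝ)
    have h2 := this.const_mul (r₀/2)
    rw [mul_zero] at h2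
    convert h2 using 2 with n
    field_simp
  have key : ∀ (z : ℕ → F), (∀ n : ℕ, z n ∈ closedBall x₀ (r₀/2/(n+1))) →
      Filter.Tendsto (fun n => ((t n, z n) : ℝ × F)) Filter.atTop (nhds (t₀, x₀)) := by
    intro z hz
    rw [tendsto_iff_dist_tendsto_zero]
    refine squeeze_zero (fun n => dist_nonneg) (fun n => ?_) hrlim
    rw [Prod.dist_eq]
    exact max_le (ht n) (hz n)
  have hKc : IsCompact ((insert (t₀, x₀) (range fun n => ((t n, y n) : ℝ × F))) ∪
      (insert (t₀, x₀) (range fun n => ((t n, y' n) : ℝ × F)))) :=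
    ((key y hy).isCompact_insert_range).union ((key y' hy').isCompact_insert_range)
  have hmem : ∀ r : ℝ, 0 < r → r ≤ r₀/2 → ∀ s ∈ closedBall t₀ r, ∀ z ∈ closedBall x₀ r,
      ((s, z) : ℝ × F) ∈ U := fun r hr hr' s hs z hz => hsub r hr' ⟨hs, hz⟩
  have hKU : ((insert (t₀, x₀) (range fun n => ((t n, y n) : ℝ × F))) ∪
      (insert (t₀, x₀) (range fun n => ((t n, y' n) : ℝ × F)))) ⊆ U := by
    have hrn : ∀ n : ℕ, (0:ℝ) < r₀/2/(n+1) := by intro n; positivity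
    have hrn' : ∀ n : ℕ, r₀/2/(n+1) ≤ r₀/2 := by
      intro n
      apply div_le_self (by linarith)
      push_cast; linarith [Nat.cast_nonneg (α := ℝ) n]
    rintro p (hp | hp) <;> rcases hp with rfl | ⟨n, rfl⟩
    · exact h₀
    · exact hmem _ (hrn n) (hrn' n) _ (ht n) _ (hy n)
    · exact h₀
    · exact hmem _ (hrn n) (hrn' n) _ (ht n) _ (hy' n)
  obtain ⟨C, hC⟩ := hlip _ hKc hKU
  obtain ⟨n, hn⟩ := exists_nat_gt C
  have := hC (t n, y n) (mem_union_left _ (mem_insert_of_mem _ ⟨n, rfl⟩))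
    (t n, y' n) (mem_union_right _ (mem_insert_of_mem _ ⟨n, rfl⟩)) rfl
  have hchain : (n:ℝ) * ‖y n - y' n‖ < (n:ℝ) * ‖y n - y' n‖ :=
    lt_of_lt_of_le (hlt n) (this.trans (by
      apply mul_le_mul_of_nonneg_right hn.le (norm_nonneg _)))
  exact lt_irrefl _ hchain

/-- Continuity gives a local bound. -/
lemma locbound_of_cont {U : Set (ℝ × F)} (hU : IsOpen U) {v : ℝ → F → G}
    (hc : ContinuousOn (fun p : ℝ × F => v p.1 p.2) U)
    {t₀ : ℝ} {x₀ : F} (h₀ : (t₀, x₀) ∈ U) :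
    ∃ r > 0, (closedBall t₀ r ×ˢ closedBall x₀ r ⊆ U) ∧
      ∀ t ∈ closedBall t₀ r, ∀ y ∈ closedBall x₀ r, ‖v t y‖ ≤ ‖v t₀ x₀‖ + 1 := by
  have hca : ContinuousAt (fun p : ℝ × F => v p.1 p.2) (t₀, x₀) :=
    hc.continuousAt (hU.mem_nhds h₀)
  obtain ⟨δ, hδ, hδ'⟩ := Metric.continuousAt_iff.mp hca 1 one_pos
  obtain ⟨r₀, hr₀, hball⟩ := Metric.isOpen_iff.mp hU _ h₀
  refine ⟨min (δ/2) (r₀/2), by positivity, ?_, ?_⟩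
  · intro p hp
    apply hball
    rw [mem_ball]
    have : p ∈ closedBall t₀ (r₀/2) ×ˢ closedBall x₀ (r₀/2) :=
      ⟨closedBall_subset_closedBall (min_le_right _ _) hp.1,
       closedBall_subset_closedBall (min_le_right _ _) hp.2⟩
    rw [closedBall_prod_same] at this
    calc dist p (t₀, x₀) ≤ r₀ / 2 := this
      _ < r₀ := by linarith
  · intro t htm y hym
    have hd : dist ((t, y) : ℝ × F) (t₀, x₀) < δ := by
      rw [Prod.dist_eq]
      have h1 : dist t t₀ ≤ min (δ/2) (r₀/2) := htm
      have h2 : dist y x₀ ≤ min (δ/2) (r₀/2) := hym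
      have := min_le_left (δ/2) (r₀/2)
      have hmax : max (dist t t₀) (dist y x₀) ≤ δ/2 := max_le (h1.trans this) (h2.trans this)
      linarith
    have := hδ' hd
    have hnn : ‖v t y - v t₀ x₀‖ < 1 := by rwa [dist_eq_norm] at this
    calc ‖v t y‖ ≤ ‖v t₀ x₀‖ + ‖v t y - v t₀ x₀‖ := by
          have := norm_add_le (v t₀ x₀) (v t y - v t₀ x₀); simpa using this
      _ ≤ ‖v t₀ x₀‖ + 1 := by linarith

end helpers

open Set Metric

/-- Picard–Lindelöf with the extra information that the solution stays in the ball. -/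
lemma picard_ball {E : Type*} [NormedAddCommGroup E] [NormedSpace ℝ E] [CompleteSpace E]
    {v : ℝ → E → E} {tMin tMax : ℝ} {t₀ : Icc tMin tMax} (x₀ : E) {a L K : NNReal}
    (hpl : IsPicardLindelof v t₀ x₀ a 0 L K) :
    ∃ φ : ℝ → E, φ t₀ = x₀ ∧ ∀ t ∈ Icc tMin tMax,
      φ t ∈ closedBall x₀ a ∧ HasDerivWithinAt φ (v t (φ t)) (Icc tMin tMax) t := by
  obtain ⟨α, hα⟩ := ODE.FunSpace.exists_isFixedPt_next hpl (mem_closedBall_self le_rfl)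
  refine ⟨α.compProj, by rw [ODE.FunSpace.compProj_val, ← hα, ODE.FunSpace.next_apply₀],
    fun t ht => ⟨α.compProj_mem_closedBall hpl.mul_max_le, ?_⟩⟩
  apply ODE.hasDerivWithinAt_picard_Icc t₀.2 hpl.continuousOn_uncurry
    α.continuous_compProj.continuousOn (fun _ _ => α.compProj_mem_closedBall hpl.mul_max_le)
    x₀ ht |>.congr_of_mem _ ht
  intro t' ht'
  nth_rw 1 [← hα]
  rw [ODE.FunSpace.compProj_of_mem ht', ODE.FunSpace.next_apply]

open Set Metric

lemma isOpen_OmegaF {F : Type*} [NormedAddCommGroup F] (T : EReal) (b : ℝ) :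
    IsOpen {p : ℝ × F | ((|p.1| : ℝ) : EReal) < T ∧ ‖p.2‖ < b} := by
  have h1 : Continuous fun p : ℝ × F => ((|p.1| : ℝ) : EReal) :=
    continuous_coe_real_ereal.comp continuous_fst.abs
  have h2 : Continuous fun p : ℝ × F => ‖p.2‖ := continuous_snd.norm
  exact (isOpen_Iio.preimage h1).inter (isOpen_Iio.preimage h2)

lemma isOpen_OmegaR (T : EReal) (a b : ℝ) :
    IsOpen {p : ℝ × ℝ | ((|p.1| : ℝ) : EReal) < T ∧ p.2 ∈ Ioo a b} := by
  have h1 : Continuous fun p : ℝ × ℝ => ((|p.1| : ℝ) : EReal) :=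
    continuous_coe_real_ereal.comp continuous_fst.abs
  exact (isOpen_Iio.preimage h1).inter (isOpen_Ioo.preimage continuous_snd)

/-- The comparison lemma: a solution of `y' = f t y` staying in the ball of radius `b`
is dominated in norm by the solution `ψ` of the majorizing equation. -/
lemma comparison_psi {E : Type*} [NormedAddCommGroup E] [NormedSpace ℝ E]
    (T : EReal) (a b : ℝ) (ha : a < 0)
    (f : ℝ → E → E) (g : ℝ → ℝ → ℝ)
    (hg_lip : ∀ K : Set (ℝ × ℝ), IsCompact K →
      K ⊆ {p : ℝ × ℝ | ((|p.1| : ℝ) : EReal) < T ∧ p.2 ∈ Ioo a b} →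
      ∃ C : ℝ, ∀ p ∈ K, ∀ q ∈ K, p.1 = q.1 →
        |g p.1 p.2 - g q.1 q.2| ≤ C * |p.2 - q.2|)
    (hg_mono : ∀ t : ℝ, 0 ≤ t → ((t : ℝ) : EReal) < T →
      ∀ z z' : ℝ, 0 ≤ z → z ≤ z' → z' < b → g t z ≤ g t z')
    (hmaj : ∀ t : ℝ, ∀ y : E, ((|t| : ℝ) : EReal) < T → ‖y‖ < b →
      ‖f t y‖ ≤ g |t| ‖y‖)
    (x : E) (β' : ℝ) (hβ'T : (β' : EReal) ≤ T)
    (ψ : ℝ → ℝ) (hψ0 : ψ 0 = ‖x‖)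
    (hψmem : ∀ t ∈ Ico (0 : ℝ) β', ψ t ∈ Ico (0 : ℝ) b)
    (hψdiff : ∀ t ∈ Ico (0 : ℝ) β',
      HasDerivWithinAt ψ (g t (ψ t)) (Ico (0 : ℝ) β') t)
    (φ : ℝ → E) (d : ℝ) (hd0 : 0 ≤ d) (hdβ : d < β')
    (hφ0 : φ 0 = x)
    (hφd : ∀ t ∈ Icc (0:ℝ) d, HasDerivWithinAt φ (f t (φ t)) (Icc (0:ℝ) d) t)
    (hφb : ∀ t ∈ Icc (0:ℝ) d, ‖φ t‖ < b) :
    ∀ t ∈ Icc (0:ℝ) d, ‖φ t‖ ≤ ψ t := by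
  have hφc : ContinuousOn φ (Icc 0 d) := fun t htm => (hφd t htm).continuousWithinAt
  have hψc : ContinuousOn ψ (Ico 0 β') := fun t htm => (hψdiff t htm).continuousWithinAt
  have hsub : Icc (0:ℝ) d ⊆ Ico 0 β' := fun t htm => ⟨htm.1, lt_of_le_of_lt htm.2 hdβ⟩
  set u : ℝ → ℝ := fun t => ‖φ t‖ with hu
  have huc : ContinuousOn u (Icc 0 d) := hφc.norm
  -- coercion helper
  have hcoe : ∀ t : ℝ, t ≤ d → ((t : ℝ) : EReal) < T := by
    intro t htd
    calc ((t : ℝ) : EReal) < ((β' : ℝ) : EReal) := EReal.coe_lt_coe_iff.2 (by linarith)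
      _ ≤ T := hβ'T
  by_contra hcontra
  push_neg at hcontra
  obtain ⟨t₂, ht₂m, ht₂⟩ := hcontra
  set B : Set ℝ := {t | t ∈ Icc (0:ℝ) d ∧ ψ t < u t} with hB
  have hBne : B.Nonempty := ⟨t₂, ht₂m, ht₂⟩
  have hBbdd : BddBelow B := ⟨0, fun t htm => htm.1.1⟩
  set s := sInf B with hs
  have hsmem : s ∈ Icc (0:ℝ) d :=
    ⟨le_csInf hBne fun t htm => htm.1.1, (csInf_le hBbdd ⟨ht₂m, ht₂⟩).trans ht₂m.2⟩
  have hle : ∀ t, 0 ≤ t → t < s → u t ≤ ψ t := by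
    intro t h0 hts
    by_contra h
    push_neg at h
    exact absurd (csInf_le hBbdd ⟨⟨h0, hts.le.trans hsmem.2⟩, h⟩) (not_le.mpr hts)
  -- limits to show u s = ψ s
  have hlim_of_seq : ∀ τ : ℕ → ℝ, (∀ n, τ n ∈ Icc (0:ℝ) d) →
      Filter.Tendsto τ Filter.atTop (nhds s) →
      Filter.Tendsto (fun n => u (τ n)) Filter.atTop (nhds (u s)) ∧
      Filter.Tendsto (fun n => ψ (τ n)) Filter.atTop (nhds (ψ s)) := by
    intro τ hτm hτl
    constructor
    · exact ((huc s hsmem).tendsto).comp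
        (tendsto_nhdsWithin_of_tendsto_nhds_of_eventually_within τ hτl
          (Filter.Eventually.of_forall hτm))
    · exact ((hψc s (hsub hsmem)).tendsto).comp
        (tendsto_nhdsWithin_of_tendsto_nhds_of_eventually_within τ hτl
          (Filter.Eventually.of_forall fun n => hsub (hτm n)))
  have hψs_le : ψ s ≤ u s := by
    have H : ∀ n : ℕ, ∃ t ∈ B, t < s + 1/(n+1) := by
      intro n
      refine exists_lt_of_csInf_lt hBne ?_
      rw [← hs]
      have hpos : (0:ℝ) < 1/((n:ℝ)+1) := by positivity
      linarith
    choose τ hτB hτlt using H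
    have hτm : ∀ n, τ n ∈ Icc (0:ℝ) d := fun n => (hτB n).1
    have hτge : ∀ n, s ≤ τ n := fun n => csInf_le hBbdd (hτB n)
    have hτl : Filter.Tendsto τ Filter.atTop (nhds s) := by
      have h1 : Filter.Tendsto (fun n : ℕ => s + 1/(n+1)) Filter.atTop (nhds s) := by
        have := tendsto_one_div_add_atTop_nhds_zero_nat.const_add s
        simpa using this
      exact tendsto_of_tendsto_of_tendsto_of_le_of_le tendsto_const_nhds h1
        hτge (fun n => (hτlt n).le)
    obtain ⟨hul, hψl⟩ := hlim_of_seq τ hτm hτl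
    exact le_of_tendsto_of_tendsto' hψl hul fun n => ((hτB n).2).le
  have hus_le : u s ≤ ψ s := by
    rcases eq_or_lt_of_le hsmem.1 with h0 | h0
    · rw [← h0]
      have : u 0 = ‖x‖ := by rw [hu]; simp [hφ0]
      rw [this, hψ0]
    · set τ : ℕ → ℝ := fun n => s - s/(n+1) with hτ
      have hτm : ∀ n, τ n ∈ Icc (0:ℝ) d := by
        intro n
        have h1 : (0:ℝ) < s/(n+1) := by positivity
        have h2 : s/(n+1) ≤ s := by
          apply div_le_self h0.le
          have : (0:ℝ) ≤ (n:ℝ) := Nat.cast_nonneg n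
          linarith
        constructor <;> simp only [hτ] <;> [linarith; linarith [hsmem.2]]
      have hτlt : ∀ n, τ n < s := fun n => by
        have h1 : (0:ℝ) < s/(n+1) := by positivity
        simp only [hτ]; linarith
      have hτl : Filter.Tendsto τ Filter.atTop (nhds s) := by
        have h1 : Filter.Tendsto (fun n : ℕ => s/(n+1)) Filter.atTop (nhds 0) := by
          have := tendsto_one_div_add_atTop_nhds_zero_nat.const_mul s
          rw [mul_zero] at this
          convert this using 2 with n
          field_simp
        have := h1.const_sub s
        simpa using this
      obtain ⟨hul, hψl⟩ := hlim_of_seq τ hτm hτl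
      exact le_of_tendsto_of_tendsto' hul hψl fun n => hle (τ n) (hτm n).1 (hτlt n)
  have husψ : u s = ψ s := le_antisymm hus_le hψs_le
  have hsd : s < d := by
    rcases lt_or_eq_of_le hsmem.2 with h | h
    · exact h
    · exfalso
      have ht₂ge : s ≤ t₂ := csInf_le hBbdd ⟨ht₂m, ht₂⟩
      have : t₂ = s := le_antisymm (ht₂m.2.trans (le_of_eq h.symm)) ht₂ge
      rw [this] at ht₂
      linarith [husψ]
  -- the point (s, ψ s) lies in the domain of g
  have hψsmem : ψ s ∈ Ico (0:ℝ) b := hψmem s (hsub hsmem)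
  have hpt : ((s, ψ s) : ℝ × ℝ) ∈
      {p : ℝ × ℝ | ((|p.1| : ℝ) : EReal) < T ∧ p.2 ∈ Ioo a b} := by
    refine ⟨?_, lt_of_lt_of_le ha hψsmem.1, hψsmem.2⟩
    rw [abs_of_nonneg hsmem.1]
    exact hcoe s hsmem.2
  -- local Lipschitz for g
  have hg_lip' : ∀ K : Set (ℝ × ℝ), IsCompact K →
      K ⊆ {p : ℝ × ℝ | ((|p.1| : ℝ) : EReal) < T ∧ p.2 ∈ Ioo a b} →
      ∃ C : ℝ, ∀ p ∈ K, ∀ q ∈ K, p.1 = q.1 →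
        ‖g p.1 p.2 - g q.1 q.2‖ ≤ C * ‖p.2 - q.2‖ := by
    intro K hK hKU
    obtain ⟨C, hC⟩ := hg_lip K hK hKU
    exact ⟨C, fun p hp q hq h1 => by
      rw [Real.norm_eq_abs, Real.norm_eq_abs]; exact hC p hp q hq h1⟩
  obtain ⟨r, hr, C, hC0, hboxU, hlipg⟩ :=
    loclip_of_compactLip (isOpen_OmegaR T a b) hg_lip' hpt
  -- choose δ
  obtain ⟨δ₁, hδ₁, hδ₁'⟩ := Metric.continuousWithinAt_iff.mp (huc s hsmem) r hr
  obtain ⟨δ₂, hδ₂, hδ₂'⟩ := Metric.continuousWithinAt_iff.mp (hψc s (hsub hsmem)) r hr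
  set δ := min (min (δ₁/2) (δ₂/2)) (min r (d - s)) with hδ
  have hδpos : 0 < δ := by
    apply lt_min (lt_min (by linarith) (by linarith)) (lt_min hr (by linarith))
  have hδr : δ ≤ r := (min_le_right _ _).trans (min_le_left _ _)
  have hδd : s + δ ≤ d := by
    have h2 : δ ≤ d - s := (min_le_right _ _).trans (min_le_right r (d - s))
    linarith
  -- basic facts on [s, s+δ]
  have hfacts : ∀ t ∈ Icc s (s+δ), t ∈ Icc (0:ℝ) d ∧ t ∈ closedBall s r ∧
      u t ∈ closedBall (ψ s) r ∧ ψ t ∈ closedBall (ψ s) r := by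
    intro t htm
    have ht0d : t ∈ Icc (0:ℝ) d := ⟨hsmem.1.trans htm.1, htm.2.trans hδd⟩
    have hdist : dist t s < δ₁ ∧ dist t s < δ₂ ∧ dist t s ≤ r := by
      rw [Real.dist_eq, abs_of_nonneg (by linarith [htm.1] : (0:ℝ) ≤ t - s)]
      refine ⟨?_, ?_, ?_⟩
      · have h1 : δ ≤ δ₁/2 := (min_le_left _ _).trans (min_le_left _ _)
        linarith [htm.2]
      · have h1 : δ ≤ δ₂/2 := (min_le_left _ _).trans (min_le_right _ _)
        linarith [htm.2]
      · linarith [htm.2]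
    refine ⟨ht0d, mem_closedBall.mpr hdist.2.2, ?_, ?_⟩
    · have := hδ₁' ht0d hdist.1
      rw [mem_closedBall]
      rw [husψ] at this
      exact this.le
    · have := hδ₂' (hsub ht0d) hdist.2.1
      rw [mem_closedBall]
      exact this.le
  -- Gronwall setup
  set w : ℝ → ℝ := fun t => u t - ψ t with hwdef
  set h : ℝ → ℝ := fun t => max (w t) 0 with hhdef
  set h' : ℝ → ℝ := fun t => max (‖f t (φ t)‖ - g t (ψ t)) 0 with hh'def
  have hsub1 : Icc s (s+δ) ⊆ Icc (0:ℝ) d := fun t htm => (hfacts t htm).1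
  have hsub2 : Icc s (s+δ) ⊆ Ico (0:ℝ) β' := fun t htm => hsub (hfacts t htm).1
  have hconth : ContinuousOn h (Icc s (s+δ)) :=
    (continuous_id.max continuous_const).comp_continuousOn
      ((huc.mono hsub1).sub (hψc.mono hsub2))
  have hslope : ∀ t ∈ Ico s (s+δ), ∀ ρ, h' t < ρ →
      ∃ᶠ z in nhdsWithin t (Ioi t), (z - t)⁻¹ * (h z - h t) < ρ := by
    intro t htm ρ hρ
    have htm' : t ∈ Icc s (s+δ) := ⟨htm.1, htm.2.le⟩
    obtain ⟨ht0d, _, _, _⟩ := hfacts t htm'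
    have htd : t < d := lt_of_lt_of_le htm.2 hδd
    have htβ : t < β' := lt_trans htd hdβ
    have hA : HasDerivWithinAt φ (f t (φ t)) (Ici t) t := by
      have h1 := (hφd t ht0d).mono (Icc_subset_Icc_left ht0d.1 : Icc t d ⊆ Icc 0 d)
      exact h1.mono_of_mem_nhdsWithin (Icc_mem_nhdsGE_of_mem ⟨le_refl t, htd⟩)
    have hBt : Filter.Tendsto (fun z => (z - t)⁻¹ * (ψ z - ψ t))
        (nhdsWithin t (Ioi t)) (nhds (g t (ψ t))) := by
      have h1 := hψdiff t ⟨ht0d.1, htβ⟩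
      rw [hasDerivWithinAt_iff_tendsto_slope] at h1
      have heq : (fun z => (z - t)⁻¹ * (ψ z - ψ t)) = slope ψ t := by
        funext z
        rw [slope_def_field]
        field_simp
      rw [heq]
      refine h1.mono_left ?_
      rw [← nhdsWithin_Ioo_eq_nhdsGT htβ]
      exact nhdsWithin_mono _ fun z hz =>
        ⟨⟨le_of_lt (lt_of_le_of_lt ht0d.1 hz.1), hz.2⟩, ne_of_gt hz.1⟩
    have hρ0 : 0 < ρ := lt_of_le_of_lt (le_max_right _ _) hρ
    set η := (ρ - (‖f t (φ t)‖ - g t (ψ t))) / 2 with hη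
    have hη0 : 0 < η := by
      have : ‖f t (φ t)‖ - g t (ψ t) ≤ h' t := le_max_left _ _
      simp only [hη]
      linarith
    have hfreq := hA.liminf_right_slope_norm_le
      (show ‖f t (φ t)‖ < ‖f t (φ t)‖ + η by linarith)
    have hev : ∀ᶠ z in nhdsWithin t (Ioi t),
        g t (ψ t) - η < (z - t)⁻¹ * (ψ z - ψ t) :=
      hBt.eventually (eventually_gt_nhds (by linarith))
    have hev2 : ∀ᶠ z in nhdsWithin t (Ioi t), t < z := self_mem_nhdsWithin
    refine ((hfreq.and_eventually hev).and_eventually hev2).mono ?_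
    rintro z ⟨⟨h1, h2⟩, h3⟩
    have hz0 : (0:ℝ) < z - t := by have h3' : t < z := h3; linarith
    have hinv : (0:ℝ) ≤ (z - t)⁻¹ := by positivity
    have hmax : h z - h t ≤ max (w z - w t) 0 := by
      have := max_sub_max_le_max (w z) 0 (w t) 0
      rwa [sub_zero] at this
    have step1 : (z - t)⁻¹ * (h z - h t) ≤ max ((z - t)⁻¹ * (w z - w t)) 0 := by
      calc (z - t)⁻¹ * (h z - h t) ≤ (z - t)⁻¹ * max (w z - w t) 0 :=
            mul_le_mul_of_nonneg_left hmax hinv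
        _ = max ((z - t)⁻¹ * (w z - w t)) ((z - t)⁻¹ * 0) := by
            rw [mul_max_of_nonneg _ _ hinv]
        _ = max ((z - t)⁻¹ * (w z - w t)) 0 := by rw [mul_zero]
    have step2 : (z - t)⁻¹ * (w z - w t) < ρ := by
      have heq : (z - t)⁻¹ * (w z - w t)
          = (z - t)⁻¹ * (u z - u t) - (z - t)⁻¹ * (ψ z - ψ t) := by
        simp only [hwdef]; ring
      rw [heq]
      simp only [hη] at h1 h2 ⊢
      have := h1
      linarith
    exact lt_of_le_of_lt step1 (max_lt step2 hρ0)
  have hh0 : h s ≤ 0 := by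
    show max (u s - ψ s) 0 ≤ 0
    rw [husψ, sub_self, max_self]
  have hbound : ∀ t ∈ Ico s (s+δ), h' t ≤ C * h t + 0 := by
    intro t htm
    have htm' : t ∈ Icc s (s+δ) := ⟨htm.1, htm.2.le⟩
    obtain ⟨ht0d, htcb, hucb, hψcb⟩ := hfacts t htm'
    have ht0 : (0:ℝ) ≤ t := ht0d.1
    have htT : ((t:ℝ) : EReal) < T := hcoe t ht0d.2
    have hmaj' : ‖f t (φ t)‖ ≤ g t (u t) := by
      have := hmaj t (φ t) (by rwa [abs_of_nonneg ht0]) (hφb t ht0d)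
      rwa [abs_of_nonneg ht0] at this
    have hht : 0 ≤ h t := le_max_right _ _
    rcases le_or_gt (u t) (ψ t) with hc | hc
    · have hmono := hg_mono t ht0 htT (u t) (ψ t) (norm_nonneg _) hc (hψmem t (hsub ht0d)).2
      have : h' t ≤ 0 := max_le (by linarith) le_rfl
      have h2 : 0 ≤ C * h t := mul_nonneg hC0 hht
      linarith
    · have hlip := hlipg t htcb (u t) hucb (ψ t) hψcb
      rw [Real.norm_eq_abs, Real.norm_eq_abs] at hlip
      have habs : |g t (u t) - g t (ψ t)| ≤ C * (u t - ψ t) := by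
        rwa [abs_of_pos (by linarith : (0:ℝ) < u t - ψ t)] at hlip
      have h1 : g t (u t) - g t (ψ t) ≤ C * (u t - ψ t) :=
        (le_abs_self _).trans habs
      have hhw : h t = u t - ψ t := max_eq_left (by simp only [hwdef]; linarith)
      have h2 : ‖f t (φ t)‖ - g t (ψ t) ≤ C * (u t - ψ t) := by linarith
      have h3 : (0:ℝ) ≤ C * (u t - ψ t) := mul_nonneg hC0 (by linarith)
      have : h' t ≤ C * (u t - ψ t) := max_le h2 h3
      rw [hhw]
      linarith
  have hgron := le_gronwallBound_of_liminf_deriv_right_le hconth hslope hh0 hbound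
  obtain ⟨t₃, ht₃B, ht₃lt⟩ := exists_lt_of_csInf_lt hBne
    (show sInf B < s + δ by rw [← hs]; linarith)
  have ht₃ge : s ≤ t₃ := csInf_le hBbdd ht₃B
  have := hgron t₃ ⟨ht₃ge, ht₃lt.le⟩
  rw [gronwallBound_ε0_δ0] at this
  have hwle : w t₃ ≤ 0 := le_trans (le_max_left _ _) this
  have : ψ t₃ < u t₃ := ht₃B.2
  simp only [hwdef] at hwle
  linarith

open Set Metric

lemma uniqueness_sol {E : Type*} [NormedAddCommGroup E] [NormedSpace ℝ E]
    (T : EReal) (b : ℝ) (f : ℝ → E → E)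
    (hf_lip : ∀ K : Set (ℝ × E), IsCompact K →
      K ⊆ {p : ℝ × E | ((|p.1| : ℝ) : EReal) < T ∧ ‖p.2‖ < b} →
      ∃ C : ℝ, ∀ p ∈ K, ∀ q ∈ K, p.1 = q.1 →
        ‖f p.1 p.2 - f q.1 q.2‖ ≤ C * ‖p.2 - q.2‖)
    (x : E) (c : ℝ) (hc0 : 0 ≤ c) (hcT : ((c : ℝ) : EReal) < T)
    (φ₁ φ₂ : ℝ → E) (h10 : φ₁ 0 = x) (h20 : φ₂ 0 = x)
    (h1d : ∀ t ∈ Icc (0:ℝ) c, HasDerivWithinAt φ₁ (f t (φ₁ t)) (Icc (0:ℝ) c) t)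
    (h2d : ∀ t ∈ Icc (0:ℝ) c, HasDerivWithinAt φ₂ (f t (φ₂ t)) (Icc (0:ℝ) c) t)
    (h1b : ∀ t ∈ Icc (0:ℝ) c, ‖φ₁ t‖ < b)
    (h2b : ∀ t ∈ Icc (0:ℝ) c, ‖φ₂ t‖ < b) :
    EqOn φ₁ φ₂ (Icc (0:ℝ) c) := by
  have h1c : ContinuousOn φ₁ (Icc 0 c) := fun t ht => (h1d t ht).continuousWithinAt
  have h2c : ContinuousOn φ₂ (Icc 0 c) := fun t ht => (h2d t ht).continuousWithinAt
  set K : Set (ℝ × E) := (fun t => (t, φ₁ t)) '' Icc 0 c ∪ (fun t => (t, φ₂ t)) '' Icc 0 c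
    with hK
  have hKc : IsCompact K :=
    (isCompact_Icc.image_of_continuousOn (continuousOn_id.prodMk h1c)).union
      (isCompact_Icc.image_of_continuousOn (continuousOn_id.prodMk h2c))
  have hmemT : ∀ t ∈ Icc (0:ℝ) c, ((|t| : ℝ) : EReal) < T := by
    intro t ht
    rw [abs_of_nonneg ht.1]
    calc ((t:ℝ) : EReal) ≤ ((c:ℝ) : EReal) := EReal.coe_le_coe_iff.2 ht.2
      _ < T := hcT
  have hKU : K ⊆ {p : ℝ × E | ((|p.1| : ℝ) : EReal) < T ∧ ‖p.2‖ < b} := by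
    rintro p (⟨t, ht, rfl⟩ | ⟨t, ht, rfl⟩)
    · exact ⟨hmemT t ht, h1b t ht⟩
    · exact ⟨hmemT t ht, h2b t ht⟩
  obtain ⟨C, hC⟩ := hf_lip K hKc hKU
  set C' : NNReal := ⟨max C 0, le_max_right _ _⟩ with hC'
  set proj : ℝ → ℝ := fun t => max 0 (min t c) with hproj
  have hprojm : ∀ t, proj t ∈ Icc (0:ℝ) c := by
    intro t
    constructor
    · exact le_max_left _ _
    · simp only [hproj]
      exact max_le hc0 (min_le_right _ _)
  have hprojeq : ∀ t ∈ Icc (0:ℝ) c, proj t = t := by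
    intro t ht
    simp only [hproj]
    rw [min_eq_left ht.2, max_eq_right ht.1]
  set v : ℝ → E → E := fun t y => f (proj t) y with hv
  set s : ℝ → Set E := fun t => {φ₁ (proj t), φ₂ (proj t)} with hsdef
  have hlip : ∀ t, LipschitzOnWith C' (v t) (s t) := by
    intro t
    rw [lipschitzOnWith_iff_dist_le_mul]
    have hcross : ∀ y y' : ℝ → E,
        ((fun tt => (tt, y tt)) '' Icc 0 c ⊆ K) → ((fun tt => (tt, y' tt)) '' Icc 0 c ⊆ K) →
        dist (f (proj t) (y (proj t))) (f (proj t) (y' (proj t)))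
          ≤ (C' : ℝ) * dist (y (proj t)) (y' (proj t)) := by
      intro y y' hy hy'
      have h1 : ((proj t, y (proj t)) : ℝ × E) ∈ K := hy ⟨proj t, hprojm t, rfl⟩
      have h2 : ((proj t, y' (proj t)) : ℝ × E) ∈ K := hy' ⟨proj t, hprojm t, rfl⟩
      have := hC _ h1 _ h2 rfl
      rw [dist_eq_norm, dist_eq_norm]
      calc ‖f (proj t) (y (proj t)) - f (proj t) (y' (proj t))‖
          ≤ C * ‖y (proj t) - y' (proj t)‖ := this
        _ ≤ (C' : ℝ) * ‖y (proj t) - y' (proj t)‖ :=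
            mul_le_mul_of_nonneg_right (le_max_left _ _) (norm_nonneg _)
    rintro z (rfl | rfl) z' (rfl | rfl)
    · simp
    · exact hcross φ₁ φ₂ subset_union_left subset_union_right
    · exact hcross φ₂ φ₁ subset_union_right subset_union_left
    · simp
  have hderiv : ∀ (φ : ℝ → E),
      (∀ t ∈ Icc (0:ℝ) c, HasDerivWithinAt φ (f t (φ t)) (Icc (0:ℝ) c) t) →
      ∀ t ∈ Ico (0:ℝ) c, HasDerivWithinAt φ (v t (φ t)) (Ici t) t := by
    intro φ hφ t ht
    have ht' : t ∈ Icc (0:ℝ) c := ⟨ht.1, ht.2.le⟩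
    have h1 := (hφ t ht').mono (Icc_subset_Icc_left ht.1 : Icc t c ⊆ Icc 0 c)
    have h2 := h1.mono_of_mem_nhdsWithin (Icc_mem_nhdsGE_of_mem ⟨le_refl t, ht.2⟩)
    have : v t (φ t) = f t (φ t) := by
      show f (proj t) (φ t) = f t (φ t)
      rw [hprojeq t ht']
    rw [this]
    exact h2
  have hmem : ∀ (φ₁' φ₂' : ℝ → E), (∀ t ∈ Ico (0:ℝ) c,
      φ₁' t ∈ ({φ₁' (proj t), φ₂' (proj t)} : Set E)) := by
    intro φ₁' φ₂' t ht
    have : proj t = t := hprojeq t ⟨ht.1, ht.2.le⟩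
    rw [this]
    exact mem_insert _ _
  intro t ht
  refine ODE_solution_unique_of_mem_Icc_right (fun t _ => hlip t) h1c (hderiv φ₁ h1d) ?_ h2c
    (hderiv φ₂ h2d) ?_ (by rw [h10, h20]) ht
  · intro τ hτ
    have : proj τ = τ := hprojeq τ ⟨hτ.1, hτ.2.le⟩
    simp only [hsdef, this]
    exact mem_insert _ _
  · intro τ hτ
    have : proj τ = τ := hprojeq τ ⟨hτ.1, hτ.2.le⟩
    simp only [hsdef, this]
    exact mem_insert_of_mem _ rfl

open Set Metric

lemma local_sol {E : Type*} [NormedAddCommGroup E] [NormedSpace ℝ E] [CompleteSpace E]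
    (T : EReal) (b : ℝ) (f : ℝ → E → E)
    (hf_cont : ContinuousOn (fun p : ℝ × E => f p.1 p.2)
      {p : ℝ × E | ((|p.1| : ℝ) : EReal) < T ∧ ‖p.2‖ < b})
    (hf_lip : ∀ K : Set (ℝ × E), IsCompact K →
      K ⊆ {p : ℝ × E | ((|p.1| : ℝ) : EReal) < T ∧ ‖p.2‖ < b} →
      ∃ C : ℝ, ∀ p ∈ K, ∀ q ∈ K, p.1 = q.1 →
        ‖f p.1 p.2 - f q.1 q.2‖ ≤ C * ‖p.2 - q.2‖)
    (t₀ : ℝ) (x₀ : E) (h₀T : ((|t₀| : ℝ) : EReal) < T) (h₀b : ‖x₀‖ < b) :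
    ∃ ε > 0, ∃ φ : ℝ → E, φ t₀ = x₀ ∧ ∀ t ∈ Icc t₀ (t₀ + ε),
      ‖φ t‖ < b ∧ HasDerivWithinAt φ (f t (φ t)) (Icc t₀ (t₀ + ε)) t := by
  have h₀ : ((t₀, x₀) : ℝ × E) ∈ {p : ℝ × E | ((|p.1| : ℝ) : EReal) < T ∧ ‖p.2‖ < b} :=
    ⟨h₀T, h₀b⟩
  obtain ⟨r, hr, C, hC0, hboxU, hlip⟩ :=
    loclip_of_compactLip (isOpen_OmegaF T b) hf_lip h₀
  obtain ⟨r₂, hr₂, hbox₂U, hbnd⟩ := locbound_of_cont (isOpen_OmegaF T b) hf_cont h₀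
  set ρ := min r r₂ with hρ
  have hρ0 : 0 < ρ := lt_min hr hr₂
  set N := ‖f t₀ x₀‖ + 1 with hN
  have hN1 : 1 ≤ N := by simp only [hN]; linarith [norm_nonneg (f t₀ x₀)]
  have hN0 : 0 < N := by linarith
  set ε := ρ / N with hε
  have hε0 : 0 < ε := by positivity
  have hερ : ε ≤ ρ := by
    rw [hε, div_le_iff₀ hN0]
    nlinarith [hρ0.le]
  have htsub : Icc t₀ (t₀ + ε) ⊆ closedBall t₀ ρ := by
    intro t ht
    rw [mem_closedBall, Real.dist_eq, abs_of_nonneg (by linarith [ht.1] : (0:ℝ) ≤ t - t₀)]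
    linarith [ht.2]
  have hρr : closedBall t₀ ρ ⊆ closedBall t₀ r := closedBall_subset_closedBall (min_le_left _ _)
  have hρr₂ : closedBall t₀ ρ ⊆ closedBall t₀ r₂ := closedBall_subset_closedBall (min_le_right _ _)
  have hxρr : closedBall x₀ ρ ⊆ closedBall x₀ r := closedBall_subset_closedBall (min_le_left _ _)
  have hxρr₂ : closedBall x₀ ρ ⊆ closedBall x₀ r₂ := closedBall_subset_closedBall (min_le_right _ _)
  have hpl : IsPicardLindelof f (tmin := t₀) (tmax := t₀ + ε) ⟨t₀, le_refl _, by linarith⟩ x₀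
      ⟨ρ, hρ0.le⟩ 0 ⟨N, hN0.le⟩ (Real.toNNReal C) := by
    constructor
    · intro t ht
      rw [lipschitzOnWith_iff_dist_le_mul]
      intro y hy y' hy'
      rw [dist_eq_norm, dist_eq_norm]
      have := hlip t (hρr (htsub ht)) y (hxρr hy) y' (hxρr hy')
      rwa [Real.coe_toNNReal _ hC0]
    · intro y hy
      apply hf_cont.comp ((continuous_id.prodMk continuous_const).continuousOn)
      intro t ht
      exact hbox₂U ⟨hρr₂ (htsub ht), hxρr₂ hy⟩
    · intro t ht y hy
      exact hbnd t (hρr₂ (htsub ht)) y (hxρr₂ hy)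
    · simp only [NNReal.coe_mk, NNReal.coe_zero, sub_zero]
      rw [add_sub_cancel_left, sub_self, max_eq_left hε0.le, hε]
      change N * (ρ / N) ≤ ρ
      rw [mul_div_cancel₀ _ (ne_of_gt hN0)]
  obtain ⟨φ, hφ0, hφ⟩ := picard_ball x₀ hpl
  refine ⟨ε, hε0, φ, hφ0, fun t ht => ⟨?_, (hφ t ht).2⟩⟩
  have hmem : φ t ∈ closedBall x₀ ρ := (hφ t ht).1
  have : ((t₀, φ t) : ℝ × E) ∈ {p : ℝ × E | ((|p.1| : ℝ) : EReal) < T ∧ ‖p.2‖ < b} :=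
    hboxU ⟨mem_closedBall_self (by linarith [hρ0, min_le_left r r₂] : (0:ℝ) ≤ r), hxρr hmem⟩
  exact this.2

open Set Metric

def SolOf {E : Type*} [NormedAddCommGroup E] [NormedSpace ℝ E]
    (f : ℝ → E → E) (ψ : ℝ → ℝ) (x : E) (c : ℝ) (φ : ℝ → E) : Prop :=
  φ 0 = x ∧ ∀ t ∈ Icc (0:ℝ) c,
    HasDerivWithinAt φ (f t (φ t)) (Icc (0:ℝ) c) t ∧ ‖φ t‖ ≤ ψ t

lemma sol_mono {E : Type*} [NormedAddCommGroup E] [NormedSpace ℝ E]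
    {f : ℝ → E → E} {ψ : ℝ → ℝ} {x : E} {c e : ℝ} {φ : ℝ → E}
    (h : SolOf f ψ x c φ) (hec : e ≤ c) : SolOf f ψ x e φ := by
  refine ⟨h.1, fun t ht => ?_⟩
  have ht' : t ∈ Icc (0:ℝ) c := ⟨ht.1, ht.2.trans hec⟩
  exact ⟨(h.2 t ht').1.mono (Icc_subset_Icc_right hec), (h.2 t ht').2⟩

lemma sol_uniq {E : Type*} [NormedAddCommGroup E] [NormedSpace ℝ E]
    (T : EReal) (b β' : ℝ) (f : ℝ → E → E) (ψ : ℝ → ℝ) (x : E)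
    (hf_lip : ∀ K : Set (ℝ × E), IsCompact K →
      K ⊆ {p : ℝ × E | ((|p.1| : ℝ) : EReal) < T ∧ ‖p.2‖ < b} →
      ∃ C : ℝ, ∀ p ∈ K, ∀ q ∈ K, p.1 = q.1 →
        ‖f p.1 p.2 - f q.1 q.2‖ ≤ C * ‖p.2 - q.2‖)
    (hβ'T : (β' : EReal) ≤ T)
    (hψmem : ∀ t ∈ Ico (0 : ℝ) β', ψ t ∈ Ico (0 : ℝ) b)
    {c : ℝ} (hc0 : 0 ≤ c) (hcβ : c < β') {φ₁ φ₂ : ℝ → E}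
    (h1 : SolOf f ψ x c φ₁) (h2 : SolOf f ψ x c φ₂) :
    EqOn φ₁ φ₂ (Icc (0:ℝ) c) := by
  have hb : ∀ (φ : ℝ → E), SolOf f ψ x c φ → ∀ t ∈ Icc (0:ℝ) c, ‖φ t‖ < b := by
    intro φ hφ t ht
    exact lt_of_le_of_lt (hφ.2 t ht).2 (hψmem t ⟨ht.1, lt_of_le_of_lt ht.2 hcβ⟩).2
  have hcT : ((c : ℝ) : EReal) < T :=
    lt_of_lt_of_le (EReal.coe_lt_coe_iff.2 hcβ) hβ'T
  exact uniqueness_sol T b f hf_lip x c hc0 hcT φ₁ φ₂ h1.1 h2.1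
    (fun t ht => (h1.2 t ht).1) (fun t ht => (h2.2 t ht).1)
    (hb φ₁ h1) (hb φ₂ h2)

lemma exists_sol_up_to {E : Type*} [NormedAddCommGroup E] [NormedSpace ℝ E] [CompleteSpace E]
    (T : EReal) (a b : ℝ) (ha : a < 0)
    (f : ℝ → E → E) (g : ℝ → ℝ → ℝ)
    (hf_cont : ContinuousOn (fun p : ℝ × E => f p.1 p.2)
      {p : ℝ × E | ((|p.1| : ℝ) : EReal) < T ∧ ‖p.2‖ < b})
    (hf_lip : ∀ K : Set (ℝ × E), IsCompact K →
      K ⊆ {p : ℝ × E | ((|p.1| : ℝ) : EReal) < T ∧ ‖p.2‖ < b} →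
      ∃ C : ℝ, ∀ p ∈ K, ∀ q ∈ K, p.1 = q.1 →
        ‖f p.1 p.2 - f q.1 q.2‖ ≤ C * ‖p.2 - q.2‖)
    (hg_cont : ContinuousOn (fun p : ℝ × ℝ => g p.1 p.2)
      {p : ℝ × ℝ | ((|p.1| : ℝ) : EReal) < T ∧ p.2 ∈ Ioo a b})
    (hg_lip : ∀ K : Set (ℝ × ℝ), IsCompact K →
      K ⊆ {p : ℝ × ℝ | ((|p.1| : ℝ) : EReal) < T ∧ p.2 ∈ Ioo a b} →
      ∃ C : ℝ, ∀ p ∈ K, ∀ q ∈ K, p.1 = q.1 →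
        |g p.1 p.2 - g q.1 q.2| ≤ C * |p.2 - q.2|)
    (hg_mono : ∀ t : ℝ, 0 ≤ t → ((t : ℝ) : EReal) < T →
      ∀ z z' : ℝ, 0 ≤ z → z ≤ z' → z' < b → g t z ≤ g t z')
    (hmaj : ∀ t : ℝ, ∀ y : E, ((|t| : ℝ) : EReal) < T → ‖y‖ < b →
      ‖f t y‖ ≤ g |t| ‖y‖)
    (x : E) (hx : ‖x‖ < b)
    (β' : ℝ) (hβ'T : (β' : EReal) ≤ T)
    (ψ : ℝ → ℝ) (hψ0 : ψ 0 = ‖x‖)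
    (hψmem : ∀ t ∈ Ico (0 : ℝ) β', ψ t ∈ Ico (0 : ℝ) b)
    (hψdiff : ∀ t ∈ Ico (0 : ℝ) β',
      HasDerivWithinAt ψ (g t (ψ t)) (Ico (0 : ℝ) β') t)
    (c₁ : ℝ) (hc₁0 : 0 ≤ c₁) (hc₁β : c₁ < β') :
    ∃ φ : ℝ → E, SolOf f ψ x c₁ φ := by
  have hψc : ContinuousOn ψ (Ico 0 β') := fun t ht => (hψdiff t ht).continuousWithinAt
  have hsubIcc : Icc (0:ℝ) c₁ ⊆ Ico 0 β' := fun t ht => ⟨ht.1, lt_of_le_of_lt ht.2 hc₁β⟩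
  have hcoeT : ∀ t : ℝ, t ≤ c₁ → ((t : ℝ) : EReal) < T := fun t htc =>
    lt_of_lt_of_le (EReal.coe_lt_coe_iff.2 (by linarith)) hβ'T
  have hcoeT' : ∀ t : ℝ, 0 ≤ t → t ≤ c₁ → ((|t| : ℝ) : EReal) < T := by
    intro t h0 htc
    rw [abs_of_nonneg h0]
    exact hcoeT t htc
  obtain ⟨tm, htm, hmax⟩ := isCompact_Icc.exists_isMaxOn (nonempty_Icc.mpr hc₁0)
    (hψc.mono hsubIcc)
  set M := ψ tm with hM
  have hM0 : 0 ≤ M := (hψmem tm (hsubIcc htm)).1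
  have hMb : M < b := (hψmem tm (hsubIcc htm)).2
  have hψleM : ∀ t ∈ Icc (0:ℝ) c₁, ψ t ≤ M := fun t ht => hmax ht
  have hKg : IsCompact (Icc (0:ℝ) c₁ ×ˢ Icc (0:ℝ) M) := isCompact_Icc.prod isCompact_Icc
  have hKgsub : Icc (0:ℝ) c₁ ×ˢ Icc (0:ℝ) M ⊆
      {p : ℝ × ℝ | ((|p.1| : ℝ) : EReal) < T ∧ p.2 ∈ Ioo a b} := by
    rintro ⟨t, z⟩ ⟨ht, hz⟩
    exact ⟨hcoeT' t ht.1 ht.2, lt_of_lt_of_le ha hz.1, lt_of_le_of_lt hz.2 hMb⟩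
  obtain ⟨pm, hpm, hgmax⟩ := hKg.exists_isMaxOn
    ⟨(0, 0), ⟨⟨le_rfl, hc₁0⟩, ⟨le_rfl, hM0⟩⟩⟩ (hg_cont.mono hKgsub)
  set G := g pm.1 pm.2 with hG
  have hGbnd : ∀ t z : ℝ, 0 ≤ t → t ≤ c₁ → 0 ≤ z → z ≤ M → g t z ≤ G := by
    intro t z h1 h2 h3 h4
    exact hgmax (⟨⟨h1, h2⟩, ⟨h3, h4⟩⟩ :
      ((t, z) : ℝ × ℝ) ∈ Icc (0:ℝ) c₁ ×ˢ Icc (0:ℝ) M)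
  have hfG : ∀ (y : E) (t : ℝ), 0 ≤ t → t ≤ c₁ → ‖y‖ < b → ‖y‖ ≤ ψ t → ‖f t y‖ ≤ G := by
    intro y t h0 h1 hyb hyψ
    have h2 := hmaj t y (hcoeT' t h0 h1) hyb
    rw [abs_of_nonneg h0] at h2
    exact h2.trans (hGbnd t ‖y‖ h0 h1 (norm_nonneg _) (hyψ.trans (hψleM t ⟨h0, h1⟩)))
  have hG0 : 0 ≤ G :=
    le_trans (norm_nonneg (f 0 x)) (hfG x 0 le_rfl hc₁0 hx (by rw [hψ0]))
  set S := {d : ℝ | d ∈ Icc (0:ℝ) c₁ ∧ ∃ φ : ℝ → E, SolOf f ψ x d φ} with hSdef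
  have hsol0 : SolOf f ψ x 0 (fun _ => x) := by
    refine ⟨rfl, fun t ht => ?_⟩
    rw [Icc_self] at ht ⊢
    rcases mem_singleton_iff.mp ht with rfl
    constructor
    · rw [hasDerivWithinAt_iff_tendsto_slope]
      have hempty : (({0} : Set ℝ) \ {0}) = (∅ : Set ℝ) := by simp
      rw [hempty, nhdsWithin_empty]
      exact Filter.tendsto_bot
    · rw [hψ0]
  have hS0 : (0:ℝ) ∈ S := ⟨⟨le_rfl, hc₁0⟩, ⟨_, hsol0⟩⟩
  have hSne : S.Nonempty := ⟨0, hS0⟩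
  have hSbdd : BddAbove S := ⟨c₁, fun d hd => hd.1.2⟩
  set σ := sSup S with hσdef
  have hσ0 : 0 ≤ σ := le_csSup hSbdd hS0
  have hσc₁ : σ ≤ c₁ := csSup_le hSne fun d hd => hd.1.2
  have hσβ : σ < β' := lt_of_le_of_lt hσc₁ hc₁β
  have hdown : ∀ e, 0 ≤ e → e < σ → ∃ φ : ℝ → E, SolOf f ψ x e φ := by
    intro e he0 heσ
    rw [hσdef] at heσ
    obtain ⟨d, hd, hlt⟩ := exists_lt_of_lt_csSup hSne heσ
    obtain ⟨φ, hφ⟩ := hd.2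
    exact ⟨φ, sol_mono hφ hlt.le⟩
  clear_value M G σ
  -- Claim A : σ ∈ S
  have hσS : σ ∈ S := by
    rcases eq_or_lt_of_le hσ0 with h0 | h0
    · rw [← h0]; exact hS0
    have hex : ∀ e, 0 ≤ e ∧ e < σ → ∃ φ : ℝ → E, SolOf f ψ x ((e + σ)/2) φ := by
      intro e h
      exact hdown ((e + σ)/2) (by linarith [h.1]) (by linarith [h.2])
    set u : ℝ → E := fun e =>
      if h : 0 ≤ e ∧ e < σ then Classical.choose (hex e h) e else x with hu
    have hkey : ∀ (d : ℝ) (φ : ℝ → E), 0 ≤ d → d < σ → SolOf f ψ x d φ →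
        ∀ e ∈ Icc (0:ℝ) d, u e = φ e := by
      intro d φ hd0 hdσ hφ e he
      have he' : 0 ≤ e ∧ e < σ := ⟨he.1, lt_of_le_of_lt he.2 hdσ⟩
      have hch := Classical.choose_spec (hex e he')
      have hc0 : (0:ℝ) ≤ min ((e + σ)/2) d := le_min (by linarith [he'.1]) hd0
      have hcβ : min ((e + σ)/2) d < β' :=
        lt_of_le_of_lt (min_le_right _ _) (lt_trans hdσ hσβ)
      have h1 : SolOf f ψ x (min ((e + σ)/2) d) (Classical.choose (hex e he')) :=
        sol_mono hch (min_le_left _ _)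
      have h2 : SolOf f ψ x (min ((e + σ)/2) d) φ := sol_mono hφ (min_le_right _ _)
      have hee : e ∈ Icc (0:ℝ) (min ((e + σ)/2) d) :=
        ⟨he.1, le_min (by linarith [he'.2]) he.2⟩
      have huniq := sol_uniq T b β' f ψ x hf_lip hβ'T hψmem hc0 hcβ h1 h2 hee
      show (if h : 0 ≤ e ∧ e < σ then Classical.choose (hex e h) e else x) = φ e
      rw [dif_pos he']
      exact huniq
    have hu0 : u 0 = x := by
      have h' : 0 ≤ (0:ℝ) ∧ (0:ℝ) < σ := ⟨le_rfl, h0⟩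
      show (if h : 0 ≤ (0:ℝ) ∧ (0:ℝ) < σ then Classical.choose (hex 0 h) 0 else x) = x
      rw [dif_pos h']
      exact (Classical.choose_spec (hex 0 h')).1
    have hublock : ∀ e, (h : 0 ≤ e ∧ e < σ) →
        HasDerivWithinAt u (f e (u e)) (Icc (0:ℝ) ((e + σ)/2)) e ∧ ‖u e‖ ≤ ψ e := by
      intro e h
      have hφ := Classical.choose_spec (hex e h)
      have hd0 : (0:ℝ) ≤ (e + σ)/2 := by linarith [h.1]
      have hdσ : (e + σ)/2 < σ := by linarith [h.2]
      have heq : ∀ z ∈ Icc (0:ℝ) ((e + σ)/2), u z = Classical.choose (hex e h) z :=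
        hkey _ _ hd0 hdσ hφ
      have hein : e ∈ Icc (0:ℝ) ((e + σ)/2) := ⟨h.1, by linarith [h.2]⟩
      have hueq : u e = Classical.choose (hex e h) e := heq e hein
      constructor
      · have hder := (hφ.2 e hein).1
        have h2 := hder.congr heq hueq
        rw [hueq]
        exact h2
      · rw [hueq]
        exact (hφ.2 e hein).2
    have hulip : ∀ e e' : ℝ, 0 ≤ e → e ≤ e' → e' < σ → ‖u e' - u e‖ ≤ G * (e' - e) := by
      intro e e' he0 hee' he'σ
      have h' : 0 ≤ e' ∧ e' < σ := ⟨le_trans he0 hee', he'σ⟩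
      have hφ := Classical.choose_spec (hex e' h')
      have hd0 : (0:ℝ) ≤ (e' + σ)/2 := by linarith [h'.1]
      have hdσ : (e' + σ)/2 < σ := by linarith [h'.2]
      have hdc₁ : (e' + σ)/2 ≤ c₁ := by linarith [hσc₁]
      have heq : ∀ z ∈ Icc (0:ℝ) ((e' + σ)/2), u z = Classical.choose (hex e' h') z :=
        hkey _ _ hd0 hdσ hφ
      have hbnd : ∀ t ∈ Icc (0:ℝ) ((e' + σ)/2), ‖f t (Classical.choose (hex e' h') t)‖ ≤ G := by
        intro t ht
        refine hfG _ t ht.1 (ht.2.trans hdc₁) ?_ (hφ.2 t ht).2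
        exact lt_of_le_of_lt (hφ.2 t ht).2
          (hψmem t ⟨ht.1, by linarith [ht.2, hσβ]⟩).2
      have hein : e ∈ Icc (0:ℝ) ((e' + σ)/2) := ⟨he0, by linarith⟩
      have hein' : e' ∈ Icc (0:ℝ) ((e' + σ)/2) := ⟨h'.1, by linarith [h'.2]⟩
      have hmvt := Convex.norm_image_sub_le_of_norm_hasDerivWithin_le
        (fun t ht => (hφ.2 t ht).1) hbnd (convex_Icc _ _) hein hein'
      rw [heq e hein, heq e' hein']
      calc ‖Classical.choose (hex e' h') e' - Classical.choose (hex e' h') e‖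
          ≤ G * ‖e' - e‖ := hmvt
        _ = G * (e' - e) := by rw [Real.norm_eq_abs, abs_of_nonneg (by linarith)]
    set τ : ℕ → ℝ := fun n => σ - σ/(n+1) with hτ
    have hτeq : ∀ n : ℕ, τ n = σ - σ/((n:ℝ)+1) := fun n => by simp only [hτ]
    clear_value τ
    have hτfrac : ∀ n : ℕ, 0 < σ/((n:ℝ)+1) ∧ σ/((n:ℝ)+1) ≤ σ := by
      intro n
      constructor
      · positivity
      · apply div_le_self hσ0
        have : (0:ℝ) ≤ (n:ℝ) := Nat.cast_nonneg n
        linarith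
    have hτ0 : ∀ n, 0 ≤ τ n := fun n => by
      have h1 := hτfrac n
      rw [hτeq n]
      linarith [h1.2]
    have hτσ : ∀ n, τ n < σ := fun n => by
      have h1 := hτfrac n
      rw [hτeq n]
      linarith [h1.1]
    have hτmono : ∀ n m : ℕ, n ≤ m → τ n ≤ τ m := by
      intro n m hnm
      have hnm' : ((n:ℝ)+1) ≤ ((m:ℝ)+1) := by
        have : (n:ℝ) ≤ (m:ℝ) := Nat.cast_le.mpr hnm
        linarith
      have h1 : σ/((m:ℝ)+1) ≤ σ/((n:ℝ)+1) := by
        rw [div_le_div_iff₀ (by positivity) (by positivity)]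
        exact mul_le_mul_of_nonneg_left hnm' hσ0
      rw [hτeq n, hτeq m]
      linarith
    have hτlim : Filter.Tendsto τ Filter.atTop (nhds σ) := by
      have h1 : Filter.Tendsto (fun n : ℕ => σ/(n+1)) Filter.atTop (nhds 0) := by
        have h2 := tendsto_one_div_add_atTop_nhds_zero_nat.const_mul σ
        rw [mul_zero] at h2
        convert h2 using 2 with n
        field_simp
      have h3 := h1.const_sub σ
      rw [sub_zero] at h3
      have h4 : τ = fun n : ℕ => σ - σ/((n:ℝ)+1) := funext hτeq
      rw [h4]
      exact h3
    have hdistu : ∀ p q : ℝ, 0 ≤ p → p < σ → 0 ≤ q → q < σ →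
        dist (u p) (u q) ≤ G * |p - q| := by
      intro p q hp0 hpσ hq0 hqσ
      rcases le_total p q with h | h
      · rw [dist_comm, dist_eq_norm]
        calc ‖u q - u p‖ ≤ G * (q - p) := hulip p q hp0 h hqσ
          _ = G * |p - q| := by rw [abs_sub_comm, abs_of_nonneg (by linarith)]
      · rw [dist_eq_norm]
        calc ‖u p - u q‖ ≤ G * (p - q) := hulip q p hq0 h hpσ
          _ = G * |p - q| := by rw [abs_of_nonneg (by linarith)]
    have hcauchy : CauchySeq (fun n => u (τ n)) := by
      refine cauchySeq_of_le_tendsto_0 (fun N : ℕ => G * (σ/((N:ℝ)+1))) ?_ ?_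
      · intro n m N hn hm
        have h1 : |τ n - τ m| ≤ σ/((N:ℝ)+1) := by
          have hτn := hτmono N n hn
          have hτm := hτmono N m hm
          have h2 : τ n < σ := hτσ n
          have h3 : τ m < σ := hτσ m
          have h4 : σ - τ N = σ/((N:ℝ)+1) := by rw [hτeq N]; ring
          rw [abs_le]
          constructor <;> linarith
        calc dist (u (τ n)) (u (τ m)) ≤ G * |τ n - τ m| :=
              hdistu _ _ (hτ0 n) (hτσ n) (hτ0 m) (hτσ m)
          _ ≤ G * (σ/((N:ℝ)+1)) := mul_le_mul_of_nonneg_left h1 hG0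
      · have h2 := tendsto_one_div_add_atTop_nhds_zero_nat.const_mul (G * σ)
        rw [mul_zero] at h2
        convert h2 using 2 with n
        field_simp
    obtain ⟨L, hL⟩ := cauchySeq_tendsto_of_complete hcauchy
    have hLbnd : ∀ e, 0 ≤ e → e < σ → ‖u e - L‖ ≤ G * (σ - e) := by
      intro e he0 heσ
      have hev : ∀ᶠ n in Filter.atTop, ‖u e - u (τ n)‖ ≤ G * (τ n - e) := by
        filter_upwards [hτlim.eventually (eventually_gt_nhds heσ)] with n hn
        rw [norm_sub_rev]
        exact hulip e (τ n) he0 hn.le (hτσ n)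
      exact le_of_tendsto_of_tendsto ((tendsto_const_nhds.sub hL).norm)
        ((hτlim.sub_const e).const_mul G) hev
    have hLψ : ‖L‖ ≤ ψ σ := by
      have h1 : Filter.Tendsto (fun n => ‖u (τ n)‖) Filter.atTop (nhds ‖L‖) := hL.norm
      have h2 : Filter.Tendsto (fun n => ψ (τ n)) Filter.atTop (nhds (ψ σ)) :=
        ((hψc σ ⟨hσ0, hσβ⟩).tendsto).comp
          (tendsto_nhdsWithin_of_tendsto_nhds_of_eventually_within τ hτlim
            (Filter.Eventually.of_forall fun n => ⟨hτ0 n, lt_trans (hτσ n) hσβ⟩))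
      exact le_of_tendsto_of_tendsto' h1 h2 fun n => (hublock (τ n) ⟨hτ0 n, hτσ n⟩).2
    set Φ : ℝ → E := fun t => if t < σ then u t else L with hΦ
    have hΦu : ∀ t, t < σ → Φ t = u t := by
      intro t h
      show (if t < σ then u t else L) = u t
      exact if_pos h
    have hΦσ : Φ σ = L := by
      show (if σ < σ then u σ else L) = L
      exact if_neg (lt_irrefl σ)
    have hΦ0 : Φ 0 = x := by rw [hΦu 0 h0, hu0]
    have hΦψ : ∀ t ∈ Icc (0:ℝ) σ, ‖Φ t‖ ≤ ψ t := by
      intro t ht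
      rcases lt_or_eq_of_le ht.2 with hlt | heqσ
      · rw [hΦu t hlt]; exact (hublock t ⟨ht.1, hlt⟩).2
      · rw [heqσ, hΦσ]; exact hLψ
    have hΦb : ∀ t ∈ Icc (0:ℝ) σ, ‖Φ t‖ < b := fun t ht =>
      lt_of_le_of_lt (hΦψ t ht) (hψmem t ⟨ht.1, lt_of_le_of_lt ht.2 hσβ⟩).2
    have hΦlip : ∀ p q : ℝ, p ∈ Icc (0:ℝ) σ → q ∈ Icc (0:ℝ) σ → p ≤ q →
        ‖Φ q - Φ p‖ ≤ G * (q - p) := by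
      intro p q hp hq hpq
      rcases lt_or_eq_of_le hq.2 with hqσ | hqσ
      · rw [hΦu q hqσ, hΦu p (lt_of_le_of_lt hpq hqσ)]
        exact hulip p q hp.1 hpq hqσ
      · subst hqσ
        rcases lt_or_eq_of_le hq.2 with hpσ' | hpσ'
        · exact absurd hpσ' (lt_irrefl _)
        · rcases lt_or_eq_of_le (hp.2) with hpσ | hpσ
          · rw [hΦσ, hΦu p hpσ, norm_sub_rev]
            exact hLbnd p hp.1 hpσ
          · subst hpσ
            simp
    have hΦc : ContinuousOn Φ (Icc (0:ℝ) σ) := by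
      have hlip : LipschitzOnWith (Real.toNNReal G) Φ (Icc (0:ℝ) σ) := by
        rw [lipschitzOnWith_iff_dist_le_mul]
        intro p hp q hq
        rw [Real.coe_toNNReal _ hG0, dist_eq_norm, Real.dist_eq]
        rcases le_total q p with h | h
        · rw [abs_of_nonneg (by linarith)]
          exact hΦlip q p hq hp h
        · rw [abs_of_nonpos (by linarith), norm_sub_rev, neg_sub]
          exact hΦlip p q hp hq h
      exact hlip.continuousOn
    have hΦint : ContinuousOn (fun s => f s (Φ s)) (Icc (0:ℝ) σ) := by
      apply hf_cont.comp (continuousOn_id.prodMk hΦc)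
      intro s hs
      exact ⟨hcoeT' s hs.1 (hs.2.trans hσc₁), hΦb s hs⟩
    have hΦd_lt : ∀ t ∈ Icc (0:ℝ) σ, t < σ →
        HasDerivWithinAt Φ (f t (Φ t)) (Icc (0:ℝ) σ) t := by
      intro t ht htσ
      have hd0 : (0:ℝ) ≤ (t + σ)/2 := by linarith [ht.1]
      have hdσ : (t + σ)/2 < σ := by linarith
      have htd : t < (t + σ)/2 := by linarith
      have h1 : HasDerivWithinAt u (f t (u t)) (Icc (0:ℝ) ((t + σ)/2)) t :=
        (hublock t ⟨ht.1, htσ⟩).1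
      have heq2 : ∀ z ∈ Icc (0:ℝ) ((t + σ)/2), Φ z = u z := fun z hz =>
        hΦu z (lt_of_le_of_lt hz.2 hdσ)
      have h2 := h1.congr heq2 (heq2 t ⟨ht.1, htd.le⟩)
      have h3 : Icc (0:ℝ) ((t + σ)/2) ∈ nhdsWithin t (Icc (0:ℝ) σ) :=
        Filter.mem_of_superset (inter_mem_nhdsWithin _ (Iio_mem_nhds htd))
          (fun z hz => ⟨hz.1.1, hz.2.le⟩)
      have h4 := h2.mono_of_mem_nhdsWithin h3
      rw [heq2 t ⟨ht.1, htd.le⟩]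
      exact h4
    have hΦd : ∀ t ∈ Icc (0:ℝ) σ, HasDerivWithinAt Φ (f t (Φ t)) (Icc (0:ℝ) σ) t := by
      intro t ht
      rcases lt_or_eq_of_le ht.2 with htσ | htσ
      · exact hΦd_lt t ht htσ
      subst htσ
      rw [hasDerivWithinAt_iff_tendsto_slope]
      rw [Metric.tendsto_nhds]
      intro ε hε
      obtain ⟨δ, hδ0, hδ⟩ := Metric.continuousWithinAt_iff.mp
        (hΦint t ⟨hσ0, le_rfl⟩) (ε/2) (by linarith)
      filter_upwards [self_mem_nhdsWithin,
        mem_nhdsWithin_of_mem_nhds (Metric.ball_mem_nhds t hδ0)] with z hz hzb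
      have hz1 : z ∈ Icc (0:ℝ) t := hz.1
      have hzne : z ≠ t := hz.2
      have hzσ : z < t := lt_of_le_of_ne hz1.2 hzne
      have hzd : t - z < δ := by
        have h5 := mem_ball.mp hzb
        rw [Real.dist_eq] at h5
        have h6 : |z - t| = t - z := by
          rw [abs_of_nonpos (by linarith)]; ring
        linarith [h5]
      set v := f t (Φ t) with hv
      have hwd : ∀ s ∈ Ico z t, HasDerivWithinAt (fun s' => Φ s' - s' • v)
          (f s (Φ s) - v) (Ici s) s := by
        intro s hs
        have hs' : s ∈ Icc (0:ℝ) t := ⟨hz1.1.trans hs.1, hs.2.le⟩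
        have h1 : HasDerivWithinAt Φ (f s (Φ s)) (Ici s) s := by
          have h2 := (hΦd_lt s hs' hs.2).mono (Icc_subset_Icc_left hs'.1 : Icc s t ⊆ Icc 0 t)
          exact h2.mono_of_mem_nhdsWithin (Icc_mem_nhdsGE_of_mem ⟨le_refl s, hs.2⟩)
        have h3 : HasDerivWithinAt (fun s' : ℝ => s' • v) v (Ici s) s := by
          simpa using (hasDerivWithinAt_id s (Ici s)).smul_const v
        exact h1.sub h3
      have hwb : ∀ s ∈ Ico z t, ‖f s (Φ s) - v‖ ≤ ε/2 := by
        intro s hs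
        have hs' : s ∈ Icc (0:ℝ) t := ⟨hz1.1.trans hs.1, hs.2.le⟩
        have hds : dist s t < δ := by
          rw [Real.dist_eq, abs_of_nonpos (by linarith [hs.2])]
          have := hs.1
          linarith [hzd]
        have h7 := hδ hs' hds
        rw [dist_eq_norm] at h7
        exact h7.le
      have hwc : ContinuousOn (fun s' => Φ s' - s' • v) (Icc z t) :=
        (hΦc.mono (Icc_subset_Icc_left hz1.1)).sub
          ((continuous_id.smul continuous_const).continuousOn)
      have hmvt := norm_image_sub_le_of_norm_deriv_right_le_segment hwc hwd hwb t
        ⟨hzσ.le, le_refl t⟩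
      have hslope : slope Φ t z = (z - t)⁻¹ • (Φ z - Φ t) := slope_def_module Φ t z
      rw [hslope, dist_eq_norm]
      have hzt' : z - t ≠ 0 := sub_ne_zero.mpr hzne
      have hσz : (0:ℝ) < t - z := by linarith
      have hrw : (z - t)⁻¹ • (Φ z - Φ t) - v
          = (z - t)⁻¹ • ((Φ z - z • v) - (Φ t - t • v)) := by
        have h8 : (Φ z - z • v) - (Φ t - t • v) = (Φ z - Φ t) - (z - t) • v := by
          rw [sub_smul]; abel
        rw [h8, smul_sub (z - t)⁻¹ (Φ z - Φ t) ((z - t) • v), inv_smul_smul₀ hzt']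
      rw [hrw, norm_smul]
      have h6 : ‖(z - t)⁻¹‖ = (t - z)⁻¹ := by
        rw [Real.norm_eq_abs, abs_inv, abs_of_nonpos (by linarith : z - t ≤ 0), neg_sub]
      have h7 : ‖(Φ z - z • v) - (Φ t - t • v)‖ ≤ ε/2 * (t - z) := by
        rw [norm_sub_rev]
        exact hmvt
      calc ‖(z - t)⁻¹‖ * ‖(Φ z - z • v) - (Φ t - t • v)‖
          ≤ (t - z)⁻¹ * (ε/2 * (t - z)) := by
            rw [h6]
            exact mul_le_mul_of_nonneg_left h7 (by positivity)
        _ = ε/2 := by field_simp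
        _ < ε := by linarith
    exact ⟨⟨hσ0, hσc₁⟩, Φ, hΦ0, fun t ht => ⟨hΦd t ht, hΦψ t ht⟩⟩
  -- Claim B: σ = c₁
  rcases lt_or_eq_of_le hσc₁ with hlt | heq
  · exfalso
    obtain ⟨_, φ, hφ⟩ := hσS
    have hσIcc : σ ∈ Icc (0:ℝ) σ := ⟨hσ0, le_refl σ⟩
    have hφσψ : ‖φ σ‖ ≤ ψ σ := (hφ.2 σ hσIcc).2
    have hφσb : ‖φ σ‖ < b := lt_of_le_of_lt hφσψ (hψmem σ ⟨hσ0, hσβ⟩).2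
    have hσT : ((|σ| : ℝ) : EReal) < T := hcoeT' σ hσ0 hσc₁
    obtain ⟨ε₀, hε₀, φ₂, hφ₂0, hφ₂⟩ := local_sol T b f hf_cont hf_lip σ (φ σ) hσT hφσb
    set ε := min ε₀ (c₁ - σ) with hεdef
    have hε0 : 0 < ε := lt_min hε₀ (by linarith)
    have hεc : σ + ε ≤ c₁ := by
      have := min_le_right ε₀ (c₁ - σ)
      simp only [hεdef]
      linarith
    have hεε₀ : ε ≤ ε₀ := min_le_left _ _
    clear_value ε
    have hsubε : Icc σ (σ + ε) ⊆ Icc σ (σ + ε₀) :=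
      Icc_subset_Icc_right (by linarith)
    set Φ : ℝ → E := fun t => if t ≤ σ then φ t else φ₂ t with hΦdef
    have hΦφ : ∀ t, t ≤ σ → Φ t = φ t := by
      intro t ht
      show (if t ≤ σ then φ t else φ₂ t) = φ t
      exact if_pos ht
    have hΦφ₂ : ∀ t ∈ Icc σ (σ + ε), Φ t = φ₂ t := by
      intro t ht
      rcases lt_or_eq_of_le ht.1 with h | h
      · show (if t ≤ σ then φ t else φ₂ t) = φ₂ t
        exact if_neg (not_le.mpr h)
      · rw [← h, hΦφ σ (le_refl σ), hφ₂0]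
    have hΦ0 : Φ 0 = x := by rw [hΦφ 0 hσ0, hφ.1]
    have hΦd : ∀ t ∈ Icc (0:ℝ) (σ + ε),
        HasDerivWithinAt Φ (f t (Φ t)) (Icc (0:ℝ) (σ + ε)) t := by
      intro t ht
      rcases lt_trichotomy t σ with htσ | htσ | htσ
      · have ht' : t ∈ Icc (0:ℝ) σ := ⟨ht.1, htσ.le⟩
        have h1 := (hφ.2 t ht').1
        have h2 := h1.congr (fun z hz => hΦφ z hz.2) (hΦφ t htσ.le)
        have h3 : Icc (0:ℝ) σ ∈ nhdsWithin t (Icc (0:ℝ) (σ + ε)) :=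
          Filter.mem_of_superset (inter_mem_nhdsWithin _ (Iio_mem_nhds htσ))
            (fun z hz => ⟨hz.1.1, hz.2.le⟩)
        have h4 := h2.mono_of_mem_nhdsWithin h3
        rw [hΦφ t htσ.le]
        exact h4
      · subst htσ
        have hL : HasDerivWithinAt Φ (f t (φ t)) (Icc (0:ℝ) t) t :=
          ((hφ.2 t ⟨hσ0, le_refl t⟩).1).congr (fun z hz => hΦφ z hz.2) (hΦφ t (le_refl t))
        have hR : HasDerivWithinAt Φ (f t (φ t)) (Icc t (t + ε)) t := by
          have h1 := ((hφ₂ t ⟨le_refl t, by linarith⟩).2).mono hsubε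
          have h2 := h1.congr (fun z hz => hΦφ₂ z hz) (hΦφ₂ t ⟨le_refl t, by linarith⟩)
          rwa [hφ₂0] at h2
        have hun := hL.union hR
        rw [Icc_union_Icc_eq_Icc hσ0 (by linarith : t ≤ t + ε)] at hun
        rw [hΦφ t (le_refl t)]
        exact hun
      · have ht' : t ∈ Icc σ (σ + ε) := ⟨htσ.le, ht.2⟩
        have h1 := ((hφ₂ t (hsubε ht')).2).mono hsubε
        have h2 := h1.congr (fun z hz => hΦφ₂ z hz) (hΦφ₂ t ht')
        have h3 : Icc σ (σ + ε) ∈ nhdsWithin t (Icc (0:ℝ) (σ + ε)) :=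
          Filter.mem_of_superset (inter_mem_nhdsWithin _ (Ioi_mem_nhds htσ))
            (fun z hz => ⟨le_of_lt hz.2, hz.1.2⟩)
        have h4 := h2.mono_of_mem_nhdsWithin h3
        rw [hΦφ₂ t ht']
        exact h4
    have hΦb : ∀ t ∈ Icc (0:ℝ) (σ + ε), ‖Φ t‖ < b := by
      intro t ht
      rcases le_or_gt t σ with h | h
      · rw [hΦφ t h]
        exact lt_of_le_of_lt ((hφ.2 t ⟨ht.1, h⟩).2)
          (hψmem t ⟨ht.1, lt_of_le_of_lt h hσβ⟩).2
      · rw [hΦφ₂ t ⟨h.le, ht.2⟩]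
        exact (hφ₂ t (hsubε ⟨h.le, ht.2⟩)).1
    have hcomp := comparison_psi T a b ha f g hg_lip hg_mono hmaj x β' hβ'T ψ hψ0
      hψmem hψdiff Φ (σ + ε) (by linarith) (by linarith) hΦ0 hΦd hΦb
    have hnew : σ + ε ∈ S :=
      ⟨⟨by linarith, hεc⟩, Φ, hΦ0, fun t ht => ⟨hΦd t ht, hcomp t ht⟩⟩
    have hle := le_csSup hSbdd hnew
    rw [← hσdef] at hle
    linarith
  · exact heq ▸ hσS.2


end AuxiliaryLemmas

/-- Mérigot's comparison theorem, right-sided version with initial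
datum `x`:  `f` satisfies hypothesis (LC) on `Ω = {(t,y) : |t| < T, ‖y‖ < b}` and `g`
satisfies hypothesis (MJ) w.r.t. `f` on `Ω̃ = (-T,T)×(a,b)`.  If `ψ` solves
`ψ' = g(t,ψ)`, `ψ(0) = ‖x‖` on `[0,β̃)` with values in `[0,b)`, then there is a
solution `φ` of `y' = f(t,y)`, `y(0) = x` on the whole of `[0,β̃)`, with
`‖φ(t)‖ ≤ ψ(t)` there. -/
theorem lifetime_comparison_right_sided
    {E : Type*} [NormedAddCommGroup E] [NormedSpace ℝ E] [CompleteSpace E]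
    (T : EReal) (hT : 0 < T) (a b : ℝ) (ha : a < 0) (hb : 0 < b)
    (f : ℝ → E → E) (g : ℝ → ℝ → ℝ)
    -- hypothesis (LC) for f :
    (hf_cont : ContinuousOn (fun p : ℝ × E => f p.1 p.2)
      {p : ℝ × E | ((|p.1| : ℝ) : EReal) < T ∧ ‖p.2‖ < b})
    (hf_lip : ∀ K : Set (ℝ × E), IsCompact K →
      K ⊆ {p : ℝ × E | ((|p.1| : ℝ) : EReal) < T ∧ ‖p.2‖ < b} →
      ∃ C : ℝ, ∀ p ∈ K, ∀ q ∈ K, p.1 = q.1 →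
        ‖f p.1 p.2 - f q.1 q.2‖ ≤ C * ‖p.2 - q.2‖)
    -- hypothesis (MJ) for g w.r.t. f :
    (hg_cont : ContinuousOn (fun p : ℝ × ℝ => g p.1 p.2)
      {p : ℝ × ℝ | ((|p.1| : ℝ) : EReal) < T ∧ p.2 ∈ Ioo a b})
    (hg_lip : ∀ K : Set (ℝ × ℝ), IsCompact K →
      K ⊆ {p : ℝ × ℝ | ((|p.1| : ℝ) : EReal) < T ∧ p.2 ∈ Ioo a b} →
      ∃ C : ℝ, ∀ p ∈ K, ∀ q ∈ K, p.1 = q.1 →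
        |g p.1 p.2 - g q.1 q.2| ≤ C * |p.2 - q.2|)
    (hg_mono : ∀ t : ℝ, 0 ≤ t → ((t : ℝ) : EReal) < T →
      ∀ z z' : ℝ, 0 ≤ z → z ≤ z' → z' < b → g t z ≤ g t z')
    (hmaj : ∀ t : ℝ, ∀ y : E, ((|t| : ℝ) : EReal) < T → ‖y‖ < b →
      ‖f t y‖ ≤ g |t| ‖y‖)
    -- the initial datum and the majorizing solution ψ on [0, β̃) :
    (x : E) (hx : ‖x‖ < b)
    (β' : ℝ) (hβ'0 : 0 < β') (hβ'T : (β' : EReal) ≤ T)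
    (ψ : ℝ → ℝ) (hψ0 : ψ 0 = ‖x‖)
    (hψmem : ∀ t ∈ Ico (0 : ℝ) β', ψ t ∈ Ico (0 : ℝ) b)
    (hψdiff : ∀ t ∈ Ico (0 : ℝ) β',
      HasDerivWithinAt ψ (g t (ψ t)) (Ico (0 : ℝ) β') t) :
    ∃ φ : ℝ → E, φ 0 = x ∧
      ∀ t ∈ Ico (0 : ℝ) β', ‖φ t‖ < b ∧
        HasDerivWithinAt φ (f t (φ t)) (Ico (0 : ℝ) β') t ∧
        ‖φ t‖ ≤ ψ t := by
  have main : ∀ c : ℝ, 0 ≤ c → c < β' → ∃ φ : ℝ → E, SolOf f ψ x c φ :=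
    fun c h1 h2 => exists_sol_up_to T a b ha f g hf_cont hf_lip hg_cont hg_lip
      hg_mono hmaj x hx β' hβ'T ψ hψ0 hψmem hψdiff c h1 h2
  have hex : ∀ t : ℝ, 0 ≤ t ∧ t < β' → ∃ φ : ℝ → E, SolOf f ψ x ((t + β')/2) φ := by
    intro t h
    exact main _ (by linarith [h.1]) (by linarith [h.2])
  set Φ : ℝ → E := fun t =>
    if h : 0 ≤ t ∧ t < β' then Classical.choose (hex t h) t else x with hΦ
  have hkey : ∀ (d : ℝ) (φ : ℝ → E), 0 ≤ d → d < β' → SolOf f ψ x d φ →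
      ∀ e ∈ Icc (0:ℝ) d, Φ e = φ e := by
    intro d φ hd0 hdβ hφ e he
    have he' : 0 ≤ e ∧ e < β' := ⟨he.1, lt_of_le_of_lt he.2 hdβ⟩
    have hch := Classical.choose_spec (hex e he')
    have hc0 : (0:ℝ) ≤ min ((e + β')/2) d := le_min (by linarith [he'.1]) hd0
    have hcβ : min ((e + β')/2) d < β' := lt_of_le_of_lt (min_le_right _ _) hdβ
    have h1 : SolOf f ψ x (min ((e + β')/2) d) (Classical.choose (hex e he')) :=
      sol_mono hch (min_le_left _ _)
    have h2 : SolOf f ψ x (min ((e + β')/2) d) φ := sol_mono hφ (min_le_right _ _)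
    have hee : e ∈ Icc (0:ℝ) (min ((e + β')/2) d) :=
      ⟨he.1, le_min (by linarith [he'.2]) he.2⟩
    have huniq := sol_uniq T b β' f ψ x hf_lip hβ'T hψmem hc0 hcβ h1 h2 hee
    show (if h : 0 ≤ e ∧ e < β' then Classical.choose (hex e h) e else x) = φ e
    rw [dif_pos he']
    exact huniq
  have hΦ0 : Φ 0 = x := by
    have h' : 0 ≤ (0:ℝ) ∧ (0:ℝ) < β' := ⟨le_rfl, hβ'0⟩
    show (if h : 0 ≤ (0:ℝ) ∧ (0:ℝ) < β' then Classical.choose (hex 0 h) 0 else x) = x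
    rw [dif_pos h']
    exact (Classical.choose_spec (hex 0 h')).1
  refine ⟨Φ, hΦ0, fun t ht => ?_⟩
  have h' : 0 ≤ t ∧ t < β' := ⟨ht.1, ht.2⟩
  have hφ := Classical.choose_spec (hex t h')
  have hd0 : (0:ℝ) ≤ (t + β')/2 := by linarith [h'.1]
  have hdβ : (t + β')/2 < β' := by linarith [h'.2]
  have htd : t < (t + β')/2 := by linarith [h'.2]
  have heq : ∀ z ∈ Icc (0:ℝ) ((t + β')/2), Φ z = Classical.choose (hex t h') z :=
    hkey _ _ hd0 hdβ hφ
  have htm : t ∈ Icc (0:ℝ) ((t + β')/2) := ⟨ht.1, htd.le⟩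
  have hΦt : Φ t = Classical.choose (hex t h') t := heq t htm
  have hψb : ‖Φ t‖ ≤ ψ t := by rw [hΦt]; exact (hφ.2 t htm).2
  refine ⟨lt_of_le_of_lt hψb (hψmem t ht).2, ?_, hψb⟩
  have h1 := (hφ.2 t htm).1
  have h2 := h1.congr heq hΦt
  have h3 : Icc (0:ℝ) ((t + β')/2) ∈ nhdsWithin t (Ico (0:ℝ) β') :=
    Filter.mem_of_superset (inter_mem_nhdsWithin _ (Iio_mem_nhds htd))
      (fun z hz => ⟨hz.1.1, hz.2.le⟩)
  have h4 := h2.mono_of_mem_nhdsWithin h3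
  rw [hΦt]
  exact h4
end

section
/- Let 0 ≤ ρ < 2π and γ > 0, and set β̃ := (1/γ)·∫_ρ^{2π} du/G(u), where G(u) = 2 + (u/2)(1 − cot(u/2)) for u ∈ (−2π,2π) (extended by G(0) = 1). Then G is continuous and strictly positive on [0,2π), 1/G is bounded on [0,2π) (so β̃ < ∞), and there exists a strictly increasing differentiable function ψ : [0,β̃) → ℝ with ψ(0) = ρ, ψ(t) ∈ [ρ,2π) and ψ'(t) = γ·G(ψ(t)) for all t ∈ [0,β̃), and ψ(t) → 2π as t → β̃⁻. (Thus β̃ is the supremum of the maximal interval of existence of the solution of z' = γG(z), z(0) = ρ, with values in [0,2π).) -/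
open Real Set Filter

/-- `G(u) = 2 + (u/2)(1 - cot(u/2))` for `u ≠ 0`, extended by `G(0) = 1`. -/
noncomputable def Gcot (u : ℝ) : ℝ :=
  if u = 0 then 1 else 2 + u / 2 * (1 - Real.cot (u / 2))

open MeasureTheory intervalIntegral Topology


lemma mul_cos_le_sin' {x : ℝ} (h1 : 0 < x) (h2 : x < π) : x * Real.cos x ≤ Real.sin x := by
  rcases lt_or_ge x (π / 2) with h | h
  · have hc : 0 < Real.cos x := Real.cos_pos_of_mem_Ioo ⟨by linarith [Real.pi_pos], h⟩
    have ht := Real.lt_tan h1 h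
    have := Real.tan_mul_cos hc.ne'
    nlinarith
  · have hc : Real.cos x ≤ 0 :=
      Real.cos_nonpos_of_pi_div_two_le_of_le h (by linarith [Real.pi_pos])
    have hs : 0 ≤ Real.sin x := Real.sin_nonneg_of_nonneg_of_le_pi h1.le h2.le
    nlinarith

lemma mul_cot_le_one' {x : ℝ} (h1 : -(π / 2) < x) (h2 : x < π) : x * Real.cot x ≤ 1 := by
  rcases lt_trichotomy x 0 with h | h | h
  · have key := mul_cos_le_sin' (x := -x) (by linarith) (by linarith [Real.pi_pos])
    rw [Real.cos_neg, Real.sin_neg] at key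
    have hs : Real.sin x < 0 := Real.sin_neg_of_neg_of_neg_pi_lt h (by linarith [Real.pi_pos])
    rw [Real.cot_eq_cos_div_sin, mul_div_assoc', div_le_iff_of_neg hs]
    linarith
  · simp [h]
  · have key := mul_cos_le_sin' h h2
    have hs : 0 < Real.sin x := Real.sin_pos_of_pos_of_lt_pi h h2
    rw [Real.cot_eq_cos_div_sin, mul_div_assoc', div_le_one hs]
    linarith

lemma one_le_Gcot {u : ℝ} (h1 : 0 ≤ u) (h2 : u ≤ 2 * π) : 1 ≤ Gcot u := by
  rcases eq_or_lt_of_le h1 with h | h1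
  · simp [Gcot, ← h]
  rcases eq_or_lt_of_le h2 with h | h2
  · have hu : u ≠ 0 := h1.ne'
    have : u / 2 = π := by rw [h]; ring
    rw [Gcot, if_neg hu, this, Real.cot_eq_cos_div_sin, Real.sin_pi, div_zero]
    nlinarith [Real.pi_pos]
  · have key := mul_cot_le_one' (x := u / 2) (by nlinarith [Real.pi_pos]) (by linarith)
    rw [Gcot, if_neg h1.ne']
    nlinarith

lemma quarter_le_Gcot {u : ℝ} (h1 : -(3/2) ≤ u) (h2 : u ≤ 2 * π) : 1/4 ≤ Gcot u := by
  rcases le_or_gt 0 u with h | h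
  · linarith [one_le_Gcot h h2]
  · have key := mul_cot_le_one' (x := u / 2) (by nlinarith [Real.pi_gt_three]) (by nlinarith [Real.pi_pos])
    rw [Gcot, if_neg h.ne]
    nlinarith

lemma continuousAt_Gcot {u : ℝ} (h1 : -π < u) (h2 : u < 2 * π) : ContinuousAt Gcot u := by
  rcases eq_or_ne u 0 with rfl | hu
  · rw [← continuousWithinAt_compl_self]
    have hsin : Tendsto (fun y : ℝ => Real.sin y / y) (𝓝[≠] 0) (𝓝 1) := by
      have := (Real.hasDerivAt_sin 0)
      rw [hasDerivAt_iff_tendsto_slope] at this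
      simp only [Real.cos_zero] at this
      refine this.congr fun y => ?_
      simp [slope_def_field]
    have hinv : Tendsto (fun y : ℝ => y / Real.sin y) (𝓝[≠] 0) (𝓝 1) := by
      have := hsin.inv₀ one_ne_zero
      simp only [inv_one] at this
      refine this.congr fun y => ?_
      rw [inv_div]
    have hcos : Tendsto (fun y : ℝ => Real.cos y) (𝓝[≠] 0) (𝓝 1) := by
      simpa using (Real.continuous_cos.tendsto 0).mono_left nhdsWithin_le_nhds
    have hycot : Tendsto (fun y : ℝ => y * Real.cot y) (𝓝[≠] 0) (𝓝 1) := by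
      have := hinv.mul hcos
      rw [mul_one] at this
      refine this.congr fun y => ?_
      rw [Real.cot_eq_cos_div_sin]; ring
    have hhalf : Tendsto (fun v : ℝ => v / 2) (𝓝[≠] (0:ℝ)) (𝓝[≠] (0:ℝ)) := by
      apply tendsto_nhdsWithin_of_tendsto_nhds_of_eventually_within
      · simpa using (continuous_id.div_const 2).tendsto (0:ℝ) |>.mono_left nhdsWithin_le_nhds
      · filter_upwards [self_mem_nhdsWithin] with v hv
        simpa [Set.mem_compl_singleton_iff] using
          div_ne_zero (Set.mem_compl_singleton_iff.mp hv) (two_ne_zero (α := ℝ))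
    have hlim : Tendsto (fun v : ℝ => 2 + v / 2 * (1 - Real.cot (v / 2))) (𝓝[≠] 0) (𝓝 1) := by
      have h0 : Tendsto (fun v : ℝ => v / 2) (𝓝[≠] (0:ℝ)) (𝓝 (0:ℝ)) :=
        hhalf.mono_right nhdsWithin_le_nhds
      have key := (tendsto_const_nhds (x := (2:ℝ)) (f := 𝓝[≠] (0:ℝ))).add
        (h0.sub (hycot.comp hhalf))
      have he : (2:ℝ) + ((0:ℝ) - 1) = 1 := by norm_num
      rw [he] at key
      refine key.congr fun v => ?_
      simp only [Function.comp_apply]; ring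
    have : Gcot 0 = 1 := by simp [Gcot]
    rw [ContinuousWithinAt, this]
    refine hlim.congr' ?_
    filter_upwards [self_mem_nhdsWithin] with v hv
    rw [Gcot, if_neg (Set.mem_compl_singleton_iff.mp hv)]
  · have hs : Real.sin (u / 2) ≠ 0 := by
      rcases lt_or_gt_of_ne hu with h | h
      · exact (Real.sin_neg_of_neg_of_neg_pi_lt (by linarith) (by linarith)).ne
      · exact (Real.sin_pos_of_pos_of_lt_pi (by linarith) (by linarith)).ne'
    have hcont : ContinuousAt (fun v : ℝ => 2 + v / 2 * (1 - Real.cos (v / 2) / Real.sin (v / 2))) u := by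
      have hc2 : ContinuousAt (fun v : ℝ => v / 2) u := continuousAt_id.div_const 2
      exact continuousAt_const.add (hc2.mul (continuousAt_const.sub
        (((Real.continuous_cos.continuousAt).comp hc2).div
          ((Real.continuous_sin.continuousAt).comp hc2) hs)))
    refine hcont.congr ?_
    filter_upwards [isOpen_compl_singleton.mem_nhds (by simpa using hu)] with v hv
    rw [Gcot, if_neg (Set.mem_compl_singleton_iff.mp hv), Real.cot_eq_cos_div_sin]

lemma measurable_Gcot : Measurable Gcot := by
  unfold Gcot
  simp only [Real.cot_eq_cos_div_sin]
  have hms : MeasurableSet {u : ℝ | u = 0} := by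
    simpa [Set.setOf_eq_eq_singleton] using (MeasurableSet.singleton (0:ℝ))
  exact Measurable.ite hms measurable_const (by fun_prop)


lemma Gcot_pos' {u : ℝ} (h1 : -(3/2) ≤ u) (h2 : u ≤ 2 * π) : 0 < Gcot u := by
  linarith [quarter_le_Gcot h1 h2]

lemma intInt_Gcot {a b : ℝ} (ha : -(3/2) ≤ a) (hab : a ≤ b) (hb : b ≤ 2 * π) :
    IntervalIntegrable (fun u => (Gcot u)⁻¹) MeasureTheory.volume a b := by
  rw [intervalIntegrable_iff, uIoc_of_le hab]
  apply MeasureTheory.Integrable.mono' (g := fun _ => (4:ℝ))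
    (MeasureTheory.integrableOn_const measure_Ioc_lt_top.ne)
  · exact (measurable_Gcot.inv).aestronglyMeasurable
  · rw [MeasureTheory.ae_restrict_iff' measurableSet_Ioc]
    filter_upwards with x hx
    have h1 : 1/4 ≤ Gcot x := quarter_le_Gcot (by linarith [hx.1]) (le_trans hx.2 hb)
    have h0 : 0 < Gcot x := by linarith
    rw [Real.norm_eq_abs, abs_of_nonneg (inv_nonneg.2 h0.le)]
    calc (Gcot x)⁻¹ ≤ (1/4:ℝ)⁻¹ := by
          apply inv_anti₀ (by norm_num) h1
      _ = 4 := by norm_num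

/-- for `0 ≤ ρ < 2π` and `γ > 0`, with
`β̃ = (1/γ)·∫_ρ^{2π} du/G(u)`: the function `G` is continuous and strictly positive on
`[0,2π)`, `1/G` is bounded there (so `β̃ < ∞`), and the solution `ψ` of the autonomous
problem `ψ' = γ·G(ψ)`, `ψ(0) = ρ` exists on `[0,β̃)`, is strictly increasing, takes
values in `[ρ,2π)`, and tends to `2π` as `t → β̃⁻`. -/
theorem autonomous_solution_exists_blowup
    (ρ γ : ℝ) (hρ0 : 0 ≤ ρ) (hρ : ρ < 2 * π) (hγ : 0 < γ)
    (β : ℝ) (hβ : β = γ⁻¹ * ∫ u in ρ..(2 * π), (Gcot u)⁻¹) :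
    ContinuousOn Gcot (Ico (0 : ℝ) (2 * π)) ∧
    (∀ u ∈ Ico (0 : ℝ) (2 * π), 0 < Gcot u) ∧
    (∃ M : ℝ, ∀ u ∈ Ico (0 : ℝ) (2 * π), (Gcot u)⁻¹ ≤ M) ∧
    ∃ ψ : ℝ → ℝ,
      StrictMonoOn ψ (Ico (0 : ℝ) β) ∧
      ψ 0 = ρ ∧
      (∀ t ∈ Ico (0 : ℝ) β, ψ t ∈ Ico ρ (2 * π) ∧
        HasDerivWithinAt ψ (γ * Gcot (ψ t)) (Ico (0 : ℝ) β) t) ∧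
      Tendsto ψ (nhdsWithin β (Iio β)) (nhds (2 * π)) := by
  have hπ := Real.pi_pos
  have hπ3 := Real.pi_gt_three
  have hγ' : (0:ℝ) < γ⁻¹ := inv_pos.2 hγ
  set g : ℝ → ℝ := fun u => (Gcot u)⁻¹ with hgdef
  set A : ℝ := ρ - 3/2 with hA
  clear_value A
  have hA1 : -(3/2) ≤ A := by rw [hA]; linarith
  set F : ℝ → ℝ := fun x => γ⁻¹ * ∫ u in ρ..x, g u with hFdef
  have hInt : ∀ x y, A ≤ x → x ≤ y → y ≤ 2*π → IntervalIntegrable g volume x y :=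
    fun x y hx hxy hy => intInt_Gcot (le_trans hA1 hx) hxy hy
  have hIntρ : ∀ x, A ≤ x → x ≤ 2*π → IntervalIntegrable g volume ρ x := by
    intro x hx h2
    rcases le_total ρ x with h | h
    · exact hInt ρ x (by rw [hA]; linarith) h h2
    · exact (hInt x ρ hx h hρ.le).symm
  have hgpos : ∀ u, A ≤ u → u ≤ 2*π → 0 < g u := fun u h1 h2 =>
    inv_pos.2 (Gcot_pos' (le_trans hA1 h1) h2)
  have hFlt : ∀ x y, A ≤ x → x < y → y ≤ 2*π → F x < F y := by
    intro x y hx hxy hy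
    have hpos : 0 < ∫ u in x..y, g u :=
      intervalIntegral_pos_of_pos_on (hInt x y hx hxy.le hy)
        (fun u hu => hgpos u (by linarith [hu.1]) (by linarith [hu.2])) hxy
    have hsub : F y - F x = γ⁻¹ * ∫ u in x..y, g u := by
      simp only [hFdef]
      rw [← mul_sub,
        integral_interval_sub_left (hIntρ y (by linarith) hy) (hIntρ x hx (by linarith))]
    nlinarith
  have hFle : ∀ x y, A ≤ x → x ≤ y → y ≤ 2*π → F x ≤ F y := by
    intro x y hx hxy hy
    rcases eq_or_lt_of_le hxy with rfl | h
    · exact le_rfl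
    · exact (hFlt x y hx h hy).le
  have hFρ : F ρ = 0 := by simp [hFdef]
  have hβF : β = F (2*π) := hβ
  have hβpos : 0 < β := by
    have h := hFlt ρ (2*π) (by rw [hA]; linarith) hρ le_rfl
    rw [hFρ] at h; rw [hβF]; exact h
  have hFltβ : ∀ x, A ≤ x → x < 2*π → F x < β := by
    intro x hx h2; rw [hβF]; exact hFlt x (2*π) hx h2 le_rfl
  have hFderiv : ∀ x, A < x → x < 2*π → HasDerivAt F (γ⁻¹ * g x) x := by
    intro x hx h2
    have hcont : ContinuousAt g x := by
      have hc := continuousAt_Gcot (u := x) (by linarith) h2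
      exact hc.inv₀ (Gcot_pos' (by linarith) h2.le).ne'
    have hmeas : StronglyMeasurableAtFilter g (𝓝 x) volume :=
      (measurable_Gcot.inv).stronglyMeasurable.stronglyMeasurableAtFilter
    have hd := integral_hasDerivAt_right (hIntρ x hx.le h2.le) hmeas hcont
    exact hd.const_mul γ⁻¹
  have hFcont : ∀ x, A < x → x < 2*π → ContinuousAt F x := fun x h1 h2 =>
    (hFderiv x h1 h2).continuousAt
  set a : ℝ := ρ - 1 with ha
  clear_value a
  have hAa : A < a := by rw [hA, ha]; linarith
  have haρ : a < ρ := by rw [ha]; linarith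
  have hbound : ∀ c, ρ ≤ c → c ≤ 2*π → β - F c ≤ γ⁻¹ * (2*π - c) := by
    intro c h1 h2
    have hsub : β - F c = γ⁻¹ * ∫ u in c..(2*π), g u := by
      rw [hβF]
      simp only [hFdef]
      rw [← mul_sub,
        integral_interval_sub_left (hIntρ (2*π) (by linarith) le_rfl)
          (hIntρ c (by linarith) h2)]
    rw [hsub]
    have hmono : (∫ u in c..(2*π), g u) ≤ ∫ u in c..(2*π), (1:ℝ) := by
      apply integral_mono_on h2 (hInt c (2*π) (by linarith) h2 le_rfl)
        intervalIntegrable_const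
      intro x hx
      have h1x : 1 ≤ Gcot x := one_le_Gcot (by linarith [hx.1]) hx.2
      have h2x := inv_anti₀ one_pos h1x
      simpa using h2x
    calc γ⁻¹ * ∫ u in c..(2*π), g u ≤ γ⁻¹ * ∫ u in c..(2*π), (1:ℝ) :=
          mul_le_mul_of_nonneg_left hmono hγ'.le
      _ = γ⁻¹ * (2*π - c) := by rw [intervalIntegral.integral_const, smul_eq_mul, mul_one]
  have hsurj : ∀ t, F a ≤ t → t < β → ∃ x, x ∈ Ico a (2*π) ∧ F x = t := by
    intro t ht1 ht2
    set c : ℝ := max ρ (2*π - γ*(β - t)/2) with hc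
    have hcρ : ρ ≤ c := le_max_left _ _
    have hc2 : c < 2*π := by
      apply max_lt hρ; nlinarith
    have hcF : t < F c := by
      have h1 := hbound c hcρ hc2.le
      have h2 : 2*π - c ≤ γ*(β - t)/2 := by
        have h3 := le_max_right ρ (2*π - γ*(β - t)/2)
        rw [← hc] at h3; linarith
      have h4 : γ⁻¹ * (γ*(β - t)/2) = (β - t)/2 := by field_simp
      nlinarith [mul_le_mul_of_nonneg_left h2 hγ'.le]
    have hcont : ContinuousOn F (Icc a c) := fun x hx =>
      (hFcont x (lt_of_lt_of_le hAa hx.1) (lt_of_le_of_lt hx.2 hc2)).continuousWithinAt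
    have hac : a ≤ c := by linarith
    obtain ⟨x, hx, hfx⟩ := intermediate_value_Icc hac hcont ⟨ht1, hcF.le⟩
    exact ⟨x, ⟨hx.1, lt_of_le_of_lt hx.2 hc2⟩, hfx⟩
  set s : Set ℝ := Ico a (2*π) with hs
  have hFmono : StrictMonoOn F s := fun x hx y hy hxy =>
    hFlt x y (hAa.le.trans hx.1) hxy hy.2.le
  set ψ : ℝ → ℝ := Function.invFunOn F s with hψdef
  have hψspec : ∀ t, F a ≤ t → t < β → ψ t ∈ s ∧ F (ψ t) = t := by
    intro t h1 h2
    obtain ⟨x, hxs, hfx⟩ := hsurj t h1 h2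
    have hex : ∃ x ∈ s, F x = t := ⟨x, hxs, hfx⟩
    exact ⟨Function.invFunOn_mem hex, Function.invFunOn_eq hex⟩
  have hψF : ∀ x ∈ s, ψ (F x) = x := fun x hx => hFmono.injOn.leftInvOn_invFunOn hx
  have hFa0 : F a < 0 := by
    rw [← hFρ]; exact hFlt a ρ hAa.le haρ hρ.le
  have hψρle : ∀ t, 0 ≤ t → t < β → ρ ≤ ψ t ∧ ψ t < 2*π := by
    intro t h1 h2
    obtain ⟨hmem, hFt⟩ := hψspec t (by linarith) h2
    refine ⟨?_, hmem.2⟩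
    by_contra h
    push_neg at h
    have hlt := hFmono hmem ⟨haρ.le, hρ⟩ h
    rw [hFt, hFρ] at hlt; linarith
  have hψmono : ∀ t1 t2, F a ≤ t1 → t1 < t2 → t2 < β → ψ t1 < ψ t2 := by
    intro t1 t2 h1 h12 h2
    obtain ⟨hm1, hf1⟩ := hψspec t1 h1 (h12.trans h2)
    obtain ⟨hm2, hf2⟩ := hψspec t2 (by linarith) h2
    have hlt : F (ψ t1) < F (ψ t2) := by rw [hf1, hf2]; exact h12
    exact (hFmono.lt_iff_lt hm1 hm2).1 hlt
  have hmain : ∀ t, 0 ≤ t → t < β → HasDerivAt ψ (γ * Gcot (ψ t)) t := by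
    intro t h0 h2
    obtain ⟨hmem, hFt⟩ := hψspec t (by linarith) h2
    obtain ⟨hρψ, hψ2π⟩ := hψρle t h0 h2
    have hJ : Ioo (F a) β ∈ 𝓝 t := isOpen_Ioo.mem_nhds ⟨by linarith, h2⟩
    have hmonoJ : StrictMonoOn ψ (Ioo (F a) β) := fun t1 h1 t2 h2' h12 =>
      hψmono t1 t2 h1.1.le h12 h2'.2
    have himg : ψ '' (Ioo (F a) β) ∈ 𝓝 (ψ t) := by
      apply mem_of_superset
        (isOpen_Ioo.mem_nhds (show ψ t ∈ Ioo a (2*π) from ⟨by linarith, hψ2π⟩))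
      intro x hx
      exact ⟨F x, ⟨hFlt a x hAa.le hx.1 hx.2.le,
        hFltβ x (hAa.le.trans hx.1.le) hx.2⟩, hψF x ⟨hx.1.le, hx.2⟩⟩
    have hcψ : ContinuousAt ψ t := hmonoJ.continuousAt_of_image_mem_nhds hJ himg
    have hGpos : 0 < Gcot (ψ t) := Gcot_pos' (by linarith) hψ2π.le
    have hFd : HasDerivAt F (γ⁻¹ * g (ψ t)) (ψ t) := hFderiv (ψ t) (by linarith) hψ2π
    have hne : γ⁻¹ * g (ψ t) ≠ 0 := ne_of_gt (mul_pos hγ' (inv_pos.2 hGpos))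
    have hfg : ∀ᶠ y in 𝓝 t, F (ψ y) = y := by
      filter_upwards [hJ] with y hy
      exact (hψspec y hy.1.le hy.2).2
    have hd := HasDerivAt.of_local_left_inverse hcψ hFd hne hfg
    have heq : (γ⁻¹ * g (ψ t))⁻¹ = γ * Gcot (ψ t) := by
      show (γ⁻¹ * (Gcot (ψ t))⁻¹)⁻¹ = γ * Gcot (ψ t)
      rw [mul_inv, inv_inv, inv_inv]
    rwa [heq] at hd
  refine ⟨fun u hu => (continuousAt_Gcot (by linarith [hu.1]) hu.2).continuousWithinAt,
    fun u hu => by linarith [one_le_Gcot hu.1 hu.2.le],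
    ⟨1, fun u hu => by simpa using inv_anti₀ one_pos (one_le_Gcot hu.1 hu.2.le)⟩,
    ψ, ?_, ?_, ?_, ?_⟩
  · exact fun t1 h1 t2 h2 h12 => hψmono t1 t2 (by linarith [h1.1]) h12 h2.2
  · have h := hψF ρ ⟨haρ.le, hρ⟩
    rwa [hFρ] at h
  · intro t ht
    obtain ⟨h1, h2⟩ := hψρle t ht.1 ht.2
    exact ⟨⟨h1, h2⟩, (hmain t ht.1 ht.2).hasDerivWithinAt⟩
  · refine tendsto_order.2 ⟨?_, ?_⟩
    · intro b' hb'
      set c : ℝ := max ρ b' with hcdef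
      have hc2 : c < 2*π := max_lt hρ hb'
      have hcρ : ρ ≤ c := le_max_left _ _
      have ht0 : F c < β := hFltβ c (by linarith) hc2
      have h0c : 0 ≤ F c := by
        rw [← hFρ]; exact hFle ρ c (by rw [hA]; linarith) hcρ hc2.le
      filter_upwards [Ioo_mem_nhdsLT_of_mem (⟨ht0, le_refl β⟩ : β ∈ Ioc (F c) β)] with y hy
      obtain ⟨hm, hf⟩ := hψspec y (by linarith [hy.1]) hy.2
      have hlt : F c < F (ψ y) := by rw [hf]; exact hy.1
      have hcψ := (hFmono.lt_iff_lt ⟨by linarith, hc2⟩ hm).1 hlt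
      exact lt_of_le_of_lt (le_max_right ρ b') hcψ
    · intro b' hb'
      filter_upwards [Ioo_mem_nhdsLT_of_mem (⟨hβpos, le_refl β⟩ : β ∈ Ioc 0 β)] with y hy
      exact lt_trans ((hψspec y (by linarith [hy.1]) hy.2).1).2 hb'
end
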